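/- arXiv:2104.13487 — 14 statements merged into one kernel-verified Lean document; each statement's English description precedes it below -/
import Mathlib

section
/- Let (𝒞, J) be a small site in which no object is covered by the empty sieve (i.e., for every object C of 𝒞, the empty sieve on C is not J-covering). If F and G are J-sheaves of sets, then the coproduct presheaf F ⨿ G (computed in the category of presheaves 𝒞ᵒᵖ ⥤ Type) is J-separated. -/
open CategoryTheory Limits Opposite

universe u

section Aux

variable {C : Type u} [SmallCategory C] (F G : Cᵒᵖ ⥤ Type u)

/-- The pointwise identification of the coproduct presheaf with the sum type. -/
noncomputable def coprodPointwiseIso (Y : Cᵒᵖ) :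
    (F ⨿ G).obj Y ≅ (F.obj Y ⊕ G.obj Y) :=
  (PreservesColimitPair.iso ((evaluation Cᵒᵖ (Type u)).obj Y) F G).symm ≪≫
    Types.binaryCoproductIso (F.obj Y) (G.obj Y)

lemma coprodPointwiseIso_inl (Y : Cᵒᵖ) (a : F.obj Y) :
    (coprodPointwiseIso F G Y).hom ((coprod.inl : F ⟶ F ⨿ G).app Y a) = Sum.inl a := by
  have h1 : (coprod.inl : F.obj Y ⟶ F.obj Y ⨿ G.obj Y) ≫
      (PreservesColimitPair.iso ((evaluation Cᵒᵖ (Type u)).obj Y) F G).hom =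
      (coprod.inl : F ⟶ F ⨿ G).app Y := by
    rw [PreservesColimitPair.iso_hom]
    simp [coprodComparison]
    exact coprod.inl_desc _ _
  have h2 := ConcreteCategory.congr_hom (Types.binaryCoproductIso_inl_comp_hom (F.obj Y) (G.obj Y)) a
  simp only [coprodPointwiseIso, Iso.trans_hom, Iso.symm_hom, types_comp_apply]
  rw [← ConcreteCategory.congr_hom h1 a]
  have h3 := ConcreteCategory.congr_hom (PreservesColimitPair.iso ((evaluation Cᵒᵖ (Type u)).obj Y) F G).hom_inv_id
    ((coprod.inl : F.obj Y ⟶ F.obj Y ⨿ G.obj Y) a)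
  simp only [types_comp_apply, types_id_apply] at h3
  rw [types_comp_apply, h3]
  simpa using h2

lemma coprodPointwiseIso_inr (Y : Cᵒᵖ) (b : G.obj Y) :
    (coprodPointwiseIso F G Y).hom ((coprod.inr : G ⟶ F ⨿ G).app Y b) = Sum.inr b := by
  have h1 : (coprod.inr : G.obj Y ⟶ F.obj Y ⨿ G.obj Y) ≫
      (PreservesColimitPair.iso ((evaluation Cᵒᵖ (Type u)).obj Y) F G).hom =
      (coprod.inr : G ⟶ F ⨿ G).app Y := by
    rw [PreservesColimitPair.iso_hom]
    simp [coprodComparison]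
    exact coprod.inr_desc _ _
  have h2 := ConcreteCategory.congr_hom (Types.binaryCoproductIso_inr_comp_hom (F.obj Y) (G.obj Y)) b
  simp only [coprodPointwiseIso, Iso.trans_hom, Iso.symm_hom, types_comp_apply]
  rw [← ConcreteCategory.congr_hom h1 b]
  have h3 := ConcreteCategory.congr_hom (PreservesColimitPair.iso ((evaluation Cᵒᵖ (Type u)).obj Y) F G).hom_inv_id
    ((coprod.inr : G.obj Y ⟶ F.obj Y ⨿ G.obj Y) b)
  simp only [types_comp_apply, types_id_apply] at h3
  rw [types_comp_apply, h3]
  simpa using h2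

lemma coprod_jointly_surjective (Y : Cᵒᵖ) (t : (F ⨿ G).obj Y) :
    (∃ a, (coprod.inl : F ⟶ F ⨿ G).app Y a = t) ∨
      (∃ b, (coprod.inr : G ⟶ F ⨿ G).app Y b = t) := by
  have hinj : Function.Injective (coprodPointwiseIso F G Y).hom :=
    (coprodPointwiseIso F G Y).toEquiv.injective
  rcases h : (coprodPointwiseIso F G Y).hom t with a | b
  · exact Or.inl ⟨a, hinj (by rw [coprodPointwiseIso_inl, h])⟩
  · exact Or.inr ⟨b, hinj (by rw [coprodPointwiseIso_inr, h])⟩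

end Aux

/-- If `(C, J)` is a small site in which no object is covered by the empty
sieve, and `F`, `G` are `J`-sheaves of sets, then the coproduct presheaf `F ⨿ G`
(computed in the presheaf category) is `J`-separated. -/
theorem coprod_of_sheaves_isSeparated {C : Type u} [SmallCategory C]
    (J : GrothendieckTopology C)
    (hJ : ∀ X : C, (⊥ : Sieve X) ∉ J X)
    (F G : Cᵒᵖ ⥤ Type u)
    (hF : Presieve.IsSheaf J F) (hG : Presieve.IsSheaf J G) :
    Presieve.IsSeparated J (F ⨿ G) := by
  intro X S hS x t₁ t₂ h₁ h₂
  -- two sections agreeing on S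
  have key : ∀ {Y : C} (f : Y ⟶ X), S f → (F ⨿ G).map f.op t₁ = (F ⨿ G).map f.op t₂ := by
    intro Y f hf
    rw [h₁ f hf, h₂ f hf]
  -- S is nonempty
  have hne : ∃ (Y : C) (f : Y ⟶ X), S f := by
    by_contra h
    push_neg at h
    apply hJ X
    have : S = ⊥ := by
      apply Sieve.ext
      intro Y f
      exact iff_of_false (h Y f) (fun hb => hb.elim)
    rwa [this] at hS
  have hinj : ∀ Y, Function.Injective (coprodPointwiseIso F G Y).hom := fun Y =>
    (coprodPointwiseIso F G Y).toEquiv.injective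
  -- naturality helpers
  have natl : ∀ {Y : C} (f : Y ⟶ X) (a : F.obj (op X)),
      (F ⨿ G).map f.op ((coprod.inl : F ⟶ F ⨿ G).app (op X) a) =
        (coprod.inl : F ⟶ F ⨿ G).app (op Y) (F.map f.op a) := fun f a =>
    (ConcreteCategory.congr_hom ((coprod.inl : F ⟶ F ⨿ G).naturality f.op) a).symm
  have natr : ∀ {Y : C} (f : Y ⟶ X) (b : G.obj (op X)),
      (F ⨿ G).map f.op ((coprod.inr : G ⟶ F ⨿ G).app (op X) b) =
        (coprod.inr : G ⟶ F ⨿ G).app (op Y) (G.map f.op b) := fun f b =>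
    (ConcreteCategory.congr_hom ((coprod.inr : G ⟶ F ⨿ G).naturality f.op) b).symm
  rcases coprod_jointly_surjective F G (op X) t₁ with ⟨a₁, ha₁⟩ | ⟨b₁, hb₁⟩ <;>
    rcases coprod_jointly_surjective F G (op X) t₂ with ⟨a₂, ha₂⟩ | ⟨b₂, hb₂⟩
  · -- both inl
    subst ha₁ ha₂
    have : a₁ = a₂ := by
      apply (hF S hS).isSeparatedFor.ext
      intro Y f hf
      have h := key f hf
      rw [natl f a₁, natl f a₂] at h
      have h' := congrArg (coprodPointwiseIso F G (op Y)).hom h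
      rw [coprodPointwiseIso_inl, coprodPointwiseIso_inl] at h'
      exact Sum.inl.inj h'
    rw [this]
  · -- inl vs inr : contradiction
    exfalso
    obtain ⟨Y, f, hf⟩ := hne
    have := key f hf
    rw [← ha₁, ← hb₂, natl f a₁, natr f b₂] at this
    have := congrArg (coprodPointwiseIso F G (op Y)).hom this
    rw [coprodPointwiseIso_inl, coprodPointwiseIso_inr] at this
    exact Sum.inl_ne_inr this
  · exfalso
    obtain ⟨Y, f, hf⟩ := hne
    have := key f hf
    rw [← hb₁, ← ha₂, natr f b₁, natl f a₂] at this
    have := congrArg (coprodPointwiseIso F G (op Y)).hom this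
    rw [coprodPointwiseIso_inr, coprodPointwiseIso_inl] at this
    exact Sum.inr_ne_inl this
  · subst hb₁ hb₂
    have : b₁ = b₂ := by
      apply (hG S hS).isSeparatedFor.ext
      intro Y f hf
      have h := key f hf
      rw [natr f b₁, natr f b₂] at h
      have h' := congrArg (coprodPointwiseIso F G (op Y)).hom h
      rw [coprodPointwiseIso_inr, coprodPointwiseIso_inr] at h'
      exact Sum.inr.inj h'
    rw [this]
end

section
/- Let (𝒞, J) be a small subcanonical site, and let 𝒟 be the full subcategory of 𝒞 on those objects D for which the empty sieve on D is not J-covering. Then restriction of natural transformations induces a group isomorphism Aut(𝟭_𝒞) ≅ Aut(𝟭_𝒟) between the automorphism group of the identity functor of 𝒞 and that of 𝒟. -/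
open CategoryTheory Limits Opposite

universe u

section Aux

variable {C : Type u} [SmallCategory C] (J : GrothendieckTopology C)

lemma hom_eq_of_bot_mem
    (hsub : ∀ X : C, Presieve.IsSheaf J (yoneda.obj X))
    {X Z : C} (h : (⊥ : Sieve X) ∈ J X) (f g : X ⟶ Z) : f = g := by
  have hsheaf := hsub Z (⊥ : Sieve X) h
  set x : Presieve.FamilyOfElements (yoneda.obj Z) (⊥ : Sieve X).arrows :=
    fun Y f hf => False.elim (by simpa using hf : False)
  have hx : x.Compatible := by
    intro Y₁ Y₂ W g₁ g₂ f₁ f₂ h₁ h₂ _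
    exact False.elim (by simpa using h₁ : False)
  obtain ⟨t, -, ht⟩ := hsheaf x hx
  have hf : f = t := ht f (fun Y g hg => False.elim (by simpa using hg : False))
  have hg : g = t := ht g (fun Y g hg => False.elim (by simpa using hg : False))
  rw [hf, hg]

lemma bot_mem_of_hom {X Y : C} (f : X ⟶ Y) (h : (⊥ : Sieve Y) ∈ J Y) :
    (⊥ : Sieve X) ∈ J X := by
  have := J.pullback_stable f h
  simpa using this

end Aux

/-- For a small subcanonical site `(C, J)`, with `D` the full subcategory
of `C` on the objects not covered by the empty sieve, restriction of natural
transformations induces a group isomorphism `Aut (𝟭 C) ≃* Aut (𝟭 D)`. -/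
theorem aut_id_iso_aut_id_fullSubcategory {C : Type u} [SmallCategory C]
    (J : GrothendieckTopology C)
    (hsub : ∀ X : C, Presieve.IsSheaf J (yoneda.obj X)) :
    ∃ e : Aut (𝟭 C) ≃*
        Aut (𝟭 (ObjectProperty.FullSubcategory (fun D : C => (⊥ : Sieve D) ∉ J D))),
      ∀ (ψ : Aut (𝟭 C)) (D : ObjectProperty.FullSubcategory (fun D : C => (⊥ : Sieve D) ∉ J D)),
        ((e ψ).hom.app D).hom = ψ.hom.app D.obj := by
  classical
  set P : C → Prop := fun D => (⊥ : Sieve D) ∉ J D with hP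
  -- restriction of a natural transformation
  let restrT : (𝟭 C ⟶ 𝟭 C) → (𝟭 (ObjectProperty.FullSubcategory P) ⟶ 𝟭 (ObjectProperty.FullSubcategory P)) :=
    fun η =>
      { app := fun D => ObjectProperty.homMk (η.app D.obj)
        naturality := fun D₁ D₂ f => by ext; exact η.naturality f.hom }
  let restr : Aut (𝟭 C) → Aut (𝟭 (ObjectProperty.FullSubcategory P)) := fun ψ =>
    { hom := restrT ψ.hom
      inv := restrT ψ.inv
      hom_inv_id := by
        ext D
        exact congrArg (fun η => NatTrans.app η D.obj) ψ.hom_inv_id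
      inv_hom_id := by
        ext D
        exact congrArg (fun η => NatTrans.app η D.obj) ψ.inv_hom_id }
  -- extension of a natural transformation
  let extT : (𝟭 (ObjectProperty.FullSubcategory P) ⟶ 𝟭 (ObjectProperty.FullSubcategory P)) → (𝟭 C ⟶ 𝟭 C) :=
    fun τ =>
      { app := fun X => if h : P X then (τ.app ⟨X, h⟩).hom else 𝟙 X
        naturality := by
          intro X Y f
          by_cases hX : P X
          · have hY : P Y := by
              intro hY'
              exact hX (bot_mem_of_hom J f hY')
            simp only [Functor.id_map, dif_pos hX, dif_pos hY]
            exact congrArg (fun g => g.hom) (τ.naturality (X := ⟨X, hX⟩) (Y := ⟨Y, hY⟩) (ObjectProperty.homMk f))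
          · exact hom_eq_of_bot_mem J hsub (not_not.mp hX) _ _ }
  let extA : Aut (𝟭 (ObjectProperty.FullSubcategory P)) → Aut (𝟭 C) := fun τ =>
    { hom := extT τ.hom
      inv := extT τ.inv
      hom_inv_id := by
        ext X
        by_cases hX : P X
        · simp only [extT, NatTrans.comp_app, dif_pos hX]
          have := congrArg (fun (η : 𝟭 (ObjectProperty.FullSubcategory P) ⟶ 𝟭 (ObjectProperty.FullSubcategory P)) => (NatTrans.app η (⟨X, hX⟩ : ObjectProperty.FullSubcategory P)).hom)
            τ.hom_inv_id
          simpa only [NatTrans.comp_app, NatTrans.id_app, Functor.id_obj, ObjectProperty.FullSubcategory.comp_hom, ObjectProperty.FullSubcategory.id_hom] using this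
        · simp [extT, dif_neg hX]
      inv_hom_id := by
        ext X
        by_cases hX : P X
        · simp only [extT, NatTrans.comp_app, dif_pos hX]
          have := congrArg (fun (η : 𝟭 (ObjectProperty.FullSubcategory P) ⟶ 𝟭 (ObjectProperty.FullSubcategory P)) => (NatTrans.app η (⟨X, hX⟩ : ObjectProperty.FullSubcategory P)).hom)
            τ.inv_hom_id
          simpa only [NatTrans.comp_app, NatTrans.id_app, Functor.id_obj, ObjectProperty.FullSubcategory.comp_hom, ObjectProperty.FullSubcategory.id_hom] using this
        · simp [extT, dif_neg hX] }
  refine ⟨⟨⟨restr, extA, ?_, ?_⟩, ?_⟩, fun ψ D => rfl⟩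
  · intro ψ
    apply Iso.ext
    ext X
    by_cases hX : P X
    · simp [extA, extT, restr, restrT, dif_pos hX]
    · simp only [extA, extT, restr, restrT, dif_neg hX]
      exact (hom_eq_of_bot_mem J hsub (not_not.mp hX) _ _)
  · intro τ
    apply Iso.ext
    ext D
    simp [restr, restrT, extA, extT, dif_pos D.property]
  · intro ψ φ
    apply Iso.ext
    ext D
    rfl
end

section
/- Let ℰ be a locally small category and let ι : 𝒞 ⥤ ℰ be the inclusion of a small full subcategory that is dense in ℰ, meaning that for every object E of ℰ, the canonical cocone over the projection functor from the comma category of pairs (C, f : ι(C) → E) to ℰ (sending (C, f) to ι(C)), with cocone legs given by the morphisms f, is a colimit cocone. Then restriction along ι induces a group isomorphism Aut(𝟭_ℰ) ≅ Aut(𝟭_𝒞). -/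
open CategoryTheory Limits Opposite

universe u v

/-- The canonical cocone on the projection functor from the comma category of pairs
`(C, f : ι.obj C ⟶ X)` to `E`, with vertex `X` and cocone legs the morphisms `f`. -/
@[simps]
def canonicalDenseCocone {C : Type u} [SmallCategory C] {E : Type v} [Category.{u} E]
    (ι : C ⥤ E) (X : E) : Cocone (CostructuredArrow.proj ι X ⋙ ι) where
  pt := X
  ι :=
    { app := fun f => f.hom
      naturality := fun f g h => (CostructuredArrow.w h).trans (Category.comp_id _).symm }

section Aux

variable {C : Type u} [SmallCategory C] {E : Type v} [Category.{u} E]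
    (ι : C ⥤ E)

/-- The cocone with the same diagram as the canonical one, but legs shifted by a
natural transformation `τ : 𝟭 C ⟶ 𝟭 C`. -/
@[simps]
def shiftedDenseCocone (τ : 𝟭 C ⟶ 𝟭 C) (X : E) :
    Cocone (CostructuredArrow.proj ι X ⋙ ι) where
  pt := X
  ι :=
    { app := fun f => ι.map (τ.app f.left) ≫ f.hom
      naturality := fun f g h => by
        have h1 : h.left ≫ τ.app g.left = τ.app f.left ≫ h.left := by
          simpa using τ.naturality h.left
        have h2 : ι.map h.left ≫ g.hom = f.hom := CostructuredArrow.w h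
        dsimp
        rw [Category.comp_id, ← h2, ← Category.assoc]
        show (ι.map h.left ≫ ι.map (τ.app g.left)) ≫ g.hom =
          ι.map (τ.app f.left) ≫ ι.map h.left ≫ g.hom
        rw [← ι.map_comp, h1, ι.map_comp,
          Category.assoc] }

variable (hdense : ∀ X : E, Nonempty (IsColimit (canonicalDenseCocone ι X)))

/-- The component at `X` of the extension of `τ` to `E`. -/
noncomputable def liftApp (τ : 𝟭 C ⟶ 𝟭 C) (X : E) : X ⟶ X :=
  (hdense X).some.desc (shiftedDenseCocone ι τ X)

theorem liftApp_fac (τ : 𝟭 C ⟶ 𝟭 C) (X : E) (f : CostructuredArrow ι X) :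
    f.hom ≫ liftApp ι hdense τ X = ι.map (τ.app f.left) ≫ f.hom :=
  (hdense X).some.fac (shiftedDenseCocone ι τ X) f

/-- The extension of `τ` to a natural transformation on `𝟭 E`. -/
noncomputable def liftNat (τ : 𝟭 C ⟶ 𝟭 C) : 𝟭 E ⟶ 𝟭 E where
  app X := liftApp ι hdense τ X
  naturality X Y g := by
    refine (hdense X).some.hom_ext fun j => ?_
    have h1 := liftApp_fac ι hdense τ X j
    have h2 := liftApp_fac ι hdense τ Y (CostructuredArrow.mk (j.hom ≫ g))
    dsimp at h1 h2 ⊢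
    show j.hom ≫ g ≫ liftApp ι hdense τ Y = j.hom ≫ liftApp ι hdense τ X ≫ g
    rw [← Category.assoc, h2, ← Category.assoc, ← h1, Category.assoc]

end Aux

/-- If `ι : C ⥤ E` is the inclusion of a small full (and faithful) dense
subcategory of a locally small category `E`, then restriction along `ι` induces a
group isomorphism `Aut (𝟭 E) ≃* Aut (𝟭 C)`. -/
theorem aut_id_iso_of_dense {C : Type u} [SmallCategory C] {E : Type v} [Category.{u} E]
    (ι : C ⥤ E) [ι.Full] [ι.Faithful]
    (hdense : ∀ X : E, Nonempty (IsColimit (canonicalDenseCocone ι X))) :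
    ∃ e : Aut (𝟭 E) ≃* Aut (𝟭 C),
      ∀ (α : Aut (𝟭 E)) (X : C),
        ι.map ((e α).hom.app X) = α.hom.app (ι.obj X) := by
  -- restriction map
  let resNat : (𝟭 E ⟶ 𝟭 E) → (𝟭 C ⟶ 𝟭 C) := fun α =>
    { app := fun X => ι.preimage (α.app (ι.obj X))
      naturality := fun X Y g => by
        apply ι.map_injective
        simp only [Functor.id_map, Functor.map_comp, Functor.map_preimage]
        simpa using α.naturality (ι.map g) }
  have resNat_map : ∀ (α : 𝟭 E ⟶ 𝟭 E) (X : C),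
      ι.map ((resNat α).app X) = α.app (ι.obj X) := fun α X => ι.map_preimage _
  -- key: composing lift with anything is determined on legs
  have lift_comp : ∀ (τ τ' : 𝟭 C ⟶ 𝟭 C),
      liftNat ι hdense τ ≫ liftNat ι hdense τ' = liftNat ι hdense (τ ≫ τ') := by
    intro τ τ'
    ext X
    refine (hdense X).some.hom_ext fun j => ?_
    have h1 := liftApp_fac ι hdense τ X j
    have h2 := liftApp_fac ι hdense τ' X j
    have h3 := liftApp_fac ι hdense (τ ≫ τ') X j
    have h2' := liftApp_fac ι hdense τ' X (CostructuredArrow.mk (j.hom : ι.obj j.left ⟶ X))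
    dsimp [liftNat] at h1 h2 h3 ⊢
    show j.hom ≫ liftApp ι hdense τ X ≫ liftApp ι hdense τ' X = j.hom ≫ liftApp ι hdense (τ ≫ τ') X
    rw [← Category.assoc, h1, Category.assoc, h2, h3]
    simp
  have lift_id : liftNat ι hdense (𝟙 (𝟭 C)) = 𝟙 (𝟭 E) := by
    ext X
    refine (hdense X).some.hom_ext fun j => ?_
    have h1 := liftApp_fac ι hdense (𝟙 (𝟭 C)) X j
    dsimp [liftNat] at h1 ⊢
    show j.hom ≫ liftApp ι hdense (𝟙 (𝟭 C)) X = j.hom ≫ 𝟙 X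
    simpa using h1
  let res : Aut (𝟭 E) → Aut (𝟭 C) := fun α =>
    ⟨resNat α.hom, resNat α.inv, by
      ext X; apply ι.map_injective; simp [resNat_map]; exact Iso.hom_inv_id_app α _, by
      ext X; apply ι.map_injective; simp [resNat_map]; exact Iso.inv_hom_id_app α _⟩
  let lift : Aut (𝟭 C) → Aut (𝟭 E) := fun β =>
    ⟨liftNat ι hdense β.hom, liftNat ι hdense β.inv, by
      rw [lift_comp]; simp [lift_id, Iso.hom_inv_id (β : 𝟭 C ≅ 𝟭 C)], by
      rw [lift_comp]; simp [lift_id, Iso.inv_hom_id (β : 𝟭 C ≅ 𝟭 C)]⟩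
  have left_inv : ∀ α : Aut (𝟭 E), lift (res α) = α := by
    intro α
    apply Iso.ext
    ext X
    refine (hdense X).some.hom_ext fun j => ?_
    have h1 := liftApp_fac ι hdense (resNat α.hom) X j
    have h2 := α.hom.naturality j.hom
    dsimp [lift, liftNat] at h1 h2 ⊢
    show j.hom ≫ liftApp ι hdense (resNat α.hom) X = j.hom ≫ α.hom.app X
    rw [h1, resNat_map, ← h2]
  have right_inv : ∀ β : Aut (𝟭 C), res (lift β) = β := by
    intro β
    apply Iso.ext
    ext X
    apply ι.map_injective
    have h1 := liftApp_fac ι hdense β.hom (ι.obj X)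
      (CostructuredArrow.mk (𝟙 (ι.obj X)))
    dsimp [res, lift, liftNat] at h1 ⊢
    rw [ι.map_preimage]
    simpa using h1
  refine ⟨{ toFun := res
            invFun := lift
            left_inv := left_inv
            right_inv := right_inv
            map_mul' := fun α β => by
              apply Iso.ext
              ext X
              apply ι.map_injective
              simp [res, resNat_map, Aut.Aut_mul_def]
              show (β.hom ≫ α.hom).app (ι.obj X) = ι.map ((resNat β.hom ≫ resNat α.hom).app X)
              simp [resNat_map] }, ?_⟩
  intro α X
  exact ι.map_preimage _
end

section
/- Let (𝒞, J) be a small subcanonical site in which no object is covered by the empty sieve. Then for every J-sheaf F of sets, the covariant isotropy group of F in the category Sh(𝒞, J) of J-sheaves, i.e. the group Aut(Under.forget F) of natural automorphisms of the projection functor from the under category F/Sh(𝒞, J) to Sh(𝒞, J), is isomorphic as a group to Aut(𝟭_𝒞), the group of natural automorphisms of the identity functor of 𝒞. -/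
open CategoryTheory Limits Opposite

universe u

namespace Isotropy4

open GrothendieckTopology GrothendieckTopology.Plus

variable {C : Type u} [SmallCategory C]

structure Hyp (J : GrothendieckTopology C) : Prop where
  hsub : ∀ X : C, Presieve.IsSheaf J (yoneda.obj X)
  hJ : ∀ X : C, (⊥ : Sieve X) ∉ J X

variable {J : GrothendieckTopology C}

theorem Hyp.exists_arrow (h : Hyp J) {X : C} (S : J.Cover X) :
    ∃ (V : C) (f : V ⟶ X), S f := by
  by_contra hc
  push_neg at hc
  refine h.hJ X ?_
  have hb : (S : Sieve X) = ⊥ :=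
    le_antisymm (fun Y f hf => (hc Y f hf).elim) bot_le
  rw [← hb]
  exact S.condition

/-- The pointwise coproduct of `F` and the representable presheaf at `X`. -/
def SumP (F : Sheaf J (Type u)) (X : C) : Cᵒᵖ ⥤ Type u where
  obj V := F.val.obj V ⊕ (V.unop ⟶ X)
  map g := ↾(Sum.map (F.val.map g) fun h => g.unop ≫ h)
  map_id V := by
    ext z
    cases z with
    | inl b => simp
    | inr h => simp
  map_comp f g := by
    ext z
    cases z with
    | inl b => simp
    | inr h => simp

theorem sumP_sep (F : Sheaf J (Type u)) (X₀ : C) (h : Hyp J) :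
    ∀ (X : C) (S : J.Cover X) (x y : (SumP F X₀).obj (op X)),
      (∀ I : S.Arrow, (SumP F X₀).map I.f.op x = (SumP F X₀).map I.f.op y) → x = y := by
  intro X S x y hxy
  obtain ⟨V, f, hf⟩ := h.exists_arrow S
  have hI := hxy ⟨V, f, hf⟩
  cases x with
  | inl a =>
    cases y with
    | inl b =>
      refine congrArg Sum.inl ?_
      have hsep : Presieve.IsSeparatedFor F.val (S : Sieve X).arrows :=
        (((isSheaf_iff_isSheaf_of_type J F.val).1 F.cond) (S : Sieve X) S.condition).isSeparatedFor
      refine hsep.ext fun Y g hg => ?_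
      exact Sum.inl.inj (hxy ⟨Y, g, hg⟩)
    | inr hb => exact (Sum.inl_ne_inr hI).elim
  | inr ha =>
    cases y with
    | inl b => exact (Sum.inr_ne_inl hI).elim
    | inr hb =>
      refine congrArg Sum.inr ?_
      have hsep : Presieve.IsSeparatedFor (yoneda.obj X₀) (S : Sieve X).arrows :=
        (h.hsub X₀ (S : Sieve X) S.condition).isSeparatedFor
      refine hsep.ext fun Y g hg => ?_
      exact Sum.inr.inj (hxy ⟨Y, g, hg⟩)

/-- The sheaf `F ⊔ yX`, realized as the plus construction on `SumP`. -/
noncomputable def ASh (F : Sheaf J (Type u)) (h : Hyp J) (X : C) : Sheaf J (Type u) :=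
  ⟨J.plusObj (SumP F X), isSheaf_of_sep (SumP F X) (sumP_sep F X h)⟩

end Isotropy4

namespace Isotropy4

open GrothendieckTopology GrothendieckTopology.Plus

variable {C : Type u} [SmallCategory C] {J : GrothendieckTopology C}

/-- Coprojection of `F.val` into `SumP F X`. -/
def inlP (F : Sheaf J (Type u)) (X : C) : F.val ⟶ SumP F X where
  app _ := ↾Sum.inl
  naturality _ _ _ := rfl

/-- The sheaf map `F ⟶ ASh F h X`. -/
noncomputable def inlA (F : Sheaf J (Type u)) (h : Hyp J) (X : C) : F ⟶ ASh F h X :=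
  ⟨inlP F X ≫ J.toPlus (SumP F X)⟩

/-- The under object `F ⟶ F ⊔ yX`. -/
noncomputable def AU (F : Sheaf J (Type u)) (h : Hyp J) (X : C) : Under F :=
  Under.mk (inlA F h X)

theorem eta_inj (F : Sheaf J (Type u)) (h : Hyp J) (X : C) (V : C) :
    Function.Injective ((J.toPlus (SumP F X)).app (op V)) :=
  inj_of_sep (SumP F X) (sumP_sep F X h) V

/-- The generic element. -/
noncomputable def gam (F : Sheaf J (Type u)) (X : C) :
    (J.plusObj (SumP F X)).obj (op X) :=
  (J.toPlus (SumP F X)).app (op X) (Sum.inr (𝟙 X))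

/-- Lift a presheaf map out of `SumP` to a sheaf map out of `ASh`. -/
noncomputable def liftA (F : Sheaf J (Type u)) (h : Hyp J) (X : C)
    {G : Sheaf J (Type u)} (κ : SumP F X ⟶ G.val) : ASh F h X ⟶ G :=
  ⟨J.plusLift κ G.cond⟩

theorem liftA_eta_apply (F : Sheaf J (Type u)) (h : Hyp J) (X : C)
    {G : Sheaf J (Type u)} (κ : SumP F X ⟶ G.val) (V : Cᵒᵖ) (z : (SumP F X).obj V) :
    (liftA F h X κ).hom.app V ((J.toPlus (SumP F X)).app V z) = κ.app V z :=
  types_congr_hom (NatTrans.congr_app (J.toPlus_plusLift κ G.cond) V) z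

/-- Build an `Under`-morphism out of `AU F h X`. -/
noncomputable def underHom (F : Sheaf J (Type u)) (h : Hyp J) (X : C)
    {G : Under F} (κ : SumP F X ⟶ G.right.val)
    (hκ : ∀ (V : Cᵒᵖ) (b : F.val.obj V), κ.app V (Sum.inl b) = G.hom.hom.app V b) :
    AU F h X ⟶ G :=
  Under.homMk (liftA F h X κ) (by
    apply Sheaf.hom_ext
    ext V b
    exact (liftA_eta_apply F h X κ V (Sum.inl b)).trans (hκ V b))

theorem underHom_right (F : Sheaf J (Type u)) (h : Hyp J) (X : C)
    {G : Under F} (κ : SumP F X ⟶ G.right.val) (hκ) :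
    (underHom F h X κ hκ).right = liftA F h X κ := rfl

end Isotropy4

namespace Isotropy4

open GrothendieckTopology GrothendieckTopology.Plus

variable {C : Type u} [SmallCategory C] {J : GrothendieckTopology C}
variable {F : Sheaf J (Type u)}

theorem theta_nat (θ : Aut (Under.forget F)) {a b : Under F} (m : a ⟶ b)
    (V : Cᵒᵖ) (z : a.right.val.obj V) :
    (θ.hom.app b).hom.app V (m.right.hom.app V z) =
      m.right.hom.app V ((θ.hom.app a).hom.app V z) := by
  have hnat := θ.hom.naturality m
  have h2 := types_congr_hom (NatTrans.congr_app (congrArg InducedCategory.Hom.hom hnat) V) z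
  simp only [Under.forget_map, ObjectProperty.FullSubcategory.comp_hom, FunctorToTypes.comp] at h2
  exact h2

theorem theta_inj (θ : Aut (Under.forget F)) (a : Under F) (V : Cᵒᵖ) :
    Function.Injective ((θ.hom.app a).hom.app V) := by
  intro x y hxy
  have h1 : θ.hom.app a ≫ θ.inv.app a = 𝟙 a.right := by
    have := NatTrans.congr_app θ.hom_inv_id a
    simpa using this
  have h2 := fun w => types_congr_hom (NatTrans.congr_app (congrArg InducedCategory.Hom.hom h1) V) w
  simp only [ObjectProperty.FullSubcategory.comp_hom, FunctorToTypes.comp, ObjectProperty.FullSubcategory.id_hom,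
    NatTrans.id_app, types_id_apply] at h2
  calc x = (θ.inv.app a).hom.app V ((θ.hom.app a).hom.app V x) := (h2 x).symm
    _ = (θ.inv.app a).hom.app V ((θ.hom.app a).hom.app V y) := by rw [hxy]
    _ = y := h2 y

variable (F) in
/-- The copairing morphism used for the endomorphism `ε_c` of `F ⊔ yX`. -/
noncomputable def kapE (h : Hyp J) (X : C) (c : (J.plusObj (SumP F X)).obj (op X)) :
    SumP F X ⟶ (ASh F h X).val where
  app V := ↾(Sum.elim (fun b => (J.toPlus (SumP F X)).app V (Sum.inl b))
    (fun g => (J.plusObj (SumP F X)).map g.op c))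
  naturality V W g := by
    ext z
    cases z with
    | inl b => exact types_congr_hom ((J.toPlus (SumP F X)).naturality g) (Sum.inl b)
    | inr gg =>
      show (J.plusObj (SumP F X)).map (g.unop ≫ gg).op c
        = (J.plusObj (SumP F X)).map g ((J.plusObj (SumP F X)).map gg.op c)
      rw [← FunctorToTypes.map_comp_apply, op_comp, Quiver.Hom.op_unop]

variable (F) in
/-- The endomorphism `ε_c` of `F ⊔ yX` under `F`. -/
noncomputable def epsU (h : Hyp J) (X : C) (c : (J.plusObj (SumP F X)).obj (op X)) :
    AU F h X ⟶ AU F h X :=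
  underHom F h X (G := AU F h X) (kapE F h X c) (fun _ _ => rfl)

theorem epsU_gam (h : Hyp J) (X : C) (c : (J.plusObj (SumP F X)).obj (op X)) :
    (epsU F h X c).right.hom.app (op X) (gam F X) = c := by
  refine (liftA_eta_apply F h X (kapE F h X c) (op X) (Sum.inr (𝟙 X))).trans ?_
  show (J.plusObj (SumP F X)).map (𝟙 X).op c = c
  rw [op_id, FunctorToTypes.map_id_apply]

end Isotropy4

namespace Isotropy4

open GrothendieckTopology GrothendieckTopology.Plus

variable {C : Type u} [SmallCategory C] {J : GrothendieckTopology C}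
variable {F : Sheaf J (Type u)}

variable (F) in
/-- The presheaf map `F ⊔ yV ⟶ F ⊔ yX` induced by `g : V ⟶ X`. -/
def pmap {V X : C} (g : V ⟶ X) : SumP F V ⟶ SumP F X where
  app _ := ↾(Sum.map id (· ≫ g))
  naturality W W' gg := by
    ext z
    cases z with
    | inl b => rfl
    | inr t =>
      show Sum.inr ((gg.unop ≫ t) ≫ g) = Sum.inr (gg.unop ≫ t ≫ g)
      rw [Category.assoc]

variable (F) in
/-- The under-morphism `F ⊔ yV ⟶ F ⊔ yX` induced by `g : V ⟶ X`. -/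
noncomputable def mgU (h : Hyp J) {V X : C} (g : V ⟶ X) : AU F h V ⟶ AU F h X :=
  underHom F h V (G := AU F h X) (pmap F g ≫ J.toPlus (SumP F X)) (fun _ _ => rfl)

variable (F) in
/-- The copairing morphism used to reconstruct components of an isotropy element. -/
noncomputable def kapR (a : Under F) (V : C) (z : a.right.val.obj (op V)) :
    SumP F V ⟶ a.right.val where
  app W := ↾(Sum.elim (fun b => a.hom.hom.app W b) (fun gg => a.right.val.map gg.op z))
  naturality W W' g := by
    ext w
    cases w with
    | inl b => exact types_congr_hom (a.hom.hom.naturality g) b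
    | inr gg =>
      show a.right.val.map (g.unop ≫ gg).op z = a.right.val.map g (a.right.val.map gg.op z)
      rw [← FunctorToTypes.map_comp_apply, op_comp, Quiver.Hom.op_unop]

variable (F) in
/-- The under-morphism `F ⊔ yV ⟶ a` classifying the element `z`. -/
noncomputable def recU (h : Hyp J) (a : Under F) (V : C) (z : a.right.val.obj (op V)) :
    AU F h V ⟶ a :=
  underHom F h V (kapR F a V z) (fun _ _ => rfl)

/-- KEY: the image of the generic element under an isotropy element lies in
the `yX` summand, via a (unique) endomorphism of `X`. -/
theorem key (h : Hyp J) (θ : Aut (Under.forget F)) (X : C) :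
    ∃ e : X ⟶ X,
      (θ.hom.app (AU F h X)).hom.app (op X) (gam F X) =
        (J.toPlus (SumP F X)).app (op X) (Sum.inr e) := by
  set t := θ.hom.app (AU F h X) with ht
  set p := t.hom.app (op X) (gam F X) with hp
  obtain ⟨S, y, hy⟩ := exists_rep (P := SumP F X) p
  have hcomp : ∀ I : S.Arrow, ∃ gI : I.Y ⟶ X, y I = Sum.inr gI := by
    intro I
    cases hyI : y I with
    | inr gI => exact ⟨gI, rfl⟩
    | inl b =>
      exfalso
      have hres : (J.plusObj (SumP F X)).map I.f.op p
          = (J.toPlus (SumP F X)).app (op I.Y) (Sum.inl b) := by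
        rw [hy]
        have h0 := toPlus_apply S y I
        rw [hyI] at h0
        exact h0.symm
      have hconst : ∀ c : (J.plusObj (SumP F X)).obj (op X),
          t.hom.app (op I.Y) ((J.plusObj (SumP F X)).map I.f.op c) =
            (J.toPlus (SumP F X)).app (op I.Y) (Sum.inl b) := by
        intro c
        have h1 : t.hom.app (op X) c = (epsU F h X c).right.hom.app (op X) p := by
          have h2 := theta_nat θ (epsU F h X c) (op X) (gam F X)
          rw [epsU_gam] at h2
          exact h2
        have h3 : t.hom.app (op I.Y) ((J.plusObj (SumP F X)).map I.f.op c)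
            = (J.plusObj (SumP F X)).map I.f.op (t.hom.app (op X) c) :=
          types_congr_hom (t.hom.naturality I.f.op) c
        rw [h3, h1]
        have h4 : (J.plusObj (SumP F X)).map I.f.op ((epsU F h X c).right.hom.app (op X) p)
            = (epsU F h X c).right.hom.app (op I.Y) ((J.plusObj (SumP F X)).map I.f.op p) :=
          (types_congr_hom ((epsU F h X c).right.hom.naturality I.f.op) p).symm
        rw [h4, hres]
        exact liftA_eta_apply F h X (kapE F h X c) (op I.Y) (Sum.inl b)
      have h5 : (J.plusObj (SumP F X)).map I.f.op (gam F X)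
          = (J.plusObj (SumP F X)).map I.f.op p :=
        theta_inj θ (AU F h X) (op I.Y) ((hconst (gam F X)).trans (hconst p).symm)
      have h6 : (J.plusObj (SumP F X)).map I.f.op (gam F X)
          = (J.toPlus (SumP F X)).app (op I.Y) (Sum.inr I.f) := by
        rw [gam, ← NatTrans.naturality_apply (J.toPlus (SumP F X)) I.f.op (Sum.inr (𝟙 X) : (SumP F X).obj (op X))]
        show (J.toPlus (SumP F X)).app (op I.Y) (Sum.inr (I.f ≫ 𝟙 X)) = _
        rw [Category.comp_id]
      rw [h6, hres] at h5
      exact Sum.inr_ne_inl (eta_inj F h X I.Y h5)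
  choose g hg using hcomp
  -- the compatible family of maps to `X` amalgamates to `e : X ⟶ X`
  let fam : Presieve.FamilyOfElements (yoneda.obj X) ((S : Sieve X) : Presieve X) :=
    fun Y f hf => g ⟨Y, f, hf⟩
  have hfam : fam.Compatible := by
    intro Y₁ Y₂ Z g₁ g₂ f₁ f₂ h₁ h₂ w
    have := y.2 (GrothendieckTopology.Cover.Relation.mk (fst := ⟨Y₁, f₁, h₁⟩) (snd := ⟨Y₂, f₂, h₂⟩) ⟨Z, g₁, g₂, w⟩)
    rw [hg ⟨Y₁, f₁, h₁⟩, hg ⟨Y₂, f₂, h₂⟩] at this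
    exact Sum.inr.inj this
  obtain ⟨e, he, -⟩ := h.hsub X (S : Sieve X) S.condition fam hfam
  refine ⟨e, ?_⟩
  refine sep (SumP F X) S _ _ (fun I => ?_)
  have hL : (J.plusObj (SumP F X)).map I.f.op p
      = (J.toPlus (SumP F X)).app (op I.Y) (Sum.inr (g I)) := by
    rw [hy]
    have h0 := toPlus_apply S y I
    rw [hg I] at h0
    exact h0.symm
  have hR : (J.plusObj (SumP F X)).map I.f.op ((J.toPlus (SumP F X)).app (op X) (Sum.inr e))
      = (J.toPlus (SumP F X)).app (op I.Y) (Sum.inr (I.f ≫ e)) := by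
    rw [← NatTrans.naturality_apply (J.toPlus (SumP F X)) I.f.op (Sum.inr e : (SumP F X).obj (op X))]
    rfl
  show (J.plusObj (SumP F X)).map I.f.op p
      = (J.plusObj (SumP F X)).map I.f.op ((J.toPlus (SumP F X)).app (op X) (Sum.inr e))
  rw [hL, hR, show I.f ≫ e = g I from he I.f I.hf]

end Isotropy4

namespace Isotropy4

open GrothendieckTopology GrothendieckTopology.Plus

variable {C : Type u} [SmallCategory C] {J : GrothendieckTopology C}
variable {F : Sheaf J (Type u)}

theorem key_unique (h : Hyp J) (X V : C) {e e' : V ⟶ X}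
    (heq : (J.toPlus (SumP F X)).app (op V) (Sum.inr e)
      = (J.toPlus (SumP F X)).app (op V) (Sum.inr e')) : e = e' :=
  Sum.inr.inj (eta_inj F h X V heq)

variable (F) in
/-- The component at `X` of the natural transformation extracted from `θ`. -/
noncomputable def eapp (h : Hyp J) (θ : Aut (Under.forget F)) (X : C) : X ⟶ X :=
  (key h θ X).choose

theorem eapp_spec (h : Hyp J) (θ : Aut (Under.forget F)) (X : C) :
    (θ.hom.app (AU F h X)).hom.app (op X) (gam F X) =
      (J.toPlus (SumP F X)).app (op X) (Sum.inr (eapp F h θ X)) :=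
  (key h θ X).choose_spec

theorem inr_eq_map_gam {X V : C} (e : V ⟶ X) :
    (J.toPlus (SumP F X)).app (op V) (Sum.inr e)
      = (J.plusObj (SumP F X)).map e.op (gam F (J := J) X) := by
  rw [gam, ← NatTrans.naturality_apply (J.toPlus (SumP F X)) e.op (Sum.inr (𝟙 X) : (SumP F X).obj (op X))]
  show (J.toPlus (SumP F X)).app (op V) (Sum.inr e)
    = (J.toPlus (SumP F X)).app (op V) (Sum.inr (e ≫ 𝟙 X))
  rw [Category.comp_id]

theorem comp_gam (h : Hyp J) (θ₁ θ₂ : Aut (Under.forget F)) (X : C) :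
    (θ₂.hom.app (AU F h X)).hom.app (op X)
        ((θ₁.hom.app (AU F h X)).hom.app (op X) (gam F X)) =
      (J.toPlus (SumP F X)).app (op X)
        (Sum.inr (eapp F h θ₁ X ≫ eapp F h θ₂ X)) := by
  calc (id (α := (J.plusObj (SumP F X)).obj (op X)) ((θ₂.hom.app (AU F h X)).hom.app (op X)
        ((θ₁.hom.app (AU F h X)).hom.app (op X) (gam F X))))
      = id (α := (J.plusObj (SumP F X)).obj (op X)) ((θ₂.hom.app (AU F h X)).hom.app (op X)
          ((J.toPlus (SumP F X)).app (op X) (Sum.inr (eapp F h θ₁ X)))) := by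
        rw [eapp_spec h θ₁ X]
    _ = id (α := (J.plusObj (SumP F X)).obj (op X)) ((θ₂.hom.app (AU F h X)).hom.app (op X)
          ((J.plusObj (SumP F X)).map (eapp F h θ₁ X).op (gam F X))) := by
        rw [inr_eq_map_gam]
    _ = (J.plusObj (SumP F X)).map (eapp F h θ₁ X).op
          ((θ₂.hom.app (AU F h X)).hom.app (op X) (gam F X)) :=
        NatTrans.naturality_apply (θ₂.hom.app (AU F h X)).hom (eapp F h θ₁ X).op (gam F X)
    _ = (J.plusObj (SumP F X)).map (eapp F h θ₁ X).op
          ((J.toPlus (SumP F X)).app (op X) (Sum.inr (eapp F h θ₂ X))) := by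
        rw [eapp_spec h θ₂ X]
    _ = (J.toPlus (SumP F X)).app (op X)
          (Sum.inr (eapp F h θ₁ X ≫ eapp F h θ₂ X)) := by
        rw [← NatTrans.naturality_apply (J.toPlus (SumP F X)) (eapp F h θ₁ X).op
          (Sum.inr (eapp F h θ₂ X) : (SumP F X).obj (op X))]
        rfl

theorem eapp_nat (h : Hyp J) (θ : Aut (Under.forget F)) {V X : C} (g : V ⟶ X) :
    g ≫ eapp F h θ X = eapp F h θ V ≫ g := by
  apply key_unique (F := F) h X V
  have h1 : (J.toPlus (SumP F X)).app (op V) (Sum.inr g)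
      = (mgU F h g).right.hom.app (op V) (gam F V) := by
    refine ((liftA_eta_apply F h V (G := ASh F h X) (pmap F g ≫ J.toPlus (SumP F X)) (op V)
      (Sum.inr (𝟙 V))).trans ?_).symm
    show (J.toPlus (SumP F X)).app (op V) (Sum.inr (𝟙 V ≫ g)) = _
    rw [Category.id_comp]
  calc (J.toPlus (SumP F X)).app (op V) (Sum.inr (g ≫ eapp F h θ X))
      = (J.plusObj (SumP F X)).map g.op
          ((J.toPlus (SumP F X)).app (op X) (Sum.inr (eapp F h θ X))) := by
        rw [← NatTrans.naturality_apply (J.toPlus (SumP F X)) g.op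
          (Sum.inr (eapp F h θ X) : (SumP F X).obj (op X))]
        rfl
    _ = (J.plusObj (SumP F X)).map g.op
          ((θ.hom.app (AU F h X)).hom.app (op X) (gam F X)) := by rw [eapp_spec h θ X]
    _ = id (α := (J.plusObj (SumP F X)).obj (op V)) ((θ.hom.app (AU F h X)).hom.app (op V)
          ((J.plusObj (SumP F X)).map g.op (gam F X))) :=
        (NatTrans.naturality_apply (θ.hom.app (AU F h X)).hom g.op (gam F X)).symm
    _ = id (α := (J.plusObj (SumP F X)).obj (op V)) ((θ.hom.app (AU F h X)).hom.app (op V)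
          ((mgU F h g).right.hom.app (op V) (gam F V))) := by
        rw [← inr_eq_map_gam g, h1]
    _ = id (α := (J.plusObj (SumP F X)).obj (op V)) ((mgU F h g).right.hom.app (op V)
          ((θ.hom.app (AU F h V)).hom.app (op V) (gam F V))) :=
        theta_nat θ (mgU F h g) (op V) (gam F V)
    _ = (J.toPlus (SumP F X)).app (op V) (Sum.inr (eapp F h θ V ≫ g)) := by
        rw [eapp_spec h θ V]
        exact liftA_eta_apply F h V (G := ASh F h X) (pmap F g ≫ J.toPlus (SumP F X)) (op V)
          (Sum.inr (eapp F h θ V))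

theorem component_eq (h : Hyp J) (θ : Aut (Under.forget F)) (a : Under F) (V : C)
    (z : a.right.val.obj (op V)) :
    (θ.hom.app a).hom.app (op V) z = a.right.val.map (eapp F h θ V).op z := by
  have h2 := theta_nat θ (recU F h a V z) (op V) (gam F V)
  have h3 : (recU F h a V z).right.hom.app (op V) (gam F V) = z := by
    refine (liftA_eta_apply F h V (kapR F a V z) (op V) (Sum.inr (𝟙 V))).trans ?_
    show a.right.val.map (𝟙 V).op z = z
    rw [op_id, FunctorToTypes.map_id_apply]
  rw [h3, eapp_spec h θ V] at h2
  exact h2.trans (liftA_eta_apply F h V (kapR F a V z) (op V) (Sum.inr (eapp F h θ V)))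

end Isotropy4

namespace Isotropy4

open GrothendieckTopology GrothendieckTopology.Plus

variable {C : Type u} [SmallCategory C] {J : GrothendieckTopology C}
variable {F : Sheaf J (Type u)}

variable (F) in
/-- The natural endomorphism of `𝟭 C` extracted from an isotropy element. -/
noncomputable def psiNat (h : Hyp J) (θ : Aut (Under.forget F)) : 𝟭 C ⟶ 𝟭 C where
  app X := eapp F h θ X
  naturality V X g := by simpa using eapp_nat h θ g

theorem hom_app_comp_eq_gam (h : Hyp J) (θ : Aut (Under.forget F)) (X : C) :
    ((θ⁻¹).hom.app (AU F h X)).hom.app (op X)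
      ((θ.hom.app (AU F h X)).hom.app (op X) (gam F X)) = gam F X := by
  have h3 : θ.hom.app (AU F h X) ≫ (θ⁻¹).hom.app (AU F h X) = 𝟙 _ :=
    Iso.hom_inv_id_app θ (AU F h X)
  have h4 := types_congr_hom (NatTrans.congr_app (congrArg InducedCategory.Hom.hom h3) (op X)) (gam F X)
  exact h4

theorem eapp_comp_inv (h : Hyp J) (θ : Aut (Under.forget F)) (X : C) :
    eapp F h θ X ≫ eapp F h θ⁻¹ X = 𝟙 X := by
  have h1 := comp_gam h θ θ⁻¹ X
  rw [hom_app_comp_eq_gam h θ X] at h1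
  exact (key_unique (F := F) h X X h1).symm

variable (F) in
/-- The element of `Aut (𝟭 C)` extracted from an isotropy element. -/
noncomputable def psi (h : Hyp J) (θ : Aut (Under.forget F)) : Aut (𝟭 C) where
  hom := psiNat F h θ
  inv := psiNat F h θ⁻¹
  hom_inv_id := by
    ext X
    exact eapp_comp_inv h θ X
  inv_hom_id := by
    ext X
    have := eapp_comp_inv h θ⁻¹ X
    rw [inv_inv] at this
    exact this

theorem psi_mul (h : Hyp J) (θ₁ θ₂ : Aut (Under.forget F)) :
    psi F h (θ₁ * θ₂) = psi F h θ₁ * psi F h θ₂ := by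
  have key2 : ∀ X : C, eapp F h (θ₁ * θ₂) X = eapp F h θ₂ X ≫ eapp F h θ₁ X := by
    intro X
    refine key_unique (F := F) h X X ?_
    rw [← eapp_spec h (θ₁ * θ₂) X, ← comp_gam h θ₂ θ₁ X]
    rfl
  ext X
  exact key2 X

variable (F) in
/-- The natural endomorphism of `Under.forget F` induced by `β : 𝟭 C ⟶ 𝟭 C`. -/
def actT (β : 𝟭 C ⟶ 𝟭 C) : Under.forget F ⟶ Under.forget F where
  app a := ⟨{
    app := fun V => ↾fun z => a.right.val.map (β.app V.unop).op z
    naturality := by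
      intro V W g
      ext z
      show a.right.val.map (β.app W.unop).op (a.right.val.map g z)
        = a.right.val.map g (a.right.val.map (β.app V.unop).op z)
      erw [← FunctorToTypes.map_comp_apply, ← FunctorToTypes.map_comp_apply]
      have h0 : g.unop ≫ β.app V.unop = β.app W.unop ≫ g.unop := by
        simpa using β.naturality g.unop
      have h1 := congrArg Quiver.Hom.op h0
      rw [op_comp, op_comp, Quiver.Hom.op_unop] at h1
      rw [← h1] }⟩
  naturality a b m := by
    apply Sheaf.hom_ext
    ext V z
    exact (NatTrans.naturality_apply m.right.hom
      (β.app V.unop).op z).symm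

variable (F) in
/-- The isotropy element induced by `α : Aut (𝟭 C)`. -/
def phi (α : Aut (𝟭 C)) : Aut (Under.forget F) where
  hom := actT F α.hom
  inv := actT F α.inv
  hom_inv_id := by
    ext a : 2
    apply Sheaf.hom_ext
    ext V z
    show a.right.val.map (α.inv.app V.unop).op (a.right.val.map (α.hom.app V.unop).op z) = z
    erw [← FunctorToTypes.map_comp_apply, ← op_comp, Iso.inv_hom_id_app]
    show a.right.val.map (𝟙 (op V.unop)) z = z
    erw [FunctorToTypes.map_id_apply]
  inv_hom_id := by
    ext a : 2
    apply Sheaf.hom_ext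
    ext V z
    show a.right.val.map (α.hom.app V.unop).op (a.right.val.map (α.inv.app V.unop).op z) = z
    erw [← FunctorToTypes.map_comp_apply, ← op_comp, Iso.hom_inv_id_app]
    show a.right.val.map (𝟙 (op V.unop)) z = z
    erw [FunctorToTypes.map_id_apply]

theorem psi_phi (h : Hyp J) (α : Aut (𝟭 C)) : psi F h (phi F α) = α := by
  have key2 : ∀ X : C, eapp F h (phi F α) X = α.hom.app X := by
    intro X
    refine (key_unique (F := F) h X X ?_).symm
    rw [← eapp_spec h (phi F α) X]
    calc (J.toPlus (SumP F X)).app (op X) (Sum.inr (α.hom.app X))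
        = (J.plusObj (SumP F X)).map (α.hom.app X).op (gam F X) := inr_eq_map_gam _
      _ = id (α := (J.plusObj (SumP F X)).obj (op X)) (((phi F α).hom.app (AU F h X)).hom.app (op X) (gam F X)) := rfl
  ext X
  exact key2 X

theorem psi_inj (h : Hyp J) : Function.Injective (psi F h) := by
  intro θ θ' heq
  have he : ∀ X : C, eapp F h θ X = eapp F h θ' X := by
    intro X
    exact congrArg (fun (ρ : Aut (𝟭 C)) => ρ.hom.app X) heq
  apply Iso.ext
  apply NatTrans.ext
  funext a
  apply Sheaf.hom_ext
  apply NatTrans.ext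
  funext V
  ext z
  calc (θ.hom.app a).hom.app V z
      = id (α := ((Under.forget F).obj a).obj.obj V) (a.right.val.map (eapp F h θ V.unop).op z) := component_eq h θ a V.unop z
    _ = id (α := ((Under.forget F).obj a).obj.obj V) (a.right.val.map (eapp F h θ' V.unop).op z) := by rw [he V.unop]
    _ = (θ'.hom.app a).hom.app V z := (component_eq h θ' a V.unop z).symm

end Isotropy4

/-- For a small subcanonical site `(C, J)` in which no object is covered
by the empty sieve, the covariant isotropy group of any sheaf `F`, i.e. the group of
natural automorphisms of the projection functor `F/Sh(C,J) ⥤ Sh(C,J)`, is isomorphic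
to the group of natural automorphisms of the identity functor of `C`. -/
theorem isotropy_of_sheaf_iso_aut_id {C : Type u} [SmallCategory C]
    (J : GrothendieckTopology C)
    (hsub : ∀ X : C, Presieve.IsSheaf J (yoneda.obj X))
    (hJ : ∀ X : C, (⊥ : Sieve X) ∉ J X)
    (F : Sheaf J (Type u)) :
    Nonempty (Aut (Under.forget F) ≃* Aut (𝟭 C)) := by
  refine ⟨MulEquiv.mk' (Equiv.ofBijective (Isotropy4.psi F ⟨hsub, hJ⟩)
    ⟨Isotropy4.psi_inj ⟨hsub, hJ⟩, fun α => ⟨Isotropy4.phi F α, Isotropy4.psi_phi ⟨hsub, hJ⟩ α⟩⟩)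
    (Isotropy4.psi_mul ⟨hsub, hJ⟩)⟩
end

section
/- Let (𝒞, J) be a small subcanonical site (objects are allowed to be covered by the empty sieve). Then for every J-sheaf F of sets, the covariant isotropy group of F in the category Sh(𝒞, J) of J-sheaves, i.e. the group Aut(Under.forget F) of natural automorphisms of the projection functor from the under category F/Sh(𝒞, J) to Sh(𝒞, J), is isomorphic as a group to Aut(𝟭_𝒞), the group of natural automorphisms of the identity functor of 𝒞. -/
open CategoryTheory Limits Opposite

universe u

namespace IsotropySheafAux

section Extensive
variable {E : Type*} [Category E] [FinitaryExtensive E]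

lemma exists_inr_comp_eq {A B : E} (α : A ⨿ B ⟶ A ⨿ B) [IsIso α] (t : A ⟶ A) [IsIso t]
    (ht : coprod.inl ≫ α = t ≫ coprod.inl) :
    ∃ β : B ⟶ B, coprod.inr ≫ α = β ≫ coprod.inr := by
  set φ : B ⟶ A ⨿ B := coprod.inr ≫ α with hφ
  have disj : IsPullback (initial.to A) (initial.to B)
      (coprod.inl : A ⟶ A ⨿ B) coprod.inr := by
    exact FinitaryExtensive.isPullback_initial_to_binaryCofan (colimit.isColimit (pair A B))
  have key : (pullback.fst coprod.inl φ ≫ inv t) ≫ coprod.inl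
      = pullback.snd coprod.inl φ ≫ coprod.inr := by
    have h1 : ((pullback.fst coprod.inl φ ≫ inv t) ≫ coprod.inl) ≫ α
        = (pullback.snd coprod.inl φ ≫ coprod.inr) ≫ α := by
      calc ((pullback.fst coprod.inl φ ≫ inv t) ≫ coprod.inl) ≫ α
          = pullback.fst coprod.inl φ ≫ inv t ≫ (coprod.inl ≫ α) := by
            simp only [Category.assoc]
        _ = pullback.fst coprod.inl φ ≫ inv t ≫ t ≫ coprod.inl := by rw [ht]
        _ = pullback.fst coprod.inl φ ≫ coprod.inl := by simp
        _ = pullback.snd coprod.inl φ ≫ φ := pullback.condition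
        _ = (pullback.snd coprod.inl φ ≫ coprod.inr) ≫ α := by
            simp only [hφ, Category.assoc]
    exact (cancel_mono α).1 h1
  have hl : pullback coprod.inl φ ⟶ (⊥_ E) := disj.lift _ _ key
  have hP : IsInitial (pullback coprod.inl φ) := by
    have : IsIso hl := initialIsInitial.isIso_to hl
    exact IsInitial.ofIso initialIsInitial (asIso hl).symm
  have hc' : Nonempty (IsColimit (BinaryCofan.mk (pullback.snd coprod.inl φ)
      (pullback.snd coprod.inr φ))) :=
    ((BinaryCofan.isVanKampen_iff (BinaryCofan.mk (coprod.inl : A ⟶ A ⨿ B) coprod.inr)).mp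
      (FinitaryExtensive.van_kampen' _ (coprodIsCoprod A B))
      (BinaryCofan.mk (pullback.snd coprod.inl φ) (pullback.snd coprod.inr φ))
      (pullback.fst coprod.inl φ) (pullback.fst coprod.inr φ) φ
      (pullback.condition (f := (coprod.inl : A ⟶ A ⨿ B)) (g := φ))
      (pullback.condition (f := (coprod.inr : B ⟶ A ⨿ B)) (g := φ))).mpr
      ⟨(IsPullback.of_hasPullback coprod.inl φ).flip,
       (IsPullback.of_hasPullback coprod.inr φ).flip⟩
  have hiso : IsIso (pullback.snd coprod.inr φ) := by
    have := (BinaryCofan.isColimit_iff_isIso_inr hP _).mp hc'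
    exact this
  refine ⟨inv (pullback.snd coprod.inr φ) ≫ pullback.fst coprod.inr φ, ?_⟩
  rw [Category.assoc, pullback.condition, IsIso.inv_hom_id_assoc]

end Extensive

section Site

variable {C : Type u} [SmallCategory C] {J : GrothendieckTopology C}

instance shFinExt : FinitaryExtensive (Sheaf J (Type u)) := inferInstance

instance shBinCop : HasBinaryCoproducts (Sheaf J (Type u)) := by
  haveI : HasFiniteCoproducts (Sheaf J (Type u)) := FinitaryExtensive.hasFiniteCoproducts
  exact hasColimitsOfShape_discrete (Sheaf J (Type u)) WalkingPair

/-- The canonical action of an endomorphism of the identity functor on a presheaf. -/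
@[simps]
def pAct (σ : 𝟭 C ⟶ 𝟭 C) (P : Cᵒᵖ ⥤ Type u) : P ⟶ P where
  app X := P.map (σ.app X.unop).op
  naturality X Y f := by
    dsimp
    rw [← P.map_comp, ← P.map_comp]
    congr 1
    apply Quiver.Hom.unop_inj
    simpa using (σ.naturality f.unop).symm

lemma pAct_natural (σ : 𝟭 C ⟶ 𝟭 C) {P Q : Cᵒᵖ ⥤ Type u} (f : P ⟶ Q) :
    f ≫ pAct σ Q = pAct σ P ≫ f := by
  ext X x
  exact (FunctorToTypes.naturality f (σ.app X.unop).op x).symm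

lemma pAct_yoneda (σ : 𝟭 C ⟶ 𝟭 C) (X : C) :
    pAct σ (yoneda.obj X) = yoneda.map (σ.app X) := by
  ext Y (g : Y.unop ⟶ X)
  have := σ.naturality g
  simp only [Functor.id_obj, Functor.id_map] at this
  simpa using this.symm

lemma pAct_comp_pAct (σ τ : 𝟭 C ⟶ 𝟭 C) (P : Cᵒᵖ ⥤ Type u) :
    pAct σ P ≫ pAct τ P = pAct (τ ≫ σ) P := by
  ext X x
  dsimp
  exact (FunctorToTypes.map_comp_apply P (σ.app X.unop).op (τ.app X.unop).op x).symm


lemma pAct_id (P : Cᵒᵖ ⥤ Type u) : pAct (𝟙 (𝟭 C)) P = 𝟙 P := by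
  ext X x
  simp

variable (J) in
/-- Sheaf-level action. -/
def shActHom (σ : 𝟭 C ⟶ 𝟭 C) (G : Sheaf J (Type u)) : G ⟶ G := ⟨pAct σ G.val⟩

lemma shActHom_natural (σ : 𝟭 C ⟶ 𝟭 C) {G H : Sheaf J (Type u)} (f : G ⟶ H) :
    f ≫ shActHom J σ H = shActHom J σ G ≫ f :=
  Sheaf.hom_ext (pAct_natural σ f.hom)

variable (J) in
@[simps]
def shAct (σ : 𝟭 C ≅ 𝟭 C) (G : Sheaf J (Type u)) : G ≅ G where
  hom := shActHom J σ.hom G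
  inv := shActHom J σ.inv G
  hom_inv_id := Sheaf.hom_ext (by
    dsimp [shActHom]
    rw [pAct_comp_pAct, σ.inv_hom_id, pAct_id])
  inv_hom_id := Sheaf.hom_ext (by
    dsimp [shActHom]
    rw [pAct_comp_pAct, σ.hom_inv_id, pAct_id])

variable (F : Sheaf J (Type u))

/-- Φ : the canonical map from `Aut (𝟭 C)` to automorphisms of the forgetful functor. -/
def Phi (σ : 𝟭 C ≅ 𝟭 C) : Under.forget F ≅ Under.forget F :=
  NatIso.ofComponents (fun u => shAct J σ u.right)
    (fun {u v} m => by
      dsimp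
      exact shActHom_natural σ.hom m.right)


section Psi

variable (hsub : ∀ X : C, Presieve.IsSheaf J (yoneda.obj X))

/-- Representable sheaves, for a subcanonical topology. -/
def ySh (X : C) : Sheaf J (Type u) :=
  ⟨yoneda.obj X, (isSheaf_iff_isSheaf_of_type J _).mpr (hsub X)⟩

variable {F : Sheaf J (Type u)}

/-- Component of `θ` at the initial object of `Under F`. -/
noncomputable abbrev tF (θ : Under.forget F ≅ Under.forget F) : F ⟶ F :=
  θ.hom.app (Under.mk (𝟙 F))

/-- Component of `θ` at `F ⟶ F ⨿ G`. -/
noncomputable abbrev alphaA (θ : Under.forget F ≅ Under.forget F) (G : Sheaf J (Type u)) :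
    (F ⨿ G : Sheaf J (Type u)) ⟶ F ⨿ G :=
  θ.hom.app (Under.mk (coprod.inl : F ⟶ F ⨿ G))

lemma inl_alpha (θ : Under.forget F ≅ Under.forget F) (G : Sheaf J (Type u)) :
    coprod.inl ≫ alphaA θ G = tF θ ≫ coprod.inl := by
  simpa using θ.hom.naturality
    (Under.homMk (U := Under.mk (𝟙 F)) (V := Under.mk (coprod.inl : F ⟶ F ⨿ G))
      coprod.inl (by simp))

instance alphaA_isIso (θ : Under.forget F ≅ Under.forget F) (G : Sheaf J (Type u)) :
    IsIso (alphaA θ G) :=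
  NatIso.hom_app_isIso θ _

instance tF_isIso (θ : Under.forget F ≅ Under.forget F) : IsIso (tF θ) :=
  NatIso.hom_app_isIso θ _

/-- The restriction of `alphaA θ G` to the summand `G`. -/
noncomputable def beta (θ : Under.forget F ≅ Under.forget F) (G : Sheaf J (Type u)) : G ⟶ G :=
  (exists_inr_comp_eq (alphaA θ G) (tF θ) (inl_alpha θ G)).choose

lemma beta_spec (θ : Under.forget F ≅ Under.forget F) (G : Sheaf J (Type u)) :
    coprod.inr ≫ alphaA θ G = beta θ G ≫ coprod.inr :=
  (exists_inr_comp_eq (alphaA θ G) (tF θ) (inl_alpha θ G)).choose_spec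

lemma beta_unique (θ : Under.forget F ≅ Under.forget F) (G : Sheaf J (Type u)) {b : G ⟶ G}
    (hb : coprod.inr ≫ alphaA θ G = b ≫ coprod.inr) : beta θ G = b := by
  have h := (beta_spec θ G).symm.trans hb
  exact (cancel_mono (coprod.inr : G ⟶ F ⨿ G)).1 h

lemma beta_natural (θ : Under.forget F ≅ Under.forget F) {G H : Sheaf J (Type u)} (f : G ⟶ H) :
    f ≫ beta θ H = beta θ G ≫ f := by
  have hnat : coprod.map (𝟙 F) f ≫ alphaA θ H = alphaA θ G ≫ coprod.map (𝟙 F) f := by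
    exact θ.hom.naturality
      (Under.homMk (U := Under.mk (coprod.inl : F ⟶ F ⨿ G))
        (V := Under.mk (coprod.inl : F ⟶ F ⨿ H)) (coprod.map (𝟙 F) f) (by simp))
  apply (cancel_mono (coprod.inr : H ⟶ F ⨿ H)).1
  calc (f ≫ beta θ H) ≫ coprod.inr
      = f ≫ (beta θ H ≫ coprod.inr) := by rw [Category.assoc]
    _ = f ≫ (coprod.inr ≫ alphaA θ H) := by rw [beta_spec]
    _ = (f ≫ coprod.inr) ≫ alphaA θ H := by rw [Category.assoc]
    _ = (coprod.inr ≫ coprod.map (𝟙 F) f) ≫ alphaA θ H := by rw [coprod.inr_map]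
    _ = coprod.inr ≫ (coprod.map (𝟙 F) f ≫ alphaA θ H) := by rw [Category.assoc]
    _ = coprod.inr ≫ (alphaA θ G ≫ coprod.map (𝟙 F) f) := by rw [hnat]
    _ = (coprod.inr ≫ alphaA θ G) ≫ coprod.map (𝟙 F) f := by rw [Category.assoc]
    _ = (beta θ G ≫ coprod.inr) ≫ coprod.map (𝟙 F) f := by rw [beta_spec]
    _ = beta θ G ≫ (coprod.inr ≫ coprod.map (𝟙 F) f) := by rw [Category.assoc]
    _ = beta θ G ≫ (f ≫ coprod.inr) := by rw [coprod.inr_map]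
    _ = (beta θ G ≫ f) ≫ coprod.inr := by rw [Category.assoc]

lemma app_eq_beta (θ : Under.forget F ≅ Under.forget F) (u : Under F) :
    θ.hom.app u = beta θ u.right := by
  have hnat : (coprod.desc u.hom (𝟙 u.right) ≫ θ.hom.app u : F ⨿ u.right ⟶ u.right)
      = alphaA θ u.right ≫ coprod.desc u.hom (𝟙 u.right) := by
    simpa using θ.hom.naturality
      (Under.homMk (U := Under.mk (coprod.inl : F ⟶ F ⨿ u.right)) (V := u)
        (coprod.desc u.hom (𝟙 u.right)) (coprod.inl_desc _ _))
  calc (show u.right ⟶ u.right from θ.hom.app u)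
      = ((coprod.inr ≫ coprod.desc u.hom (𝟙 u.right)) ≫ θ.hom.app u : u.right ⟶ u.right) :=
        (Category.id_comp (θ.hom.app u)).symm.trans
          (congrArg (fun f => f ≫ θ.hom.app u) (coprod.inr_desc u.hom (𝟙 u.right)).symm)
    _ = (coprod.inr ≫ (coprod.desc u.hom (𝟙 u.right) ≫ θ.hom.app u) : u.right ⟶ u.right) :=
        Category.assoc _ _ _
    _ = coprod.inr ≫ (alphaA θ u.right ≫ coprod.desc u.hom (𝟙 u.right)) := by rw [hnat]
    _ = (coprod.inr ≫ alphaA θ u.right) ≫ coprod.desc u.hom (𝟙 u.right) := by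
        rw [Category.assoc]
    _ = (beta θ u.right ≫ coprod.inr) ≫ coprod.desc u.hom (𝟙 u.right) := by rw [beta_spec]
    _ = beta θ u.right ≫ (coprod.inr ≫ coprod.desc u.hom (𝟙 u.right)) := by rw [Category.assoc]
    _ = beta θ u.right := by rw [coprod.inr_desc, Category.comp_id]

lemma alphaA_trans (θ θ' : Under.forget F ≅ Under.forget F) (G : Sheaf J (Type u)) :
    alphaA (θ ≪≫ θ') G = alphaA θ G ≫ alphaA θ' G := rfl

lemma beta_trans (θ θ' : Under.forget F ≅ Under.forget F) (G : Sheaf J (Type u)) :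
    beta (θ ≪≫ θ') G = beta θ G ≫ beta θ' G := by
  apply beta_unique
  rw [alphaA_trans]
  calc coprod.inr ≫ (alphaA θ G ≫ alphaA θ' G)
      = (coprod.inr ≫ alphaA θ G) ≫ alphaA θ' G := by rw [Category.assoc]
    _ = (beta θ G ≫ coprod.inr) ≫ alphaA θ' G := by rw [beta_spec]
    _ = beta θ G ≫ (coprod.inr ≫ alphaA θ' G) := by rw [Category.assoc]
    _ = beta θ G ≫ (beta θ' G ≫ coprod.inr) := by rw [beta_spec]
    _ = (beta θ G ≫ beta θ' G) ≫ coprod.inr := by rw [Category.assoc]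

lemma beta_refl (G : Sheaf J (Type u)) :
    beta (Iso.refl (Under.forget F)) G = 𝟙 G := by
  apply beta_unique
  have h : alphaA (Iso.refl (Under.forget F)) G = 𝟙 (F ⨿ G) := rfl
  rw [h, Category.comp_id, Category.id_comp]

/-- The component of the induced automorphism of `𝟭 C`. -/
noncomputable def sigmaApp (θ : Under.forget F ≅ Under.forget F) (X : C) : X ⟶ X :=
  yoneda.preimage (beta θ (ySh hsub X)).hom

lemma y_sigmaApp (θ : Under.forget F ≅ Under.forget F) (X : C) :
    yoneda.map (sigmaApp hsub θ X) = (beta θ (ySh hsub X)).hom :=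
  yoneda.map_preimage _

/-- The induced endomorphism of `𝟭 C`. -/
noncomputable def sigma (θ : Under.forget F ≅ Under.forget F) : 𝟭 C ⟶ 𝟭 C where
  app := sigmaApp hsub θ
  naturality X Y h := by
    apply yoneda.map_injective
    simp only [Functor.id_obj, Functor.id_map, Functor.map_comp, y_sigmaApp]
    have e := congrArg InducedCategory.Hom.hom
      (beta_natural θ (G := ySh hsub X) (H := ySh hsub Y) ⟨yoneda.map h⟩)
    simp at e
    exact e

lemma sigma_trans (θ θ' : Under.forget F ≅ Under.forget F) :
    sigma hsub (θ ≪≫ θ') = sigma hsub θ ≫ sigma hsub θ' := by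
  ext X
  apply yoneda.map_injective
  show yoneda.map (sigmaApp hsub (θ ≪≫ θ') X)
      = yoneda.map (sigmaApp hsub θ X ≫ sigmaApp hsub θ' X)
  rw [Functor.map_comp, y_sigmaApp, y_sigmaApp, y_sigmaApp, beta_trans]
  rfl

lemma sigma_refl : sigma hsub (Iso.refl (Under.forget F)) = 𝟙 (𝟭 C) := by
  ext X
  apply yoneda.map_injective
  show yoneda.map (sigmaApp hsub (Iso.refl (Under.forget F)) X) = yoneda.map (𝟙 X)
  rw [y_sigmaApp, beta_refl]
  simp
  rfl

/-- The morphism from a representable presheaf classifying an element. -/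
@[simps]
def yHom (G : Cᵒᵖ ⥤ Type u) (X : Cᵒᵖ) (x : G.obj X) : yoneda.obj X.unop ⟶ G where
  app Y := TypeCat.ofHom fun g => G.map (g : Y.unop ⟶ X.unop).op x
  naturality Y Z f := by
    ext g
    dsimp
    rw [FunctorToTypes.map_comp_apply]


lemma pAct_sigma (θ : Under.forget F ≅ Under.forget F) (G : Sheaf J (Type u)) :
    pAct (sigma hsub θ) G.val = (beta θ G).hom := by
  ext X x
  have h := beta_natural θ (G := ySh hsub X.unop) (H := G) ⟨yHom G.val X x⟩
  have h2 := types_congr_hom (NatTrans.congr_app (congrArg InducedCategory.Hom.hom h) X) (𝟙 X.unop)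
  dsimp at h2
  rw [← y_sigmaApp hsub θ X.unop] at h2
  change (beta θ G).hom.app X (G.val.map (𝟙 X.unop).op x)
    = G.val.map (𝟙 X.unop ≫ sigmaApp hsub θ X.unop).op x at h2
  rw [Category.id_comp, op_id, FunctorToTypes.map_id_apply] at h2
  exact h2.symm

lemma shActHom_sigma (θ : Under.forget F ≅ Under.forget F) (G : Sheaf J (Type u)) :
    shActHom J (sigma hsub θ) G = beta θ G :=
  Sheaf.hom_ext (pAct_sigma hsub θ G)

lemma beta_Phi (σ : 𝟭 C ≅ 𝟭 C) (G : Sheaf J (Type u)) :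
    beta (Phi F σ) G = shActHom J σ.hom G := by
  apply beta_unique
  have h : alphaA (Phi F σ) G = shActHom J σ.hom (F ⨿ G) := rfl
  rw [h]
  exact shActHom_natural σ.hom coprod.inr

lemma sigma_Phi (σ : 𝟭 C ≅ 𝟭 C) : sigma hsub (Phi F σ) = σ.hom := by
  ext X
  apply yoneda.map_injective
  show yoneda.map (sigmaApp hsub (Phi F σ) X) = yoneda.map (σ.hom.app X)
  rw [y_sigmaApp, beta_Phi]
  exact pAct_yoneda σ.hom X

/-- The desired group isomorphism. -/
noncomputable def theMulEquiv (F : Sheaf J (Type u)) :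
    Aut (Under.forget F) ≃* Aut (𝟭 C) where
  toFun θ :=
    ⟨sigma hsub θ, sigma hsub θ.symm,
      (sigma_trans hsub θ θ.symm).symm.trans
        ((congrArg (sigma hsub) (Iso.self_symm_id θ)).trans (sigma_refl hsub)),
      (sigma_trans hsub θ.symm θ).symm.trans
        ((congrArg (sigma hsub) (Iso.symm_self_id θ)).trans (sigma_refl hsub))⟩
  invFun σ := Phi F σ
  left_inv θ := by
    refine Iso.ext (NatTrans.ext (funext fun u => ?_))
    rw [app_eq_beta θ u]
    exact shActHom_sigma hsub θ u.right
  right_inv σ := Iso.ext (sigma_Phi hsub σ)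
  map_mul' θ₁ θ₂ := by
    apply Iso.ext
    exact sigma_trans hsub θ₂ θ₁

end Psi

end Site

end IsotropySheafAux

/-- For a small subcanonical site `(C, J)` (objects may be covered by the
empty sieve), the covariant isotropy group of any sheaf `F`, i.e. the group of natural
automorphisms of the projection functor `F/Sh(C,J) ⥤ Sh(C,J)`, is isomorphic to the
group of natural automorphisms of the identity functor of `C`. -/
theorem isotropy_of_sheaf_iso_aut_id_subcanonical {C : Type u} [SmallCategory C]
    (J : GrothendieckTopology C)
    (hsub : ∀ X : C, Presieve.IsSheaf J (yoneda.obj X))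
    (F : Sheaf J (Type u)) :
    Nonempty (Aut (Under.forget F) ≃* Aut (𝟭 C)) := by
  exact ⟨IsotropySheafAux.theMulEquiv hsub F⟩
end

section
/- Let (𝒞, J) be a small subcanonical site and let F be a J-sheaf of sets. The map sending each ψ ∈ Aut(𝟭_𝒞) to the family π^ψ, whose component at a sheaf morphism γ : F ⟶ G is the automorphism of G with component at each object C of 𝒞 given by G(ψ_C) : G(C) → G(C), is a well-defined group isomorphism from Aut(𝟭_𝒞) onto the covariant isotropy group Aut(Under.forget F) of F in Sh(𝒞, J). In particular, for every element π of the covariant isotropy group of F there is a unique ψ ∈ Aut(𝟭_𝒞) such that the component of π at any γ : F ⟶ G has component G(ψ_C) at each object C. -/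
open CategoryTheory Limits Opposite

universe u

namespace Isotropy6

variable {C : Type u} [SmallCategory C] (J : GrothendieckTopology C)

/-- An object is degenerate if it is covered by the empty sieve. -/
def Deg (U : C) : Prop := (⊥ : Sieve U) ∈ J U

lemma sep {P : Cᵒᵖ ⥤ Type u} (hP : Presieve.IsSheaf J P) {X : C} {S : Sieve X}
    (hS : S ∈ J X) {x y : P.obj (op X)}
    (h : ∀ ⦃Y : C⦄ (f : Y ⟶ X), S f → P.map f.op x = P.map f.op y) : x = y := by
  have hsep := (hP S hS).isSeparatedFor
  exact hsep (fun Y f _ => P.map f.op x) x y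
    (fun Y f hf => rfl) (fun Y f hf => (h f hf).symm)

lemma deg_ext {P : Cᵒᵖ ⥤ Type u} (hP : Presieve.IsSheaf J P) {U : C} (h : Deg J U)
    (x y : P.obj (op U)) : x = y := by
  refine sep J hP h ?_
  intro Y f hf
  exact hf.elim

variable (F : Sheaf J (Type u))

/-- The presheaf coproduct of `F` and the representable of `X`. -/
@[simps]
def PP (X : C) : Cᵒᵖ ⥤ Type u where
  obj U := F.val.obj U ⊕ (unop U ⟶ X)
  map f := TypeCat.ofHom (Sum.map (F.val.map f) (fun g => f.unop ≫ g))
  map_id U := by ext z; cases z <;> simp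
  map_comp f g := by ext z; cases z <;> simp

/-- The sheaf coproduct of `F` and the representable of `X`. -/
noncomputable def AA (X : C) : Sheaf J (Type u) := (presheafToSheaf J _).obj (PP J F X)

/-- The sheafification unit. -/
noncomputable def ts (X : C) : PP J F X ⟶ (AA J F X).val := toSheafify J _

noncomputable instance (X : C) : Presheaf.IsLocallySurjective J (ts J F X) :=
  inferInstanceAs (Presheaf.IsLocallySurjective J (toSheafify J (PP J F X)))

noncomputable instance (X : C) : Presheaf.IsLocallyInjective J (ts J F X) :=
  inferInstanceAs (Presheaf.IsLocallyInjective J (toSheafify J (PP J F X)))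

lemma AA_presieve_sheaf (X : C) : Presieve.IsSheaf J (AA J F X).val :=
  (isSheaf_iff_isSheaf_of_type J _).1 (AA J F X).cond

/-- The canonical "point" elements of `AA`. -/
noncomputable def kap {X U : C} (g : U ⟶ X) : (AA J F X).val.obj (op U) :=
  (ts J F X).app (op U) (Sum.inr g)

/-- The canonical "F" elements of `AA`. -/
noncomputable def lam {X U : C} (a : F.val.obj (op U)) : (AA J F X).val.obj (op U) :=
  (ts J F X).app (op U) (Sum.inl a)

lemma kap_res {X U V : C} (f : V ⟶ U) (g : U ⟶ X) :
    (AA J F X).val.map f.op (kap J F g) = kap J F (f ≫ g) :=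
  (NatTrans.naturality_apply (ts J F X) f.op (Sum.inr g : (PP J F X).obj (op U))).symm

lemma lam_res {X U V : C} (f : V ⟶ U) (a : F.val.obj (op U)) :
    (AA J F X).val.map f.op (lam J F a) = lam J F (F.val.map f.op a) :=
  (NatTrans.naturality_apply (ts J F X) f.op
    (Sum.inl a : (PP J F X).obj (op U))).symm

variable (hsub : ∀ X : C, Presieve.IsSheaf J (yoneda.obj X))

include hsub in
lemma kap_inj {X U : C} {g g' : U ⟶ X} (h : kap J F g = kap J F g') : g = g' := by
  have hT := Presheaf.equalizerSieve_mem (FD := TypeCat.Fun) (CD := fun X => X) J (ts J F X)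
    (Sum.inr g : (PP J F X).obj (op U)) (Sum.inr g' : (PP J F X).obj (op U)) h
  refine sep J (hsub X) hT ?_
  intro Y f hf
  have hf' : (PP J F X).map f.op (Sum.inr g) = (PP J F X).map f.op (Sum.inr g') := hf
  simp only [PP_map, TypeCat.ofHom_apply, Sum.map_inr] at hf'
  exact Sum.inr.inj hf'

lemma disj {X U : C} {g : U ⟶ X} {a : F.val.obj (op U)}
    (h : kap J F g = lam J F a) : Deg J U := by
  have hT := Presheaf.equalizerSieve_mem (FD := TypeCat.Fun) (CD := fun X => X) J (ts J F X)
    (Sum.inr g : (PP J F X).obj (op U)) (Sum.inl a) h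
  refine J.superset_covering ?_ hT
  intro Y f hf
  have hf' : (PP J F X).map f.op (Sum.inr g) = (PP J F X).map f.op (Sum.inl a) := hf
  change (Sum.inr (f ≫ g) : (PP J F X).obj (op Y)) = Sum.inl (F.val.map f.op a) at hf'
  exact (Sum.inr_ne_inl hf').elim

/-- The coprojection from `F`. -/
noncomputable def ιA (X : C) : F ⟶ AA J F X :=
  ⟨({ app := fun U => TypeCat.ofHom Sum.inl, naturality := by intros; rfl } : F.val ⟶ PP J F X) ≫ ts J F X⟩

/-- The canonical object of the under category. -/
noncomputable def objA (X : C) : Under F := Under.mk (ιA J F X)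

lemma ιA_app {X : C} {U : Cᵒᵖ} (a : F.val.obj U) :
    (ιA J F X).hom.app U a = (ts J F X).app U (Sum.inl a) := rfl

variable (π : Aut (Under.forget F))

/-- Component of `π` at the canonical object. -/
noncomputable def θ (X : C) : AA J F X ⟶ AA J F X := π.hom.app (objA J F X)

/-- Component of `π⁻¹` at the canonical object. -/
noncomputable def θi (X : C) : AA J F X ⟶ AA J F X := π.inv.app (objA J F X)

lemma θθi (X : C) {U : Cᵒᵖ} (z : (AA J F X).val.obj U) :
    (θi J F π X).hom.app U ((θ J F π X).hom.app U z) = z := by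
  have h : (θ J F π X) ≫ (θi J F π X) = 𝟙 _ := π.hom_inv_id_app (objA J F X)
  have h2 := congrArg (fun (w : AA J F X ⟶ AA J F X) => w.hom.app U z) h
  simpa using h2

lemma pi_nat {g h : Under F} (k : g ⟶ h) :
    k.right ≫ π.hom.app h = π.hom.app g ≫ k.right :=
  π.hom.naturality k

lemma pi_inv_nat {g h : Under F} (k : g ⟶ h) :
    k.right ≫ π.inv.app h = π.inv.app g ≫ k.right :=
  π.inv.naturality k

/-- `θ` preserves the `F`-part. -/
lemma theta_lam {X U : C} (a : F.val.obj (op U)) :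
    (θ J F π X).hom.app (op U) (lam J F a) =
      lam J F ((π.hom.app (Under.mk (𝟙 F))).hom.app (op U) a) := by
  have h : ιA J F X ≫ π.hom.app (objA J F X) =
      π.hom.app (Under.mk (𝟙 F)) ≫ ιA J F X :=
    pi_nat J F π (g := Under.mk (𝟙 F)) (h := objA J F X)
      (Under.homMk (ιA J F X) (by simp [objA]))
  have h2 := congrArg (fun (w : F ⟶ AA J F X) => w.hom.app (op U) a) h
  exact h2

lemma theta_i_lam {X U : C} (a : F.val.obj (op U)) :
    (θi J F π X).hom.app (op U) (lam J F a) =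
      lam J F ((π.inv.app (Under.mk (𝟙 F))).hom.app (op U) a) := by
  have h : ιA J F X ≫ π.inv.app (objA J F X) =
      π.inv.app (Under.mk (𝟙 F)) ≫ ιA J F X :=
    pi_inv_nat J F π (g := Under.mk (𝟙 F)) (h := objA J F X)
      (Under.homMk (ιA J F X) (by simp [objA]))
  have h2 := congrArg (fun (w : F ⟶ AA J F X) => w.hom.app (op U) a) h
  exact h2

include hsub in
lemma exists_psi (X : C) :
    ∃ ψ : X ⟶ X, (θ J F π X).hom.app (op X) (kap J F (𝟙 X)) = kap J F ψ := by
  generalize hE : (θ J F π X).hom.app (op X) (kap J F (𝟙 X)) = e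
  have hback : (θi J F π X).hom.app (op X) e = kap J F (𝟙 X) := by
    rw [← hE]; exact θθi J F π X _
  have hS : Presheaf.imageSieve (ts J F X) e ∈ J X :=
    Presheaf.imageSieve_mem J (ts J F X) e
  have hloc : ∀ (Y : C) (f : Y ⟶ X), Presheaf.imageSieve (ts J F X) e f →
      ∃ g : Y ⟶ X, (AA J F X).val.map f.op e = kap J F g := by
    intro Y f hf
    obtain ⟨p, hp⟩ := hf
    cases p with
    | inr g => exact ⟨g, hp.symm⟩
    | inl a =>
      have h1 : (θi J F π X).hom.app (op Y) ((AA J F X).val.map f.op e) = kap J F f := by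
        have hnat := NatTrans.naturality_apply (θi J F π X).hom f.op e
        rw [hnat, hback, kap_res]
        simp
      have hp' : lam J F a = (AA J F X).val.map f.op e := hp
      have h2 : (θi J F π X).hom.app (op Y) ((AA J F X).val.map f.op e) =
          lam J F ((π.inv.app (Under.mk (𝟙 F))).hom.app (op Y) a) :=
        (congrArg ((θi J F π X).hom.app (op Y)) hp').symm.trans (theta_i_lam J F π a)
      have hdeg : Deg J Y := disj J F (h1.symm.trans h2)
      exact ⟨f, deg_ext J (AA_presieve_sheaf J F X) hdeg _ _⟩
  choose gf hgf using hloc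
  set famx : Presieve.FamilyOfElements (yoneda.obj X)
      ((Presheaf.imageSieve (ts J F X) e) : Presieve X) := fun Y f hf => gf Y f hf with hfam
  have hcomp : famx.Compatible := by
    intro Y₁ Y₂ Z h₁ h₂ f₁ f₂ hf₁ hf₂ hcomm
    apply kap_inj J F hsub
    show kap J F (h₁ ≫ gf Y₁ f₁ hf₁) = kap J F (h₂ ≫ gf Y₂ f₂ hf₂)
    rw [← kap_res, ← kap_res, ← hgf Y₁ f₁ hf₁, ← hgf Y₂ f₂ hf₂,
      ← FunctorToTypes.map_comp_apply, ← FunctorToTypes.map_comp_apply,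
      ← op_comp, ← op_comp, hcomm]
  obtain ⟨t, ht, -⟩ := ((hsub X) _ hS) famx hcomp
  refine ⟨t, ?_⟩
  refine sep J (AA_presieve_sheaf J F X) hS ?_
  intro Y f hf
  rw [hgf Y f hf, kap_res]
  exact congrArg (kap J F) ((ht f hf).symm)

/-- The component at `X` of the automorphism of the identity extracted from `π`. -/
noncomputable def psi (X : C) : X ⟶ X := (exists_psi J F hsub π X).choose

lemma theta_kap_one (X : C) :
    (θ J F π X).hom.app (op X) (kap J F (𝟙 X)) = kap J F (psi J F hsub π X) :=
  (exists_psi J F hsub π X).choose_spec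

lemma theta_kap {X U : C} (f : U ⟶ X) :
    (θ J F π X).hom.app (op U) (kap J F f) = kap J F (f ≫ psi J F hsub π X) := by
  have h1 : kap J F f = (AA J F X).val.map f.op (kap J F (𝟙 X)) := by
    rw [kap_res]; simp
  rw [h1]
  have hnat := NatTrans.naturality_apply (θ J F π X).hom f.op (kap J F (𝟙 X))
  rw [hnat, theta_kap_one J F hsub, kap_res]

/-- The main formula: the component of `π` at any under-object is given by `psi`. -/
lemma formula (g : Under F) (X : C) (x : g.right.val.obj (op X)) :
    (π.hom.app g).hom.app (op X) x = g.right.val.map (psi J F hsub π X).op x := by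
  have hvapp : ∀ (U : C) (f : U ⟶ X),
      (yonedaEquiv.symm x : yoneda.obj X ⟶ g.right.val).app (op U) f =
        g.right.val.map f.op x := by
    intro U f
    rfl
  set v : yoneda.obj X ⟶ g.right.val := yonedaEquiv.symm x with hv
  set dP : PP J F X ⟶ g.right.val :=
    { app := fun U => TypeCat.ofHom (Sum.elim (g.hom.hom.app U) (v.app U))
      naturality := by
        intro U V f
        ext z
        cases z with
        | inl a => exact ConcreteCategory.congr_hom (g.hom.hom.naturality f) a
        | inr h => exact ConcreteCategory.congr_hom (v.naturality f) h } with hdP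
  set d : AA J F X ⟶ g.right := ⟨sheafifyLift J dP g.right.cond⟩ with hd
  have hts : ts J F X ≫ d.hom = dP := toSheafify_sheafifyLift J dP g.right.cond
  have htsapp : ∀ (U : Cᵒᵖ) (z : (PP J F X).obj U),
      d.hom.app U ((ts J F X).app U z) = dP.app U z := by
    intro U z
    have h5 := ConcreteCategory.congr_hom (congrArg (fun (w : PP J F X ⟶ g.right.val) => w.app U) hts) z
    simpa using h5
  have hcomm : (objA J F X).hom ≫ d = g.hom := by
    apply Sheaf.hom_ext
    show (objA J F X).hom.hom ≫ d.hom = g.hom.hom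
    ext U a
    exact htsapp U (Sum.inl a)
  have hnat : d ≫ π.hom.app g = π.hom.app (objA J F X) ≫ d :=
    pi_nat J F π (g := objA J F X) (h := g) (Under.homMk d hcomm)
  have hev := congrArg
    (fun (w : AA J F X ⟶ g.right) => w.hom.app (op X) (kap J F (𝟙 X))) hnat
  simp only [ObjectProperty.FullSubcategory.comp_hom, NatTrans.comp_app, types_comp_apply] at hev
  change (π.hom.app g).hom.app (op X) (d.hom.app (op X) (kap J F (𝟙 X))) =
    d.hom.app (op X) ((π.hom.app (objA J F X)).hom.app (op X) (kap J F (𝟙 X))) at hev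
  have hd1 : d.hom.app (op X) (kap J F (𝟙 X)) = x := by
    have h7 : d.hom.app (op X) (kap J F (𝟙 X)) = dP.app (op X) (Sum.inr (𝟙 X)) :=
      htsapp (op X) (Sum.inr (𝟙 X))
    rw [h7]
    show v.app (op X) (𝟙 X) = x
    rw [hvapp]
    simp
  have hd2 : d.hom.app (op X) ((θ J F π X).hom.app (op X) (kap J F (𝟙 X))) =
      g.right.val.map (psi J F hsub π X).op x := by
    rw [theta_kap_one J F hsub]
    have h8 : d.hom.app (op X) (kap J F (psi J F hsub π X)) =
        dP.app (op X) (Sum.inr (psi J F hsub π X)) :=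
      htsapp (op X) (Sum.inr (psi J F hsub π X))
    rw [h8]
    show v.app (op X) (psi J F hsub π X) = _
    rw [hvapp]
  rw [hd1] at hev
  have hθ : (π.hom.app (objA J F X)).hom.app (op X) (kap J F (𝟙 X)) =
      (θ J F π X).hom.app (op X) (kap J F (𝟙 X)) := rfl
  rw [hev]
  exact hd2

include hsub in
lemma psi_nat {W X : C} (f : W ⟶ X) :
    psi J F hsub π W ≫ f = f ≫ psi J F hsub π X := by
  set mP : PP J F W ⟶ (AA J F X).val :=
    { app := fun U => TypeCat.ofHom (fun z => Sum.elim (fun a => (ιA J F X).hom.app U a)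
        (fun h => kap J F (h ≫ f)) z)
      naturality := by
        intro U V k
        ext z
        cases z with
        | inl a =>
          have h9 := ConcreteCategory.congr_hom ((ιA J F X).hom.naturality k) a
          exact h9
        | inr h =>
          show kap J F ((k.unop ≫ h) ≫ f) = (AA J F X).val.map k (kap J F (h ≫ f))
          rw [Category.assoc]
          exact (kap_res J F k.unop (h ≫ f)).symm } with hmP
  set m : AA J F W ⟶ AA J F X := ⟨sheafifyLift J mP (AA J F X).cond⟩ with hm
  have hts : ts J F W ≫ m.hom = mP := toSheafify_sheafifyLift J mP (AA J F X).cond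
  have htsapp : ∀ (U : Cᵒᵖ) (z : (PP J F W).obj U),
      m.hom.app U ((ts J F W).app U z) = mP.app U z := by
    intro U z
    have h5 := ConcreteCategory.congr_hom (congrArg (fun (w : PP J F W ⟶ (AA J F X).val) => w.app U) hts) z
    simpa using h5
  have hcomm : (objA J F W).hom ≫ m = (objA J F X).hom := by
    apply Sheaf.hom_ext
    show (objA J F W).hom.hom ≫ m.hom = (objA J F X).hom.hom
    ext U a
    exact htsapp U (Sum.inl a)
  have hnat : m ≫ π.hom.app (objA J F X) = π.hom.app (objA J F W) ≫ m :=
    pi_nat J F π (g := objA J F W) (h := objA J F X) (Under.homMk m hcomm)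
  have hev := congrArg
    (fun (w : AA J F W ⟶ AA J F X) => w.hom.app (op W) (kap J F (𝟙 W))) hnat
  simp only [ObjectProperty.FullSubcategory.comp_hom, NatTrans.comp_app, types_comp_apply] at hev
  change (π.hom.app (objA J F X)).hom.app (op W) (m.hom.app (op W) (kap J F (𝟙 W))) =
    m.hom.app (op W) ((π.hom.app (objA J F W)).hom.app (op W) (kap J F (𝟙 W))) at hev
  have hl : (θ J F π X).hom.app (op W) (m.hom.app (op W) (kap J F (𝟙 W))) =
      kap J F (f ≫ psi J F hsub π X) := by
    have h1 : m.hom.app (op W) (kap J F (𝟙 W)) = kap J F f := by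
      have h7 : m.hom.app (op W) (kap J F (𝟙 W)) = mP.app (op W) (Sum.inr (𝟙 W)) :=
        htsapp (op W) (Sum.inr (𝟙 W))
      rw [h7]
      show kap J F (𝟙 W ≫ f) = kap J F f
      rw [Category.id_comp]
    rw [h1, theta_kap]
  have hr : m.hom.app (op W) ((θ J F π W).hom.app (op W) (kap J F (𝟙 W))) =
      kap J F (psi J F hsub π W ≫ f) := by
    rw [theta_kap_one J F hsub]
    have h8 : m.hom.app (op W) (kap J F (psi J F hsub π W)) =
        mP.app (op W) (Sum.inr (psi J F hsub π W)) :=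
      htsapp (op W) (Sum.inr (psi J F hsub π W))
    rw [h8]
    rfl
  apply kap_inj J F hsub
  calc kap J F (psi J F hsub π W ≫ f) = _ := hr.symm
    _ = (θ J F π X).hom.app (op W) (m.hom.app (op W) (kap J F (𝟙 W))) := hev.symm
    _ = kap J F (f ≫ psi J F hsub π X) := hl

include hsub in
lemma psi_inv_comp (X : C) : psi J F hsub π⁻¹ X ≫ psi J F hsub π X = 𝟙 X := by
  have h2 := formula J F hsub π⁻¹ (objA J F X) X (kap J F (psi J F hsub π X))
  have h4 : (π.inv.app (objA J F X)).hom.app (op X) (kap J F (psi J F hsub π X)) =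
      kap J F (𝟙 X) := by
    rw [← theta_kap_one J F hsub π X]
    exact θθi J F π X _
  have h5 : (AA J F X).val.map (psi J F hsub π⁻¹ X).op (kap J F (psi J F hsub π X)) =
      kap J F (psi J F hsub π⁻¹ X ≫ psi J F hsub π X) := kap_res J F _ _
  have h6 : kap J F (𝟙 X) = kap J F (psi J F hsub π⁻¹ X ≫ psi J F hsub π X) :=
    (h4.symm.trans h2).trans h5
  exact (kap_inj J F hsub h6).symm

/-- The automorphism of the identity functor extracted from `π`. -/
noncomputable def Psi : Aut (𝟭 C) where
  hom :=
    { app := fun X => psi J F hsub π X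
      naturality := by
        intro W X f
        simpa using (psi_nat J F hsub π f).symm }
  inv :=
    { app := fun X => psi J F hsub π⁻¹ X
      naturality := by
        intro W X f
        simpa using (psi_nat J F hsub π⁻¹ f).symm }
  hom_inv_id := by
    ext X
    have h := psi_inv_comp J F hsub π⁻¹ X
    rw [inv_inv] at h
    simpa using h
  inv_hom_id := by
    ext X
    simpa using psi_inv_comp J F hsub π X

/-- The action of a natural endomorphism of the identity on a presheaf. -/
@[simps]
def tau (σ : 𝟭 C ⟶ 𝟭 C) (G : Cᵒᵖ ⥤ Type u) : G ⟶ G where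
  app U := G.map (σ.app (unop U)).op
  naturality := by
    intro U V k
    rw [← G.map_comp, ← G.map_comp]
    congr 1
    have hσ := σ.naturality k.unop
    simp only [Functor.id_obj, Functor.id_map] at hσ
    apply Quiver.Hom.unop_inj
    simpa using hσ.symm

/-- The isotropy element induced by an automorphism of the identity functor. -/
noncomputable def Phi (ψ : Aut (𝟭 C)) : Aut (Under.forget F) :=
  NatIso.ofComponents
    (fun g =>
      { hom := ⟨tau ψ.hom g.right.val⟩
        inv := ⟨tau ψ.inv g.right.val⟩
        hom_inv_id := by
          apply Sheaf.hom_ext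
          rw [ObjectProperty.FullSubcategory.comp_hom]
          ext U x
          simp only [NatTrans.comp_app, types_comp_apply, tau_app,
            ← FunctorToTypes.map_comp_apply, ← op_comp, Iso.inv_hom_id_app]
          change g.right.val.map (ψ.inv.app (unop U)).op (g.right.val.map (ψ.hom.app (unop U)).op x) = x
          have h1 : (ψ.hom.app (unop U)).op ≫ (ψ.inv.app (unop U)).op = 𝟙 (op (unop U)) :=
            Quiver.Hom.unop_inj (Iso.inv_hom_id_app ψ (unop U))
          exact ((Functor.map_comp_apply g.right.val _ _ x).symm.trans
            (ConcreteCategory.congr_hom (congrArg g.right.val.map h1) x)).trans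
            (Functor.map_id_apply g.right.val _ x)
        inv_hom_id := by
          apply Sheaf.hom_ext
          rw [ObjectProperty.FullSubcategory.comp_hom]
          ext U x
          simp only [NatTrans.comp_app, types_comp_apply, tau_app,
            ← FunctorToTypes.map_comp_apply, ← op_comp, Iso.hom_inv_id_app]
          change g.right.val.map (ψ.hom.app (unop U)).op (g.right.val.map (ψ.inv.app (unop U)).op x) = x
          have h1 : (ψ.inv.app (unop U)).op ≫ (ψ.hom.app (unop U)).op = 𝟙 (op (unop U)) :=
            Quiver.Hom.unop_inj (Iso.hom_inv_id_app ψ (unop U))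
          exact ((Functor.map_comp_apply g.right.val _ _ x).symm.trans
            (ConcreteCategory.congr_hom (congrArg g.right.val.map h1) x)).trans
            (Functor.map_id_apply g.right.val _ x) })
    (by
      intro g h k
      apply Sheaf.hom_ext
      ext U x
      simp only [ObjectProperty.FullSubcategory.comp_hom, NatTrans.comp_app, types_comp_apply,
        tau_app]
      exact (NatTrans.naturality_apply k.right.hom (ψ.hom.app (unop U)).op x).symm)

lemma Phi_hom_app (ψ : Aut (𝟭 C)) (g : Under F) (U : Cᵒᵖ) :
    ((Phi J F ψ).hom.app g).hom.app U = g.right.val.map (ψ.hom.app (unop U)).op := rfl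

lemma Phi_Psi (π : Aut (Under.forget F)) : Phi J F (Psi J F hsub π) = π := by
  apply Iso.ext
  apply NatTrans.ext
  funext g
  apply Sheaf.hom_ext
  apply NatTrans.ext
  funext U
  ext x
  exact (formula J F hsub π g (unop U) x).symm

lemma kap_of_map {X : C} (u : X ⟶ X) :
    (AA J F X).val.map u.op (kap J F (𝟙 X)) = kap J F u := by
  rw [kap_res, Category.comp_id]

include hsub in
lemma Phi_inj : Function.Injective (Phi J F) := by
  intro ψ ψ' h
  apply Iso.ext
  apply NatTrans.ext
  funext X
  have hc := congrArg (fun (w : Aut (Under.forget F)) =>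
    (w.hom.app (objA J F X)).hom.app (op X) (kap J F (𝟙 X))) h
  have hc2 : kap J F (ψ.hom.app X) = kap J F (ψ'.hom.app X) :=
    ((kap_of_map J F (ψ.hom.app X)).symm.trans hc).trans (kap_of_map J F (ψ'.hom.app X))
  exact kap_inj J F hsub hc2

lemma Phi_mul (ψ φ : Aut (𝟭 C)) : Phi J F (ψ * φ) = Phi J F ψ * Phi J F φ := by
  apply Iso.ext
  apply NatTrans.ext
  funext g
  apply Sheaf.hom_ext
  apply NatTrans.ext
  funext U
  ext x
  have hC : φ.hom.app (unop U) ≫ ψ.hom.app (unop U) =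
      ψ.hom.app (unop U) ≫ φ.hom.app (unop U) := by
    simpa using ψ.hom.naturality (φ.hom.app (unop U))
  show g.right.val.map ((φ.hom.app (unop U)) ≫ (ψ.hom.app (unop U))).op x =
    g.right.val.map (ψ.hom.app (unop U)).op (g.right.val.map (φ.hom.app (unop U)).op x)
  rw [hC, op_comp, Functor.map_comp]
  rfl

end Isotropy6

/-- For a small subcanonical site `(C, J)` and a sheaf `F`, the map
sending `ψ ∈ Aut (𝟭 C)` to the family whose component at a sheaf morphism
`γ : F ⟶ G` is the automorphism of `G` with component `G(ψ_C)` at each object `C`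
is a well-defined group isomorphism from `Aut (𝟭 C)` onto the covariant isotropy
group `Aut (Under.forget F)`; in particular every element `π` of the covariant
isotropy group arises in this way from a unique `ψ ∈ Aut (𝟭 C)`. -/
theorem isotropy_of_sheaf_explicit_iso {C : Type u} [SmallCategory C]
    (J : GrothendieckTopology C)
    (hsub : ∀ X : C, Presieve.IsSheaf J (yoneda.obj X))
    (F : Sheaf J (Type u)) :
    (∃ e : Aut (𝟭 C) ≃* Aut (Under.forget F),
        ∀ (ψ : Aut (𝟭 C)) (g : Under F) (C₀ : C),
          ((e ψ).hom.app g).hom.app (op C₀) = g.right.val.map (ψ.hom.app C₀).op) ∧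
    (∀ π : Aut (Under.forget F), ∃! ψ : Aut (𝟭 C),
        ∀ (g : Under F) (C₀ : C),
          (π.hom.app g).hom.app (op C₀) = g.right.val.map (ψ.hom.app C₀).op) := by
  classical
  constructor
  · refine ⟨MulEquiv.mk (Equiv.ofBijective (Isotropy6.Phi J F)
      ⟨Isotropy6.Phi_inj J F hsub, fun π => ⟨Isotropy6.Psi J F hsub π,
        Isotropy6.Phi_Psi J F hsub π⟩⟩) (fun x y => Isotropy6.Phi_mul J F x y), ?_⟩
    intro ψ g C₀
    exact Isotropy6.Phi_hom_app J F ψ g (op C₀)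
  · intro π
    refine ⟨Isotropy6.Psi J F hsub π, ?_, ?_⟩
    · intro g C₀
      ext x
      exact Isotropy6.formula J F hsub π g C₀ x
    · intro ψ' h'
      apply Iso.ext
      apply NatTrans.ext
      funext X
      have hc := ConcreteCategory.congr_hom (h' (Isotropy6.objA J F X) X) (Isotropy6.kap J F (𝟙 X))
      have hc2 : Isotropy6.kap J F (Isotropy6.psi J F hsub π X) =
          Isotropy6.kap J F (ψ'.hom.app X) :=
        ((Isotropy6.theta_kap_one J F hsub π X).symm.trans hc).trans
          (Isotropy6.kap_of_map J F (ψ'.hom.app X))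
      exact (Isotropy6.kap_inj J F hsub hc2).symm
end

section
/- Let (𝒞, J) be a small subcanonical site and let F be a J-sheaf of sets. A natural endomorphism γ : F ⟶ F is an inner automorphism of F (i.e., there exists an element π of the covariant isotropy group Aut(Under.forget F) of F with component at the identity morphism id_F equal to γ) if and only if there exists ψ ∈ Aut(𝟭_𝒞) with γ_C = F(ψ_C) for every object C of 𝒞. -/
open CategoryTheory Limits Opposite

universe u

section Factor

variable {S : Type*} [Category S] [FinitaryExtensive S] [HasPullbacks S]

theorem aux_factor_inr {F Y : S} (θ : F ⨿ Y ≅ F ⨿ Y) (γ' : F ⟶ F)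
    (h2 : coprod.inl ≫ θ.inv = γ' ≫ coprod.inl) :
    ∃ w : Y ⟶ Y, coprod.inr ≫ θ.hom = w ≫ coprod.inr := by
  set t : Y ⟶ F ⨿ Y := coprod.inr ≫ θ.hom with ht
  let c' : BinaryCofan (pullback t (coprod.inl : F ⟶ F ⨿ Y))
      (pullback t (coprod.inr : Y ⟶ F ⨿ Y)) :=
    BinaryCofan.mk (pullback.fst t coprod.inl) (pullback.fst t coprod.inr)
  have vk := (BinaryCofan.isVanKampen_iff _).mp
    (FinitaryExtensive.vanKampen _ (coprodIsCoprod F Y)) c'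
    (pullback.snd t coprod.inl) (pullback.snd t coprod.inr) t
    pullback.condition.symm pullback.condition.symm
  have hc' : Nonempty (IsColimit c') := by
    rw [vk]
    exact ⟨IsPullback.of_hasPullback t coprod.inl, IsPullback.of_hasPullback t coprod.inr⟩
  have hsq : (pullback.snd t coprod.inl ≫ γ') ≫ (coprod.inl : F ⟶ F ⨿ Y)
      = pullback.fst t coprod.inl ≫ (coprod.inr : Y ⟶ F ⨿ Y) := by
    have hti : t ≫ θ.inv = coprod.inr := by
      rw [ht, Category.assoc, θ.hom_inv_id, Category.comp_id]
    calc (pullback.snd t coprod.inl ≫ γ') ≫ (coprod.inl : F ⟶ F ⨿ Y)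
        = pullback.snd t coprod.inl ≫ coprod.inl ≫ θ.inv := by
          simp [h2]
      _ = pullback.fst t coprod.inl ≫ t ≫ θ.inv := by
          rw [← Category.assoc, ← pullback.condition, Category.assoc]
      _ = pullback.fst t coprod.inl ≫ coprod.inr := by rw [hti]
  have dpb := FinitaryExtensive.isPullback_initial_to_binaryCofan (coprodIsCoprod F Y)
  let l : pullback t (coprod.inl : F ⟶ F ⨿ Y) ⟶ ⊥_ S :=
    dpb.lift (pullback.snd t coprod.inl ≫ γ') (pullback.fst t coprod.inl) hsq
  have hinit : IsInitial (pullback t (coprod.inl : F ⟶ F ⨿ Y)) :=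
    initialIsInitial.ofIso (asIso l).symm
  have hiso : IsIso c'.inr := (BinaryCofan.isColimit_iff_isIso_inr hinit c').mp hc'
  have hiso' : IsIso (pullback.fst t coprod.inr) := hiso
  refine ⟨inv (pullback.fst t coprod.inr) ≫ pullback.snd t coprod.inr, ?_⟩
  rw [Category.assoc, ← pullback.condition, ← Category.assoc,
    IsIso.inv_hom_id, Category.id_comp]

end Factor

/-- For a small subcanonical site `(C, J)` and a sheaf `F`, a natural
endomorphism `γ : F ⟶ F` is an inner automorphism of `F` (i.e. the component at
`𝟙 F` of some element of the covariant isotropy group of `F`) iff there exists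
`ψ ∈ Aut (𝟭 C)` with `γ_C = F(ψ_C)` for every object `C`. -/
theorem inner_automorphism_iff {C : Type u} [SmallCategory C]
    (J : GrothendieckTopology C)
    (hsub : ∀ X : C, Presieve.IsSheaf J (yoneda.obj X))
    (F : Sheaf J (Type u)) (γ : F ⟶ F) :
    (∃ π : Aut (Under.forget F), π.hom.app (Under.mk (𝟙 F)) = γ) ↔
    (∃ ψ : Aut (𝟭 C), ∀ C₀ : C,
        γ.hom.app (op C₀) = F.obj.map (ψ.hom.app C₀).op) := by
  constructor
  · rintro ⟨π, hπ⟩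
    haveI : HasColimitsOfShape (Discrete WalkingPair) (Sheaf J (Type u)) :=
      hasColimitsOfShape_discrete _ _
    -- naturality helpers
    have nat : ∀ {G G' : Sheaf J (Type u)} (f : F ⟶ G) (f' : F ⟶ G') (g : G ⟶ G')
        (_ : f ≫ g = f'),
        g ≫ π.hom.app (Under.mk f') = π.hom.app (Under.mk f) ≫ g := by
      intro G G' f f' g hg
      exact π.hom.naturality (Under.homMk (U := Under.mk f) (V := Under.mk f') g
        (by simpa using hg))
    have natInv : ∀ {G G' : Sheaf J (Type u)} (f : F ⟶ G) (f' : F ⟶ G') (g : G ⟶ G')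
        (_ : f ≫ g = f'),
        g ≫ π.inv.app (Under.mk f') = π.inv.app (Under.mk f) ≫ g := by
      intro G G' f f' g hg
      exact π.inv.naturality (Under.homMk (U := Under.mk f) (V := Under.mk f') g
        (by simpa using hg))
    have hhi : ∀ {G : Sheaf J (Type u)} (f : F ⟶ G),
        π.hom.app (Under.mk f) ≫ π.inv.app (Under.mk f) = 𝟙 G := by
      intro G f
      simpa using NatTrans.congr_app π.hom_inv_id (Under.mk f)
    have hih : ∀ {G : Sheaf J (Type u)} (f : F ⟶ G),
        π.inv.app (Under.mk f) ≫ π.hom.app (Under.mk f) = 𝟙 G := by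
      intro G f
      simpa using NatTrans.congr_app π.inv_hom_id (Under.mk f)
    -- the yoneda sheaves
    let Y : C → Sheaf J (Type u) := fun X =>
      ⟨yoneda.obj X, (isSheaf_iff_isSheaf_of_type J _).mpr (hsub X)⟩
    let ym : ∀ {X X' : C}, (X ⟶ X') → (Y X ⟶ Y X') := fun h => ⟨yoneda.map h⟩
    let θh : ∀ X : C, F ⨿ Y X ⟶ F ⨿ Y X := fun X =>
      π.hom.app (Under.mk (coprod.inl : F ⟶ F ⨿ Y X))
    let θi : ∀ X : C, F ⨿ Y X ⟶ F ⨿ Y X := fun X =>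
      π.inv.app (Under.mk (coprod.inl : F ⟶ F ⨿ Y X))
    let θiso : ∀ X : C, F ⨿ Y X ≅ F ⨿ Y X := fun X =>
      ⟨θh X, θi X, hhi _, hih _⟩
    have h1 : ∀ X : C, (coprod.inl : F ⟶ F ⨿ Y X) ≫ θh X = γ ≫ coprod.inl := by
      intro X
      have := nat (𝟙 F) (coprod.inl : F ⟶ F ⨿ Y X) coprod.inl (Category.id_comp _)
      rw [hπ] at this
      exact this
    have h2 : ∀ X : C, (coprod.inl : F ⟶ F ⨿ Y X) ≫ θi X
        = π.inv.app (Under.mk (𝟙 F)) ≫ coprod.inl := by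
      intro X
      exact natInv (𝟙 F) (coprod.inl : F ⟶ F ⨿ Y X) coprod.inl (Category.id_comp _)
    have hwex : ∀ X : C, ∃ w : Y X ⟶ Y X,
        (coprod.inr : Y X ⟶ F ⨿ Y X) ≫ θh X = w ≫ coprod.inr := fun X =>
      aux_factor_inr (θiso X) (π.inv.app (Under.mk (𝟙 F))) (h2 X)
    choose w hw using hwex
    have hwex' : ∀ X : C, ∃ w' : Y X ⟶ Y X,
        (coprod.inr : Y X ⟶ F ⨿ Y X) ≫ θi X = w' ≫ coprod.inr := fun X =>
      aux_factor_inr (θiso X).symm γ (h1 X)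
    choose w' hw' using hwex'
    -- w X is invertible
    have hww' : ∀ X : C, w X ≫ w' X = 𝟙 (Y X) := by
      intro X
      have e : (w X ≫ w' X) ≫ (coprod.inr : Y X ⟶ F ⨿ Y X) = 𝟙 (Y X) ≫ coprod.inr := by
        calc (w X ≫ w' X) ≫ (coprod.inr : Y X ⟶ F ⨿ Y X)
            = w X ≫ coprod.inr ≫ θi X := by rw [Category.assoc, hw']
          _ = (coprod.inr ≫ θh X) ≫ θi X := by rw [← Category.assoc, ← hw X]
          _ = coprod.inr ≫ θh X ≫ θi X := by rw [Category.assoc]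
          _ = coprod.inr := by rw [show θh X ≫ θi X = 𝟙 _ from hhi _]; simp
          _ = 𝟙 (Y X) ≫ coprod.inr := (Category.id_comp _).symm
      exact (cancel_mono _).mp e
    have hw'w : ∀ X : C, w' X ≫ w X = 𝟙 (Y X) := by
      intro X
      have e : (w' X ≫ w X) ≫ (coprod.inr : Y X ⟶ F ⨿ Y X) = 𝟙 (Y X) ≫ coprod.inr := by
        calc (w' X ≫ w X) ≫ (coprod.inr : Y X ⟶ F ⨿ Y X)
            = w' X ≫ coprod.inr ≫ θh X := by rw [Category.assoc, hw]
          _ = (coprod.inr ≫ θi X) ≫ θh X := by rw [← Category.assoc, ← hw' X]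
          _ = coprod.inr ≫ θi X ≫ θh X := by rw [Category.assoc]
          _ = coprod.inr := by rw [show θi X ≫ θh X = 𝟙 _ from hih _]; simp
          _ = 𝟙 (Y X) ≫ coprod.inr := (Category.id_comp _).symm
      exact (cancel_mono _).mp e
    -- naturality of w
    have hnat : ∀ {X X' : C} (h : X ⟶ X'), w X ≫ ym h = ym h ≫ w X' := by
      intro X X' h
      have hm : (coprod.inl : F ⟶ F ⨿ Y X) ≫ coprod.map (𝟙 F) (ym h) = coprod.inl := by
        simp
      have hn := nat (coprod.inl : F ⟶ F ⨿ Y X) (coprod.inl : F ⟶ F ⨿ Y X')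
        (coprod.map (𝟙 F) (ym h)) hm
      have e : (w X ≫ ym h) ≫ (coprod.inr : Y X' ⟶ F ⨿ Y X')
          = (ym h ≫ w X') ≫ coprod.inr := by
        calc (w X ≫ ym h) ≫ (coprod.inr : Y X' ⟶ F ⨿ Y X')
            = w X ≫ coprod.inr ≫ coprod.map (𝟙 F) (ym h) := by
              rw [Category.assoc, coprod.inr_map]
          _ = (coprod.inr ≫ θh X) ≫ coprod.map (𝟙 F) (ym h) := by
              rw [← Category.assoc, ← hw X]
          _ = coprod.inr ≫ coprod.map (𝟙 F) (ym h) ≫ θh X' := by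
              rw [Category.assoc, show θh X ≫ coprod.map (𝟙 F) (ym h) = coprod.map (𝟙 F) (ym h) ≫ θh X' from hn.symm]
          _ = (ym h ≫ coprod.inr) ≫ θh X' := by
              rw [← Category.assoc, coprod.inr_map]
          _ = ym h ≫ w X' ≫ coprod.inr := by rw [Category.assoc, hw X']
          _ = (ym h ≫ w X') ≫ coprod.inr := by rw [Category.assoc]
      exact (cancel_mono _).mp e
    -- the natural automorphism of the identity
    let ψ₀ : ∀ X : C, X ⟶ X := fun X => yoneda.preimage (w X).hom
    have hψ₀ : ∀ X : C, yoneda.map (ψ₀ X) = (w X).hom := fun X =>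
      yoneda.map_preimage (w X).hom
    let ψh : 𝟭 C ⟶ 𝟭 C :=
      { app := ψ₀
        naturality := by
          intro X X' h
          apply yoneda.map_injective
          show yoneda.map (h ≫ ψ₀ X') = yoneda.map (ψ₀ X ≫ h)
          rw [Functor.map_comp, Functor.map_comp, hψ₀, hψ₀]
          exact (congrArg InducedCategory.Hom.hom (hnat h)).symm }
    have hinv1 : ∀ X : C, ψ₀ X ≫ yoneda.preimage (w' X).hom = 𝟙 X := by
      intro X
      apply yoneda.map_injective
      rw [Functor.map_comp, CategoryTheory.Functor.map_id, hψ₀, yoneda.map_preimage]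
      have := congrArg InducedCategory.Hom.hom (hww' X); exact this
    have hinv2 : ∀ X : C, yoneda.preimage (w' X).hom ≫ ψ₀ X = 𝟙 X := by
      intro X
      apply yoneda.map_injective
      rw [Functor.map_comp, CategoryTheory.Functor.map_id, yoneda.map_preimage, hψ₀]
      have := congrArg InducedCategory.Hom.hom (hw'w X); exact this
    have hcompiso : ∀ X : C, IsIso (ψh.app X) := fun X =>
      ⟨yoneda.preimage (w' X).hom, hinv1 X, hinv2 X⟩
    haveI : IsIso ψh := NatIso.isIso_of_isIso_app ψh
    refine ⟨asIso ψh, ?_⟩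
    intro X
    ext s
    -- the element s as a map Y X ⟶ F
    let a : Y X ⟶ F := ⟨yonedaEquiv.symm s⟩
    have ha : (coprod.inl : F ⟶ F ⨿ Y X) ≫ coprod.desc (𝟙 F) a = 𝟙 F :=
      coprod.inl_desc _ _
    have hr := nat (coprod.inl : F ⟶ F ⨿ Y X) (𝟙 F) (coprod.desc (𝟙 F) a) ha
    rw [hπ] at hr
    have e : a ≫ γ = w X ≫ a := by
      calc a ≫ γ = (coprod.inr ≫ coprod.desc (𝟙 F) a) ≫ γ := by rw [coprod.inr_desc]
        _ = coprod.inr ≫ coprod.desc (𝟙 F) a ≫ γ := by rw [Category.assoc]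
        _ = coprod.inr ≫ θh X ≫ coprod.desc (𝟙 F) a := by exact congrArg (fun q => coprod.inr ≫ q) hr
        _ = (coprod.inr ≫ θh X) ≫ coprod.desc (𝟙 F) a := by rw [Category.assoc]
        _ = (w X ≫ coprod.inr) ≫ coprod.desc (𝟙 F) a := by rw [hw X]
        _ = w X ≫ a := by rw [Category.assoc, coprod.inr_desc]
    have e' := congrArg (fun (q : Y X ⟶ F) => q.hom.app (op X) (𝟙 X)) e
    simp only [ObjectProperty.FullSubcategory.comp_hom, FunctorToTypes.comp] at e'
    have lhs : a.hom.app (op X) (𝟙 X) = s := by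
      simp [a, yonedaEquiv_symm_app_apply]
    rw [lhs] at e'
    have wapp : (w X).hom.app (op X) (𝟙 X) = ψ₀ X := by
      rw [← hψ₀ X]
      simp
    rw [wapp] at e'
    have rhs : a.hom.app (op X) (ψ₀ X) = F.obj.map (ψ₀ X).op s := by
      simp [a, yonedaEquiv_symm_app_apply]
    rw [rhs] at e'
    simpa using e'
  · rintro ⟨ψ, hψ⟩
    -- the natural endomorphism of every presheaf induced by ψ
    let τ : ∀ P : Cᵒᵖ ⥤ Type u, P ⟶ P := fun P =>
      { app := fun c => P.map (ψ.hom.app c.unop).op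
        naturality := by
          intro c c' f
          dsimp
          rw [← P.map_comp, ← P.map_comp]
          congr 1
          apply Quiver.Hom.unop_inj
          simpa using (ψ.hom.naturality f.unop).symm }
    let τ' : ∀ P : Cᵒᵖ ⥤ Type u, P ⟶ P := fun P =>
      { app := fun c => P.map (ψ.inv.app c.unop).op
        naturality := by
          intro c c' f
          dsimp
          rw [← P.map_comp, ← P.map_comp]
          congr 1
          apply Quiver.Hom.unop_inj
          simpa using (ψ.inv.naturality f.unop).symm }
    have ττ' : ∀ P : Cᵒᵖ ⥤ Type u, τ P ≫ τ' P = 𝟙 P := by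
      intro P
      ext c x
      simp only [NatTrans.comp_app, types_comp_apply, NatTrans.id_app, types_id_apply, τ, τ']
      rw [← P.map_comp, ← op_comp]
      have h : ψ.inv.app c.unop ≫ ψ.hom.app c.unop = 𝟙 _ := ψ.inv_hom_id_app c.unop
      rw [h]
      simp
    have τ'τ : ∀ P : Cᵒᵖ ⥤ Type u, τ' P ≫ τ P = 𝟙 P := by
      intro P
      ext c x
      simp only [NatTrans.comp_app, types_comp_apply, NatTrans.id_app, types_id_apply, τ, τ']
      rw [← P.map_comp, ← op_comp]
      have h : ψ.hom.app c.unop ≫ ψ.inv.app c.unop = 𝟙 _ := ψ.hom_inv_id_app c.unop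
      rw [h]
      simp
    have τnat : ∀ {P Q : Cᵒᵖ ⥤ Type u} (g : P ⟶ Q), τ P ≫ g = g ≫ τ Q := by
      intro P Q g
      ext c x
      simp only [NatTrans.comp_app, types_comp_apply, τ]
      exact ConcreteCategory.congr_hom (g.naturality _) x
    refine ⟨NatIso.ofComponents
      (fun u => ⟨⟨τ u.right.obj⟩, ⟨τ' u.right.obj⟩, Sheaf.hom_ext (ττ' _), Sheaf.hom_ext (τ'τ _)⟩)
      (fun {u v} k => Sheaf.hom_ext ((τnat k.right.hom).symm)), ?_⟩
    apply Sheaf.hom_ext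
    ext c x
    obtain ⟨c₀⟩ := c
    simp only [NatIso.ofComponents_hom_app]
    exact (ConcreteCategory.congr_hom (hψ c₀) x).symm
end

section
/- Let (𝒞, J) be an arbitrary small site and let ay𝒞 denote the full subcategory of Sh(𝒞, J) on those sheaves isomorphic to the sheafification of a representable presheaf 𝒞(−, C) for some object C of 𝒞. Then for every J-sheaf F of sets, the covariant isotropy group of F in Sh(𝒞, J), i.e. the group Aut(Under.forget F) of natural automorphisms of the projection functor from the under category F/Sh(𝒞, J) to Sh(𝒞, J), is isomorphic as a group to Aut(𝟭_{ay𝒞}), the group of natural automorphisms of the identity functor of ay𝒞. -/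
open CategoryTheory Limits Opposite

universe u

namespace IsotropyAux

section Extensive

variable {E : Type*} [Category E] [FinitaryExtensive E]

/-- In a finitary extensive category, any morphism into a binary coproduct decomposes
its domain as the coproduct of the two pullbacks. -/
lemma isColimit_pullback_cofan {X Y Z : E} (m : Z ⟶ X ⨿ Y) :
    Nonempty (IsColimit (BinaryCofan.mk
      (pullback.fst m coprod.inl) (pullback.fst m coprod.inr))) := by
  refine (FinitaryPreExtensive.universal' (BinaryCofan.mk (coprod.inl : X ⟶ X ⨿ Y) coprod.inr)
      (coprodIsCoprod X Y))
    (BinaryCofan.mk (pullback.fst m coprod.inl) (pullback.fst m coprod.inr))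
    (mapPair (pullback.snd m coprod.inl) (pullback.snd m coprod.inr)) m ?_
    (mapPair_equifibered _) ?_
  · ext ⟨⟨⟩⟩
    · exact (pullback.condition (f := m) (g := coprod.inl)).symm
    · exact (pullback.condition (f := m) (g := coprod.inr)).symm
  · rintro ⟨⟨⟩⟩
    · exact IsPullback.of_hasPullback m coprod.inl
    · exact IsPullback.of_hasPullback m coprod.inr

/-- If `f ≫ inl = g ≫ inr` then the common domain is initial (disjointness of coproducts). -/
lemma isInitial_of_inl_eq_inr {X F G : E} (f : X ⟶ F) (g : X ⟶ G)
    (h : f ≫ (coprod.inl : F ⟶ F ⨿ G) = g ≫ coprod.inr) : Nonempty (IsInitial X) := by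
  have hpb := FinitaryExtensive.isPullback_initial_to_binaryCofan (coprodIsCoprod F G)
  have lift := PullbackCone.IsLimit.lift hpb.isLimit f g h
  exact ⟨IsInitial.ofStrict lift initialIsInitial⟩

lemma factor_inl {X F G : E} (m : X ⟶ F ⨿ G)
    (hm : m ≫ coprod.map (𝟙 F) (coprod.inl : G ⟶ G ⨿ G)
        = m ≫ coprod.map (𝟙 F) (coprod.inr : G ⟶ G ⨿ G)) :
    ∃ ζ : X ⟶ F, m = ζ ≫ coprod.inl := by
  obtain ⟨hc⟩ := isColimit_pullback_cofan m
  -- the right part is initial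
  have h2 : pullback.fst m (coprod.inr : G ⟶ F ⨿ G) ≫ m ≫ coprod.map (𝟙 F) (coprod.inl : G ⟶ G ⨿ G)
      = pullback.fst m coprod.inr ≫ m ≫ coprod.map (𝟙 F) (coprod.inr : G ⟶ G ⨿ G) := by
    rw [hm]
  simp only [reassoc_of% (pullback.condition (f := m) (g := (coprod.inr : G ⟶ F ⨿ G)))] at h2
  simp only [coprod.inr_map] at h2
  have h3 : pullback.snd m (coprod.inr : G ⟶ F ⨿ G) ≫ (coprod.inl : G ⟶ G ⨿ G)
      = pullback.snd m coprod.inr ≫ coprod.inr := by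
    rw [← Category.assoc, ← Category.assoc] at h2
    exact (cancel_mono (coprod.inr : G ⨿ G ⟶ F ⨿ (G ⨿ G))).mp h2
  obtain ⟨hinit⟩ := isInitial_of_inl_eq_inr _ _ h3
  have hiso : IsIso (BinaryCofan.mk (pullback.fst m (coprod.inl : F ⟶ F ⨿ G))
      (pullback.fst m coprod.inr)).inl :=
    (BinaryCofan.isColimit_iff_isIso_inl hinit _).mp ⟨hc⟩
  dsimp at hiso
  have hiso' : IsIso (pullback.fst m (coprod.inl : F ⟶ F ⨿ G)) := hiso
  refine ⟨inv (pullback.fst m coprod.inl) ≫ pullback.snd m coprod.inl, ?_⟩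
  rw [Category.assoc, ← pullback.condition, IsIso.inv_hom_id_assoc]

lemma factor_inr {F G : E} (h h' : F ⨿ G ⟶ F ⨿ G) (hh : h ≫ h' = 𝟙 _)
    (ζ : F ⟶ F) (hζ : (coprod.inl : F ⟶ F ⨿ G) ≫ h' = ζ ≫ coprod.inl) :
    ∃ θ : G ⟶ G, (coprod.inr : G ⟶ F ⨿ G) ≫ h = θ ≫ coprod.inr := by
  obtain ⟨hc⟩ := isColimit_pullback_cofan (coprod.inr ≫ h : G ⟶ F ⨿ G)
  -- the left part is initial
  have h1 := congrArg (· ≫ h')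
    (pullback.condition (f := (coprod.inr ≫ h : G ⟶ F ⨿ G)) (g := (coprod.inl : F ⟶ F ⨿ G)))
  simp only [Category.assoc] at h1
  rw [hh] at h1
  simp only [Category.comp_id] at h1
  rw [hζ] at h1
  -- h1 : fst ≫ inr = snd ≫ ζ ≫ inl
  have key : (pullback.snd (coprod.inr ≫ h) (coprod.inl : F ⟶ F ⨿ G) ≫ ζ)
        ≫ (coprod.inl : F ⟶ F ⨿ G)
      = pullback.fst (coprod.inr ≫ h) coprod.inl ≫ coprod.inr := by
    rw [Category.assoc]; exact h1.symm
  obtain ⟨hinit⟩ := isInitial_of_inl_eq_inr _ _ key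
  have hiso : IsIso (BinaryCofan.mk
      (pullback.fst (coprod.inr ≫ h : G ⟶ F ⨿ G) coprod.inl)
      (pullback.fst (coprod.inr ≫ h : G ⟶ F ⨿ G) coprod.inr)).inr :=
    (BinaryCofan.isColimit_iff_isIso_inr hinit _).mp ⟨hc⟩
  dsimp at hiso
  have hiso' : IsIso (pullback.fst (coprod.inr ≫ h : G ⟶ F ⨿ G) coprod.inr) := hiso
  refine ⟨inv (pullback.fst (coprod.inr ≫ h) coprod.inr)
    ≫ pullback.snd (coprod.inr ≫ h) coprod.inr, ?_⟩
  rw [Category.assoc, ← pullback.condition, IsIso.inv_hom_id_assoc]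

end Extensive

section SheafStuff

variable {C : Type u} [SmallCategory C] {J : GrothendieckTopology C}

noncomputable abbrev ay (J : GrothendieckTopology C) (c : C) : Sheaf J (Type u) :=
  (presheafToSheaf J (Type u)).obj (yoneda.obj c)

noncomputable def elEquiv (c : C) (G : Sheaf J (Type u)) :
    (ay J c ⟶ G) ≃ G.val.obj (op c) :=
  ((sheafificationAdjunction J (Type u)).homEquiv _ _).trans yonedaEquiv

noncomputable def el {c : C} {G : Sheaf J (Type u)} (x : G.val.obj (op c)) : ay J c ⟶ G :=
  (elEquiv c G).symm x

@[simp] lemma elEquiv_el {c : C} {G : Sheaf J (Type u)} (x : G.val.obj (op c)) :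
    elEquiv c G (el x) = x := (elEquiv c G).apply_symm_apply x

@[simp] lemma el_elEquiv {c : C} {G : Sheaf J (Type u)} (φ : ay J c ⟶ G) :
    el (elEquiv c G φ) = φ := (elEquiv c G).symm_apply_apply φ

lemma elEquiv_comp {c : C} {G G' : Sheaf J (Type u)} (φ : ay J c ⟶ G) (g : G ⟶ G') :
    elEquiv c G' (φ ≫ g) = g.hom.app (op c) (elEquiv c G φ) := by
  simp only [elEquiv, Equiv.trans_apply]
  rw [Adjunction.homEquiv_naturality_right]
  exact yonedaEquiv_comp _ _

lemma el_comp {c : C} {G G' : Sheaf J (Type u)} (x : G.val.obj (op c)) (g : G ⟶ G') :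
    el x ≫ g = el (g.hom.app (op c) x) := by
  apply (elEquiv c G').injective
  rw [elEquiv_comp]; simp

lemma elEquiv_ay_map {c c' : C} (h : c' ⟶ c) {G : Sheaf J (Type u)} (φ : ay J c ⟶ G) :
    elEquiv c' G ((presheafToSheaf J (Type u)).map (yoneda.map h) ≫ φ)
      = G.val.map h.op (elEquiv c G φ) := by
  simp only [elEquiv, Equiv.trans_apply]
  rw [Adjunction.homEquiv_naturality_left]
  exact (yonedaEquiv_naturality _ _).symm

lemma ay_map_el {c c' : C} (h : c' ⟶ c) {G : Sheaf J (Type u)} (x : G.val.obj (op c)) :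
    (presheafToSheaf J (Type u)).map (yoneda.map h) ≫ el x = el (G.val.map h.op x) := by
  apply (elEquiv c' G).injective
  rw [elEquiv_ay_map]; simp

lemma hom_ext_el {G G' : Sheaf J (Type u)} {φ ψ : G ⟶ G'}
    (H : ∀ (c : C) (x : G.val.obj (op c)), el x ≫ φ = el x ≫ ψ) : φ = ψ := by
  apply Sheaf.hom_ext
  ext c x
  induction c using Opposite.rec with
  | op c =>
    have h1 := H c x
    rw [el_comp, el_comp] at h1
    have := congrArg (elEquiv c G') h1
    simpa using this

/-- A family of endomorphisms of the sheafified representables, natural with respect to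
all sheaf morphisms between them. -/
structure NatFam (J : GrothendieckTopology C) where
  θ : ∀ c : C, ay J c ⟶ ay J c
  nat : ∀ {c c' : C} (g : ay J c ⟶ ay J c'), g ≫ θ c' = θ c ≫ g

/-- Extension of a natural family to an endomorphism of an arbitrary sheaf. -/
noncomputable def extHom (t : NatFam J) (G : Sheaf J (Type u)) : G ⟶ G :=
  ⟨{ app := fun c => TypeCat.ofHom (fun x =>
         elEquiv c.unop G (t.θ c.unop ≫ el (show G.val.obj (op c.unop) from x)))
     naturality := by
       intro c c' f
       ext x
       show elEquiv c'.unop G (t.θ c'.unop ≫ el (G.val.map f x))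
          = G.val.map f (elEquiv c.unop G (t.θ c.unop ≫ el x))
       have h1 : (f.unop).op = f := rfl
       rw [← h1, ← elEquiv_ay_map f.unop (t.θ c.unop ≫ el x)]
       rw [← Category.assoc, t.nat ((presheafToSheaf J (Type u)).map (yoneda.map f.unop))]
       rw [Category.assoc, ay_map_el f.unop x, h1] }⟩

lemma el_extHom (t : NatFam J) {G : Sheaf J (Type u)} {c : C} (x : G.val.obj (op c)) :
    el x ≫ extHom t G = t.θ c ≫ el x := by
  rw [el_comp]
  show el (elEquiv c G (t.θ c ≫ el x)) = _
  simp

lemma extHom_unique (t : NatFam J) {G : Sheaf J (Type u)} (φ : G ⟶ G)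
    (H : ∀ (c : C) (x : G.val.obj (op c)), el x ≫ φ = t.θ c ≫ el x) : φ = extHom t G := by
  apply hom_ext_el
  intro c x
  rw [H c x, el_extHom]

lemma extHom_naturality (t : NatFam J) {G G' : Sheaf J (Type u)} (g : G ⟶ G') :
    extHom t G ≫ g = g ≫ extHom t G' := by
  apply hom_ext_el
  intro c x
  rw [← Category.assoc, el_extHom, Category.assoc, ← Category.assoc (el x) g, el_comp, el_extHom]

lemma extHom_comp (t t' : NatFam J) (G : Sheaf J (Type u)) :
    extHom t G ≫ extHom t' G
      = extHom ⟨fun c => t.θ c ≫ t'.θ c, by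
          intro c c' g
          rw [← Category.assoc, t.nat g, Category.assoc, t'.nat g, ← Category.assoc]⟩ G := by
  apply hom_ext_el
  intro c x
  rw [← Category.assoc, el_extHom, Category.assoc, el_extHom, ← Category.assoc, el_extHom]

lemma extHom_id (G : Sheaf J (Type u)) :
    extHom (J := J) ⟨fun _ => 𝟙 _, by intro c c' g; simp⟩ G = 𝟙 G := by
  symm
  apply extHom_unique
  intro c x
  simp

lemma extHom_congr {t t' : NatFam J} (h : ∀ c, t.θ c = t'.θ c) (G : Sheaf J (Type u)) :
    extHom t G = extHom t' G := by
  apply extHom_unique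
  intro c x
  rw [el_extHom, h c]

lemma extHom_eq_id {t : NatFam J} (h : ∀ c, t.θ c = 𝟙 _) (G : Sheaf J (Type u)) :
    extHom t G = 𝟙 G := by
  symm
  apply extHom_unique
  intro c x
  rw [h c]
  simp

lemma extHom_ay (t : NatFam J) (c : C) : extHom t (ay J c) = t.θ c := by
  symm
  apply extHom_unique
  intro c' x
  exact t.nat (el x)



end SheafStuff


end IsotropyAux

namespace IsotropyAux

section Main

variable {C : Type u} [SmallCategory C] {J : GrothendieckTopology C} (F : Sheaf J (Type u))

instance instHBC : HasBinaryCoproducts (Sheaf J (Type u)) :=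
  @hasColimitsOfShape_discrete _ _
    (FinitaryExtensive.hasFiniteCoproducts (C := Sheaf J (Type u))) WalkingPair inferInstance

/-- The test object `F ⟶ F ⨿ G` in the under category. -/
noncomputable def PG (G : Sheaf J (Type u)) : Under F :=
  Under.mk (coprod.inl : F ⟶ F ⨿ G)

/-- Component of a natural transformation of the forgetful functor at the test object. -/
noncomputable def appPG (σ : Under.forget F ⟶ Under.forget F) (G : Sheaf J (Type u)) :
    F ⨿ G ⟶ F ⨿ G :=
  σ.app (PG F G)

lemma appPG_comm (σ : Under.forget F ⟶ Under.forget F) {G G' : Sheaf J (Type u)} (g : G ⟶ G') :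
    coprod.map (𝟙 F) g ≫ appPG F σ G' = appPG F σ G ≫ coprod.map (𝟙 F) g := by
  have := σ.naturality (show PG F G ⟶ PG F G' from Under.homMk (coprod.map (𝟙 F) g) (by simp [PG]))
  exact this

lemma el_app (σ : Under.forget F ⟶ Under.forget F) (X : Under F) {c : C}
    (x : X.right.val.obj (op c)) :
    el x ≫ σ.app X
      = coprod.inr ≫ appPG F σ (ay J c) ≫ coprod.desc X.hom (el x) := by
  have := σ.naturality (show PG F (ay J c) ⟶ X from
    Under.homMk (coprod.desc X.hom (el x)) (by exact coprod.inl_desc _ _))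
  have h2 := congrArg (fun q => (coprod.inr : ay J c ⟶ F ⨿ ay J c) ≫ q) this
  rw [← coprod.inr_desc_assoc X.hom (el x) (σ.app X)]
  exact h2

lemma exists_fac (α : Aut (Under.forget F)) (G : Sheaf J (Type u)) :
    ∃ θ : G ⟶ G, coprod.inr ≫ appPG F α.hom G = θ ≫ coprod.inr := by
  have hh : appPG F α.hom G ≫ appPG F α.inv G = 𝟙 _ :=
    α.hom_inv_id_app (PG F G)
  -- the F-part of the inverse lands in F
  have e1 := congrArg (fun q => (coprod.inl : F ⟶ F ⨿ G) ≫ q)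
    (appPG_comm F α.inv (coprod.inl : G ⟶ G ⨿ G))
  have e2 := congrArg (fun q => (coprod.inl : F ⟶ F ⨿ G) ≫ q)
    (appPG_comm F α.inv (coprod.inr : G ⟶ G ⨿ G))
  simp only [coprod.inl_map_assoc, Category.id_comp] at e1 e2
  obtain ⟨ζ, hζ⟩ := factor_inl (coprod.inl ≫ appPG F α.inv G) (by
    rw [Category.assoc, Category.assoc, ← e1, ← e2])
  exact factor_inr _ _ hh ζ (by rw [← hζ])

/-- The extracted natural family of an isotropy element. -/
noncomputable def thetaOf (α : Aut (Under.forget F)) (G : Sheaf J (Type u)) : G ⟶ G :=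
  (exists_fac F α G).choose

lemma thetaOf_spec (α : Aut (Under.forget F)) (G : Sheaf J (Type u)) :
    coprod.inr ≫ appPG F α.hom G = thetaOf F α G ≫ coprod.inr :=
  (exists_fac F α G).choose_spec

lemma thetaOf_unique (α : Aut (Under.forget F)) (G : Sheaf J (Type u)) (θ : G ⟶ G)
    (h : coprod.inr ≫ appPG F α.hom G = θ ≫ coprod.inr) : thetaOf F α G = θ := by
  have := (thetaOf_spec F α G).symm.trans h
  exact (cancel_mono (coprod.inr : G ⟶ F ⨿ G)).mp this

lemma thetaOf_nat (α : Aut (Under.forget F)) {G G' : Sheaf J (Type u)} (g : G ⟶ G') :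
    g ≫ thetaOf F α G' = thetaOf F α G ≫ g := by
  have h1 := congrArg (fun q => (coprod.inr : G ⟶ F ⨿ G) ≫ q) (appPG_comm F α.hom g)
  rw [coprod.inr_map_assoc, thetaOf_spec F α G', reassoc_of% (thetaOf_spec F α G),
    coprod.inr_map, ← Category.assoc, ← Category.assoc] at h1
  exact (cancel_mono (coprod.inr : G' ⟶ F ⨿ G')).mp h1

noncomputable def famOf (α : Aut (Under.forget F)) : NatFam J :=
  ⟨fun c => thetaOf F α (ay J c), fun g => thetaOf_nat F α g⟩

/-- Every component of an isotropy element is the canonical extension of its family. -/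
lemma app_eq_extHom (α : Aut (Under.forget F)) (X : Under F) :
    α.hom.app X = extHom (famOf F α) X.right := by
  apply extHom_unique
  intro c x
  have h1 := el_app F α.hom X x
  rw [← Category.assoc, thetaOf_spec, Category.assoc, coprod.inr_desc] at h1
  exact h1

end Main

end IsotropyAux

namespace IsotropyAux

section Assembly

variable {C : Type u} [SmallCategory C] {J : GrothendieckTopology C} (F : Sheaf J (Type u))

abbrev Acat (J : GrothendieckTopology C) := ObjectProperty.FullSubcategory (fun G : Sheaf J (Type u) =>
  ∃ C₀ : C, Nonempty (G ≅ (presheafToSheaf J (Type u)).obj (yoneda.obj C₀)))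

noncomputable def Aobj (c : C) : Acat J := ⟨ay J c, ⟨c, ⟨Iso.refl _⟩⟩⟩

noncomputable def famOfAut (t : Aut (𝟭 (Acat J))) : NatFam J :=
  ⟨fun c => (t.hom.app (Aobj c)).hom,
   fun {c c'} g => by
     have h := congrArg InducedCategory.Hom.hom
       (t.hom.naturality (ObjectProperty.homMk g : Aobj c ⟶ Aobj c'))
     exact h⟩

lemma extHom_A (t : Aut (𝟭 (Acat J))) (X : Acat J) :
    extHom (famOfAut t) X.obj = (t.hom.app X).hom := by
  symm
  apply extHom_unique
  intro c x
  have h := congrArg InducedCategory.Hom.hom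
    (t.hom.naturality (ObjectProperty.homMk (el x) : Aobj c ⟶ X))
  exact h

noncomputable def Psi (t : Aut (𝟭 (Acat J))) : Aut (Under.forget F) where
  hom :=
    { app := fun X => extHom (famOfAut t) X.right
      naturality := fun X Y u => (extHom_naturality (famOfAut t) ((Under.forget F).map u)).symm }
  inv :=
    { app := fun X => extHom (famOfAut t.symm) X.right
      naturality := fun X Y u =>
        (extHom_naturality (famOfAut t.symm) ((Under.forget F).map u)).symm }
  hom_inv_id := by
    ext X : 2
    show extHom (famOfAut t) X.right ≫ extHom (famOfAut t.symm) X.right = 𝟙 _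
    rw [extHom_comp]
    exact extHom_eq_id (fun c => by
      have h := congrArg InducedCategory.Hom.hom (t.hom_inv_id_app (Aobj c))
      exact h) X.right
  inv_hom_id := by
    ext X : 2
    show extHom (famOfAut t.symm) X.right ≫ extHom (famOfAut t) X.right = 𝟙 _
    rw [extHom_comp]
    exact extHom_eq_id (fun c => by
      have h := congrArg InducedCategory.Hom.hom (t.inv_hom_id_app (Aobj c))
      exact h) X.right

noncomputable def Phi (α : Aut (Under.forget F)) : Aut (𝟭 (Acat J)) where
  hom :=
    { app := fun X => ObjectProperty.homMk (thetaOf F α X.obj)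
      naturality := fun X Y g => by apply ObjectProperty.hom_ext; exact thetaOf_nat F α g.hom }
  inv :=
    { app := fun X => ObjectProperty.homMk (thetaOf F α.symm X.obj)
      naturality := fun X Y g => by apply ObjectProperty.hom_ext; exact thetaOf_nat F α.symm g.hom }
  hom_inv_id := by
    ext X : 3
    show thetaOf F α X.obj ≫ thetaOf F α.symm X.obj = 𝟙 X.obj
    apply (cancel_mono (coprod.inr : X.obj ⟶ F ⨿ X.obj)).mp
    have key : appPG F α.hom X.obj ≫ appPG F α.symm.hom X.obj = 𝟙 _ :=
      α.hom_inv_id_app (PG F X.obj)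
    rw [Category.assoc, ← thetaOf_spec F α.symm X.obj, ← Category.assoc,
      ← thetaOf_spec F α X.obj, Category.assoc, key]
    simp
  inv_hom_id := by
    ext X : 3
    show thetaOf F α.symm X.obj ≫ thetaOf F α X.obj = 𝟙 X.obj
    apply (cancel_mono (coprod.inr : X.obj ⟶ F ⨿ X.obj)).mp
    have key : appPG F α.symm.hom X.obj ≫ appPG F α.hom X.obj = 𝟙 _ :=
      α.inv_hom_id_app (PG F X.obj)
    rw [Category.assoc, ← thetaOf_spec F α X.obj, ← Category.assoc,
      ← thetaOf_spec F α.symm X.obj, Category.assoc, key]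
    simp

lemma Psi_Phi (α : Aut (Under.forget F)) : Psi F (Phi F α) = α := by
  apply Iso.ext
  ext X : 2
  show extHom (famOfAut (Phi F α)) X.right = α.hom.app X
  rw [app_eq_extHom F α X]
  exact extHom_congr (t := famOfAut (Phi F α)) (t' := famOf F α) (fun c => rfl) X.right

lemma Phi_Psi (t : Aut (𝟭 (Acat J))) : Phi F (Psi F t) = t := by
  apply Iso.ext
  ext X : 3
  show thetaOf F (Psi F t) X.obj = (t.hom.app X).hom
  rw [← extHom_A t X]
  apply thetaOf_unique
  show coprod.inr ≫ extHom (famOfAut t) (F ⨿ X.obj) = extHom (famOfAut t) X.obj ≫ coprod.inr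
  exact (extHom_naturality (famOfAut t) coprod.inr).symm

lemma Phi_mul (α β : Aut (Under.forget F)) : Phi F (α * β) = Phi F α * Phi F β := by
  apply Iso.ext
  ext X : 3
  show thetaOf F (α * β) X.obj = thetaOf F β X.obj ≫ thetaOf F α X.obj
  apply thetaOf_unique
  show coprod.inr ≫ appPG F β.hom X.obj ≫ appPG F α.hom X.obj = _
  rw [reassoc_of% (thetaOf_spec F β X.obj), thetaOf_spec F α X.obj, ← Category.assoc]

noncomputable def mainEquiv : Aut (Under.forget F) ≃* Aut (𝟭 (Acat J)) where
  toFun := Phi F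
  invFun := Psi F
  left_inv := Psi_Phi F
  right_inv := Phi_Psi F
  map_mul' := Phi_mul F

end Assembly

end IsotropyAux

/-- For an arbitrary small site `(C, J)`, letting `ayC` denote the full
subcategory of `Sh(C, J)` on the sheaves isomorphic to a sheafification of a
representable presheaf, the covariant isotropy group of any sheaf `F`, i.e. the
group of natural automorphisms of the projection functor `F/Sh(C,J) ⥤ Sh(C,J)`,
is isomorphic to `Aut (𝟭 ayC)`. -/
theorem isotropy_of_sheaf_iso_aut_id_ayC {C : Type u} [SmallCategory C]
    (J : GrothendieckTopology C) (F : Sheaf J (Type u)) :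
    Nonempty (Aut (Under.forget F) ≃*
      Aut (𝟭 (ObjectProperty.FullSubcategory (fun G : Sheaf J (Type u) =>
        ∃ C₀ : C, Nonempty (G ≅ (presheafToSheaf J (Type u)).obj (yoneda.obj C₀)))))) :=
  ⟨IsotropyAux.mainEquiv F⟩
end

section
/- Let (𝒞, J) be an arbitrary small site and let ay𝒞 denote the full subcategory of Sh(𝒞, J) on those sheaves isomorphic to the sheafification of a representable presheaf 𝒞(−, C) for some object C of 𝒞. Then the centre of the Grothendieck topos Sh(𝒞, J), i.e. the group Aut(𝟭_{Sh(𝒞, J)}) of natural automorphisms of its identity functor, is isomorphic as a group to Aut(𝟭_{ay𝒞}). -/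
open CategoryTheory Limits Opposite

universe u

noncomputable section

namespace CentreAux

variable {C : Type u} [SmallCategory C] (J : GrothendieckTopology C)

noncomputable abbrev L : (Cᵒᵖ ⥤ Type u) ⥤ Sheaf J (Type u) := presheafToSheaf J (Type u)

abbrev ayC := ObjectProperty.FullSubcategory (fun G : Sheaf J (Type u) =>
    ∃ C₀ : C, Nonempty (G ≅ (presheafToSheaf J (Type u)).obj (yoneda.obj C₀)))

noncomputable def gen (C₀ : C) : ayC J :=
  ⟨(presheafToSheaf J (Type u)).obj (yoneda.obj C₀), C₀, ⟨Iso.refl _⟩⟩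

noncomputable abbrev adj := sheafificationAdjunction J (Type u)

noncomputable abbrev cu (F : Sheaf J (Type u)) : (L J).obj F.val ⟶ F :=
  (adj J).counit.app F

/-- colimit presentation of a sheaf by sheafified representables -/
noncomputable def pres (F : Sheaf J (Type u)) :
    IsColimit ((L J).mapCocone (Presheaf.tautologicalCocone F.val)) :=
  isColimitOfPreserves _ (Presheaf.isColimitTautologicalCocone F.val)

/-- the legs -/
noncomputable def ℓ (F : Sheaf J (Type u)) (j : CostructuredArrow yoneda F.val) :
    (L J).obj (yoneda.obj j.left) ⟶ F :=
  (L J).map j.hom ≫ cu J F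

lemma hom_ext {F Z : Sheaf J (Type u)} {u v : F ⟶ Z}
    (h : ∀ (C₀ : C) (f : (L J).obj (yoneda.obj C₀) ⟶ F), f ≫ u = f ≫ v) : u = v := by
  have : cu J F ≫ u = cu J F ≫ v := by
    apply (pres J F).hom_ext
    intro j
    have := h j.left (ℓ J F j)
    simp only [ℓ, Category.assoc] at this
    exact this
  exact (cancel_epi (cu J F)).1 this

lemma every_hom {F : Sheaf J (Type u)} (C₀ : C) (f : (L J).obj (yoneda.obj C₀) ⟶ F) :
    ∃ j : CostructuredArrow yoneda F.val, ∃ e : j.left = C₀, ℓ J F j = eqToHom (by rw [e]) ≫ f := by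
  refine ⟨CostructuredArrow.mk ((adj J).homEquiv _ F f), rfl, ?_⟩
  rw [eqToHom_refl, Category.id_comp]
  show (L J).map (((adj J).homEquiv _ F) f) ≫ cu J F = f
  rw [← Adjunction.homEquiv_counit, Equiv.symm_apply_apply]

section ext

variable (β : 𝟭 (ayC J) ⟶ 𝟭 (ayC J))

/-- the component of `β` at a standard generator, as a morphism of sheaves -/
def bApp (C₀ : C) :
    (L J).obj (yoneda.obj C₀) ⟶ (L J).obj (yoneda.obj C₀) :=
  (β.app (gen J C₀)).hom

lemma bApp_natural (C₀ C₁ : C)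
    (m : (L J).obj (yoneda.obj C₀) ⟶ (L J).obj (yoneda.obj C₁)) :
    m ≫ bApp J β C₁ = bApp J β C₀ ≫ m :=
  by have h := congrArg InducedCategory.Hom.hom (β.naturality (ObjectProperty.homMk m : gen J C₀ ⟶ gen J C₁)); exact h

/-- cocone used to define the extension -/
noncomputable def extCocone (F : Sheaf J (Type u)) :
    Cocone ((CostructuredArrow.proj yoneda F.val ⋙ yoneda) ⋙ L J) where
  pt := F
  ι :=
    { app := fun j => bApp J β j.left ≫ ℓ J F j
      naturality := fun j j' f => by
        have hleg : ((CostructuredArrow.proj yoneda F.val ⋙ yoneda) ⋙ L J).map f ≫ ℓ J F j'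
            = ℓ J F j := by
          have hw : (CostructuredArrow.proj yoneda F.val ⋙ yoneda).map f ≫ j'.hom = j.hom := by
            exact ((Presheaf.tautologicalCocone F.val).ι.naturality f).trans (Category.comp_id _)
          exact (Category.assoc ((L J).map ((CostructuredArrow.proj yoneda F.val ⋙ yoneda).map f)) ((L J).map j'.hom) (cu J F)).symm.trans
            ((congrArg (· ≫ cu J F) ((L J).map_comp ((CostructuredArrow.proj yoneda F.val ⋙ yoneda).map f) j'.hom).symm).trans
              (congrArg (fun g => (L J).map g ≫ cu J F) hw))
        have hm := bApp_natural J β j.left j'.left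
          (((CostructuredArrow.proj yoneda F.val ⋙ yoneda) ⋙ L J).map f)
        exact (Category.assoc (((CostructuredArrow.proj yoneda F.val ⋙ yoneda) ⋙ L J).map f) (bApp J β j'.left) (ℓ J F j')).symm.trans
          ((congrArg (· ≫ ℓ J F j') hm).trans ((Category.assoc (bApp J β j.left) (((CostructuredArrow.proj yoneda F.val ⋙ yoneda) ⋙ L J).map f) (ℓ J F j')).trans
            ((congrArg (bApp J β j.left ≫ ·) hleg).trans (Category.comp_id (bApp J β j.left ≫ ℓ J F j)).symm))) }

noncomputable def extApp (F : Sheaf J (Type u)) : F ⟶ F :=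
  inv (cu J F) ≫ (pres J F).desc (extCocone J β F)

lemma ℓ_extApp (F : Sheaf J (Type u)) (j : CostructuredArrow yoneda F.val) :
    ℓ J F j ≫ extApp J β F = bApp J β j.left ≫ ℓ J F j := by
  have := (pres J F).fac (extCocone J β F) j
  simp only [extApp, ℓ, Category.assoc]
  exact (congrArg ((L J).map j.hom ≫ ·) (IsIso.hom_inv_id_assoc (cu J F) ((pres J F).desc (extCocone J β F)))).trans this

lemma extApp_comm {F : Sheaf J (Type u)} (C₀ : C) (f : (L J).obj (yoneda.obj C₀) ⟶ F) :
    f ≫ extApp J β F = bApp J β C₀ ≫ f := by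
  obtain ⟨j, e, hj⟩ := every_hom J C₀ f
  subst e
  rw [eqToHom_refl, Category.id_comp] at hj
  rw [← hj]
  exact ℓ_extApp J β F j

noncomputable def extNat : 𝟭 (Sheaf J (Type u)) ⟶ 𝟭 (Sheaf J (Type u)) where
  app F := extApp J β F
  naturality {F G} f := by
    dsimp only [Functor.id_obj, Functor.id_map]
    apply hom_ext J
    intro C₀ h
    rw [← Category.assoc, ← Category.assoc, Category.assoc h f, extApp_comm,
      ← Category.assoc, extApp_comm, Category.assoc]

end ext

lemma extNat_id : extNat J (𝟙 (𝟭 (ayC J))) = 𝟙 (𝟭 (Sheaf J (Type u))) := by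
  refine NatTrans.ext (funext fun F => ?_)
  apply hom_ext J
  intro C₀ h
  simp only [Functor.id_obj] at h ⊢
  show h ≫ extApp J _ F = h ≫ 𝟙 F
  rw [extApp_comm, Category.comp_id]
  show 𝟙 _ ≫ h = h
  rw [Category.id_comp]

lemma bApp_comp (β γ : 𝟭 (ayC J) ⟶ 𝟭 (ayC J)) (C₀ : C) :
    bApp J (β ≫ γ) C₀ = bApp J β C₀ ≫ bApp J γ C₀ := rfl

lemma extNat_comp (β γ : 𝟭 (ayC J) ⟶ 𝟭 (ayC J)) :
    extNat J (β ≫ γ) = extNat J β ≫ extNat J γ := by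
  refine NatTrans.ext (funext fun F => ?_)
  apply hom_ext J
  intro C₀ h
  simp only [Functor.id_obj] at h ⊢
  show h ≫ extApp J _ F = h ≫ extApp J β F ≫ extApp J γ F
  rw [extApp_comm J (β ≫ γ) C₀ h, bApp_comp, Category.assoc]
  conv_rhs => rw [← Category.assoc, extApp_comm J β C₀ h, Category.assoc, extApp_comm J γ C₀ h]

def resNat (α : 𝟭 (Sheaf J (Type u)) ⟶ 𝟭 (Sheaf J (Type u))) : 𝟭 (ayC J) ⟶ 𝟭 (ayC J) where
  app X := ObjectProperty.homMk (α.app X.obj)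
  naturality X Y f := ObjectProperty.hom_ext _ (α.naturality f.hom)

lemma resNat_id : resNat J (𝟙 _) = 𝟙 _ := rfl

lemma resNat_comp (α α' : 𝟭 (Sheaf J (Type u)) ⟶ 𝟭 (Sheaf J (Type u))) :
    resNat J (α ≫ α') = resNat J α ≫ resNat J α' := rfl

lemma res_ext (β : 𝟭 (ayC J) ⟶ 𝟭 (ayC J)) : resNat J (extNat J β) = β := by
  refine NatTrans.ext (funext fun X => ObjectProperty.hom_ext _ ?_)
  obtain ⟨C₀, ⟨e⟩⟩ := X.property
  have h1 : e.inv ≫ extApp J β X.obj = bApp J β C₀ ≫ e.inv := extApp_comm J β C₀ e.inv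
  have h2 : e.inv ≫ (β.app X).hom = bApp J β C₀ ≫ e.inv :=
    by have h := congrArg InducedCategory.Hom.hom (β.naturality (ObjectProperty.homMk e.inv : gen J C₀ ⟶ X)); exact h
  show extApp J β X.obj = (β.app X).hom
  calc extApp J β X.obj = e.hom ≫ (e.inv ≫ extApp J β X.obj) := by simp
  _ = e.hom ≫ (e.inv ≫ (β.app X).hom) := by rw [h1, ← h2]
  _ = _ := by simp

lemma ext_res (α : 𝟭 (Sheaf J (Type u)) ⟶ 𝟭 (Sheaf J (Type u))) : extNat J (resNat J α) = α := by
  refine NatTrans.ext (funext fun F => ?_)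
  apply hom_ext J
  intro C₀ h
  simp only [Functor.id_obj] at h ⊢
  show h ≫ extApp J (resNat J α) F = h ≫ α.app F
  rw [extApp_comm]
  show α.app _ ≫ h = h ≫ α.app F
  exact (α.naturality h).symm

end CentreAux

end

open CentreAux in
/-- For an arbitrary small site `(C, J)`, the centre of the Grothendieck
topos `Sh(C, J)`, i.e. the group of natural automorphisms of its identity functor,
is isomorphic to `Aut (𝟭 ayC)`, where `ayC` is the full subcategory of `Sh(C, J)`
on the sheaves isomorphic to a sheafification of a representable presheaf. -/
theorem centre_of_sheaf_topos_iso_aut_id_ayC {C : Type u} [SmallCategory C]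
    (J : GrothendieckTopology C) :
    Nonempty (Aut (𝟭 (Sheaf J (Type u))) ≃*
      Aut (𝟭 (ObjectProperty.FullSubcategory (fun G : Sheaf J (Type u) =>
        ∃ C₀ : C, Nonempty (G ≅ (presheafToSheaf J (Type u)).obj (yoneda.obj C₀)))))) := by
  refine ⟨{
    toFun := fun α => ⟨resNat J α.hom, resNat J α.inv,
      by rw [← resNat_comp, α.hom_inv_id, resNat_id],
      by rw [← resNat_comp, α.inv_hom_id, resNat_id]⟩
    invFun := fun β => ⟨extNat J β.hom, extNat J β.inv,
      by rw [← extNat_comp, β.hom_inv_id, extNat_id],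
      by rw [← extNat_comp, β.inv_hom_id, extNat_id]⟩
    left_inv := fun α => Iso.ext (ext_res J α.hom)
    right_inv := fun β => Iso.ext (res_ext J β.hom)
    map_mul' := fun α α' => Iso.ext rfl }⟩
end

section
/- Let (𝒞, J) be a small subcanonical site. Then the centre of the Grothendieck topos Sh(𝒞, J), i.e. the group Aut(𝟭_{Sh(𝒞, J)}) of natural automorphisms of its identity functor, is isomorphic as a group to Aut(𝟭_𝒞), the group of natural automorphisms of the identity functor of 𝒞. -/
open CategoryTheory Limits Opposite

universe u

namespace CentreProofAux

variable {C : Type u} [SmallCategory C]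

lemma end_comm (α β : 𝟭 C ⟶ 𝟭 C) : α ≫ β = β ≫ α := by
  apply NatTrans.ext
  funext X
  simpa using β.naturality (α.app X)

/-- Endomorphism of the identity presheaf functor induced by one of `𝟭 C`. -/
def toPsh (α : 𝟭 C ⟶ 𝟭 C) : 𝟭 (Cᵒᵖ ⥤ Type u) ⟶ 𝟭 (Cᵒᵖ ⥤ Type u) where
  app F :=
    { app := fun X => F.map (α.app X.unop).op
      naturality := by
        intro X Y f
        dsimp
        rw [← F.map_comp, ← F.map_comp]
        congr 1
        apply Quiver.Hom.unop_inj
        simpa using (α.naturality f.unop).symm }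
  naturality := by
    intro F G φ
    ext X s
    have := types_congr_hom (φ.naturality (α.app X.unop).op) s
    simpa using this.symm

lemma toPsh_comp (α β : 𝟭 C ⟶ 𝟭 C) : toPsh α ≫ toPsh β = toPsh (β ≫ α) := by
  ext F X s
  simp [toPsh, ← FunctorToTypes.map_comp_apply, ← op_comp]

lemma toPsh_id : toPsh (𝟙 (𝟭 C)) = 𝟙 _ := by
  ext F X s
  simp [toPsh]

variable (J : GrothendieckTopology C)

/-- Endomorphism of the identity of `Sh(C,J)` induced by one of `𝟭 C`. -/
def toSh (α : 𝟭 C ⟶ 𝟭 C) : 𝟭 (Sheaf J (Type u)) ⟶ 𝟭 (Sheaf J (Type u)) where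
  app F := ⟨(toPsh α).app F.obj⟩
  naturality := by
    intro F G φ
    apply Sheaf.hom_ext
    exact (toPsh α).naturality φ.hom

lemma toSh_comp (α β : 𝟭 C ⟶ 𝟭 C) : toSh J α ≫ toSh J β = toSh J (β ≫ α) := by
  apply NatTrans.ext
  funext F
  apply Sheaf.hom_ext
  exact congrFun (congrArg NatTrans.app (toPsh_comp α β)) F.val

lemma toSh_id : toSh J (𝟙 (𝟭 C)) = 𝟙 _ := by
  apply NatTrans.ext
  funext F
  apply Sheaf.hom_ext
  exact congrFun (congrArg NatTrans.app (toPsh_id (C := C))) F.val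

variable (hsub : ∀ X : C, Presieve.IsSheaf J (yoneda.obj X))

/-- The yoneda sheaf. -/
def ySh (X : C) : Sheaf J (Type u) :=
  ⟨yoneda.obj X, (isSheaf_iff_isSheaf_of_type J _).mpr (hsub X)⟩

/-- The component extracted from an endo of the identity of `Sh(C,J)`. -/
def ofShApp (τ : 𝟭 (Sheaf J (Type u)) ⟶ 𝟭 (Sheaf J (Type u))) (X : C) : X ⟶ X :=
  (τ.app (ySh J hsub X)).hom.app (op X) (𝟙 X)

/-- Key density lemma. -/
lemma key (τ : 𝟭 (Sheaf J (Type u)) ⟶ 𝟭 (Sheaf J (Type u))) (F : Sheaf J (Type u))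
    (X : C) (s : F.val.obj (op X)) :
    (τ.app F).hom.app (op X) s = F.val.map (ofShApp J hsub τ X).op s := by
  let φ : ySh J hsub X ⟶ F := ⟨yonedaEquiv.symm s⟩
  have h := τ.naturality φ
  have h' := types_congr_hom (congrArg (fun ψ => ψ.hom.app (op X)) h) (𝟙 X)
  simp only [Functor.id_map, ObjectProperty.FullSubcategory.comp_hom, NatTrans.comp_app,
    types_comp_apply] at h'
  change (τ.app F).hom.app (op X) (φ.hom.app (op X) (𝟙 X)) = φ.hom.app (op X) ((τ.app (ySh J hsub X)).hom.app (op X) (𝟙 X)) at h'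
  have h1 : φ.hom.app (op X) (𝟙 X) = s := by
    simp [φ, yonedaEquiv_symm_app_apply]
    change F.obj.map (𝟙 X).op s = s
    simp
  rw [h1] at h'
  rw [h']
  exact yonedaEquiv_symm_app_apply s (op X) (ofShApp J hsub τ X)

/-- Endomorphism of `𝟭 C` from one of the identity of `Sh(C,J)`. -/
def ofSh (τ : 𝟭 (Sheaf J (Type u)) ⟶ 𝟭 (Sheaf J (Type u))) : 𝟭 C ⟶ 𝟭 C where
  app X := ofShApp J hsub τ X
  naturality := by
    intro X Y f
    dsimp
    have h1 : (τ.app (ySh J hsub Y)).hom.app (op X) f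
        = (yoneda.obj Y).map (ofShApp J hsub τ X).op f :=
      key J hsub τ (ySh J hsub Y) X f
    have h2 : (τ.app (ySh J hsub Y)).hom.app (op X) f = f ≫ ofShApp J hsub τ Y := by
      have := types_congr_hom ((τ.app (ySh J hsub Y)).hom.naturality f.op) (𝟙 Y)
      change (τ.app (ySh J hsub Y)).hom.app (op X) (f ≫ 𝟙 Y) = f ≫ (τ.app (ySh J hsub Y)).hom.app (op Y) (𝟙 Y) at this
      rw [Category.comp_id] at this
      replace this := this.symm
      set_option linter.unnecessarySimpa false in
      simpa [ofShApp] using this.symm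
    simp only [yoneda_obj_obj, yoneda_obj_map, Quiver.Hom.unop_op] at h1
    rw [h2] at h1
    exact h1

lemma ofSh_comp (τ τ' : 𝟭 (Sheaf J (Type u)) ⟶ 𝟭 (Sheaf J (Type u))) :
    ofSh J hsub (τ ≫ τ') = ofSh J hsub τ' ≫ ofSh J hsub τ := by
  apply NatTrans.ext
  funext X
  show ofShApp J hsub (τ ≫ τ') X = ofShApp J hsub τ' X ≫ ofShApp J hsub τ X
  have : ofShApp J hsub (τ ≫ τ') X
      = (τ'.app (ySh J hsub X)).hom.app (op X) (ofShApp J hsub τ X) := by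
    simp [ofShApp, ObjectProperty.FullSubcategory.comp_hom]
    rfl
  rw [this, key J hsub τ' (ySh J hsub X) X (ofShApp J hsub τ X)]
  simp [ySh]
  rfl

lemma ofSh_id : ofSh J hsub (𝟙 (𝟭 (Sheaf J (Type u)))) = 𝟙 (𝟭 C) := by
  apply NatTrans.ext
  funext X
  rfl

lemma ofSh_toSh (α : 𝟭 C ⟶ 𝟭 C) : ofSh J hsub (toSh J α) = α := by
  apply NatTrans.ext
  funext X
  show (yoneda.obj X).map (α.app X).op (𝟙 X) = α.app X
  simp

lemma toSh_ofSh (τ : 𝟭 (Sheaf J (Type u)) ⟶ 𝟭 (Sheaf J (Type u))) :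
    toSh J (ofSh J hsub τ) = τ := by
  apply NatTrans.ext
  funext F
  apply Sheaf.hom_ext
  ext X s
  obtain ⟨X⟩ := X
  exact (key J hsub τ F X s).symm

end CentreProofAux

open CentreProofAux in
/-- For a small subcanonical site `(C, J)`, the centre of the
Grothendieck topos `Sh(C, J)`, i.e. the group of natural automorphisms of its
identity functor, is isomorphic to `Aut (𝟭 C)`. -/
theorem centre_of_sheaf_topos_iso_aut_id {C : Type u} [SmallCategory C]
    (J : GrothendieckTopology C)
    (hsub : ∀ X : C, Presieve.IsSheaf J (yoneda.obj X)) :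
    Nonempty (Aut (𝟭 (Sheaf J (Type u))) ≃* Aut (𝟭 C)) := by
  refine ⟨MulEquiv.symm (MulEquiv.mk' ?_ ?_)⟩
  · exact
    { toFun := fun α =>
        ⟨toSh J α.hom, toSh J α.inv,
          by rw [toSh_comp, α.inv_hom_id, toSh_id],
          by rw [toSh_comp, α.hom_inv_id, toSh_id]⟩
      invFun := fun σ =>
        ⟨ofSh J hsub σ.hom, ofSh J hsub σ.inv,
          by rw [← ofSh_comp, σ.inv_hom_id, ofSh_id],
          by rw [← ofSh_comp, σ.hom_inv_id, ofSh_id]⟩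
      left_inv := fun α => by
        apply Iso.ext
        exact ofSh_toSh J hsub α.hom
      right_inv := fun σ => by
        apply Iso.ext
        exact toSh_ofSh J hsub σ.hom }
  · intro α β
    apply Iso.ext
    show toSh J (β.hom ≫ α.hom) = toSh J β.hom ≫ toSh J α.hom
    rw [toSh_comp, end_comm]
end

section
/- Let 𝒞 be a small category. For every presheaf F : 𝒞ᵒᵖ ⥤ Type, the covariant isotropy group of F in the presheaf category 𝒞ᵒᵖ ⥤ Type, i.e. the group Aut(Under.forget F) of natural automorphisms of the projection functor from the under category F/(𝒞ᵒᵖ ⥤ Type) to 𝒞ᵒᵖ ⥤ Type, is isomorphic as a group to Aut(𝟭_𝒞), the group of natural automorphisms of the identity functor of 𝒞. -/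
open CategoryTheory Limits Opposite

universe u

namespace Iso11

set_option linter.unusedVariables false
set_option linter.unusedTactic false

variable {C : Type u} [SmallCategory C]

/-- Pointwise binary sum of presheaves. -/
@[reducible] def S (G H : Cᵒᵖ ⥤ Type u) : Cᵒᵖ ⥤ Type u where
  obj c := G.obj c ⊕ H.obj c
  map f := TypeCat.ofHom (Sum.map (G.map f) (H.map f))
  map_id c := by ext x; cases x <;> simp
  map_comp f g := by ext x; cases x <;> simp

def sInl (G H : Cᵒᵖ ⥤ Type u) : G ⟶ S G H where
  app c := TypeCat.ofHom (Sum.inl : G.obj c → (S G H).obj c)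
  naturality _ _ _ := rfl

@[simp] lemma S_map (G H : Cᵒᵖ ⥤ Type u) {c c' : Cᵒᵖ} (f : c ⟶ c') (x : (S G H).obj c) :
    (S G H).map f x = Sum.map (G.map f) (H.map f) x := rfl

@[simp] lemma sInl_app (G H : Cᵒᵖ ⥤ Type u) (c : Cᵒᵖ) (x : G.obj c) :
    (sInl G H).app c x = Sum.inl x := rfl

def sInr (G H : Cᵒᵖ ⥤ Type u) : H ⟶ S G H where
  app c := TypeCat.ofHom (Sum.inr : H.obj c → (S G H).obj c)
  naturality _ _ _ := rfl

@[simp] lemma sInr_app (G H : Cᵒᵖ ⥤ Type u) (c : Cᵒᵖ) (x : H.obj c) :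
    (sInr G H).app c x = Sum.inr x := rfl

def sMap {G G' H H' : Cᵒᵖ ⥤ Type u} (g : G ⟶ G') (h : H ⟶ H') :
    S G H ⟶ S G' H' where
  app c := TypeCat.ofHom (X := (S G H).obj c) (Y := (S G' H').obj c) (Sum.map (g.app c) (h.app c))
  naturality c c' f := by
    apply ConcreteCategory.hom_ext; intro x
    cases x <;> exact congrArg _ (NatTrans.naturality_apply _ _ _)

@[simp] lemma sMap_app {G G' H H' : Cᵒᵖ ⥤ Type u} (g : G ⟶ G') (h : H ⟶ H') (c : Cᵒᵖ)
    (x : (S G H).obj c) : (sMap g h).app c x = Sum.map (g.app c) (h.app c) x := rfl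

def sDesc {G H K : Cᵒᵖ ⥤ Type u} (g : G ⟶ K) (h : H ⟶ K) : S G H ⟶ K where
  app c := TypeCat.ofHom (X := (S G H).obj c) (Sum.elim (g.app c) (h.app c))
  naturality c c' f := by
    apply ConcreteCategory.hom_ext; intro x
    cases x
    exacts [NatTrans.naturality_apply g f _, NatTrans.naturality_apply h f _]

@[simp] lemma sDesc_app {G H K : Cᵒᵖ ⥤ Type u} (g : G ⟶ K) (h : H ⟶ K) (c : Cᵒᵖ)
    (x : (S G H).obj c) : (sDesc g h).app c x = Sum.elim (g.app c) (h.app c) x := rfl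

variable (F : Cᵒᵖ ⥤ Type u)

/-- The component of `θ` at the object `(F ⊔ G, inl)` of the under category. -/
def Th (θ : Aut (Under.forget F)) (G : Cᵒᵖ ⥤ Type u) : S F G ⟶ S F G :=
  θ.hom.app (Under.mk (sInl F G))

lemma theta_inj (θ : Aut (Under.forget F)) (X : Under F) (c : Cᵒᵖ) :
    Function.Injective ((θ.hom.app X).app c) := by
  have h : θ.hom.app X ≫ θ.inv.app X = 𝟙 _ := by
    rw [← NatTrans.comp_app, θ.hom_inv_id]; rfl
  intro x y hxy
  have hx := types_congr_hom (NatTrans.congr_app h c) x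
  have hy := types_congr_hom (NatTrans.congr_app h c) y
  simp only [NatTrans.comp_app, ConcreteCategory.comp_apply, NatTrans.id_app, types_id_apply] at hx hy
  rw [← hx, ← hy, hxy]

lemma key (θ : Aut (Under.forget F)) (G : Cᵒᵖ ⥤ Type u) (c : Cᵒᵖ) (x : G.obj c) :
    ∃ y, (Th F θ G).app c (Sum.inr x) = Sum.inr y := by
  rcases h : (Th F θ G).app c (Sum.inr x) with z | y
  · exfalso
    let m1 : Under.mk (sInl F G) ⟶ Under.mk (sInl F (S G G)) :=
      Under.homMk (sMap (𝟙 F) (sInl G G)) (by ext c a; rfl)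
    let m2 : Under.mk (sInl F G) ⟶ Under.mk (sInl F (S G G)) :=
      Under.homMk (sMap (𝟙 F) (sInr G G)) (by ext c a; rfl)
    have h1 : (θ.hom.app (Under.mk (sInl F (S G G)))).app c (Sum.inr (Sum.inl x))
        = Sum.map id (Sum.inl : G.obj c → (S G G).obj c)
          ((θ.hom.app (Under.mk (sInl F G))).app c (Sum.inr x)) :=
      types_congr_hom (NatTrans.congr_app (θ.hom.naturality m1) c) (Sum.inr x)
    have h2 : (θ.hom.app (Under.mk (sInl F (S G G)))).app c (Sum.inr (Sum.inr x))
        = Sum.map id (Sum.inr : G.obj c → (S G G).obj c)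
          ((θ.hom.app (Under.mk (sInl F G))).app c (Sum.inr x)) :=
      types_congr_hom (NatTrans.congr_app (θ.hom.naturality m2) c) (Sum.inr x)
    rw [show (θ.hom.app (Under.mk (sInl F G))).app c (Sum.inr x) = Sum.inl z from h] at h1 h2
    simp only [Sum.map_inl] at h1 h2
    have := theta_inj F θ (Under.mk (sInl F (S G G))) c (h1.trans h2.symm)
    simp at this
  · exact ⟨y, rfl⟩

/-- The induced endomorphism of `G`. -/
def e (θ : Aut (Under.forget F)) (G : Cᵒᵖ ⥤ Type u) (c : Cᵒᵖ) (x : G.obj c) : G.obj c :=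
  Sum.elim (fun _ => x) id ((Th F θ G).app c (Sum.inr x))

lemma e_spec (θ : Aut (Under.forget F)) (G : Cᵒᵖ ⥤ Type u) (c : Cᵒᵖ) (x : G.obj c) :
    (Th F θ G).app c (Sum.inr x) = Sum.inr (e F θ G c x) := by
  obtain ⟨y, h⟩ := key F θ G c x
  simp [e, h]

/-- Naturality of `e` in `c`. -/
lemma e_nat_c (θ : Aut (Under.forget F)) (G : Cᵒᵖ ⥤ Type u) {c c' : Cᵒᵖ} (f : c ⟶ c')
    (x : G.obj c) : e F θ G c' (G.map f x) = G.map f (e F θ G c x) := by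
  apply Sum.inr_injective (α := F.obj c')
  have := types_congr_hom ((Th F θ G).naturality f) (Sum.inr x)
  simp only [S_map, ConcreteCategory.comp_apply, TypeCat.ofHom_apply, Sum.map_inr] at this
  rw [← e_spec, this, e_spec]
  simp

/-- Naturality of `e` in `G`. -/
lemma e_nat_G (θ : Aut (Under.forget F)) {G G' : Cᵒᵖ ⥤ Type u} (g : G ⟶ G') (c : Cᵒᵖ)
    (x : G.obj c) : g.app c (e F θ G c x) = e F θ G' c (g.app c x) := by
  apply Sum.inr_injective (α := F.obj c)
  let m : Under.mk (sInl F G) ⟶ Under.mk (sInl F G') :=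
    Under.homMk (sMap (𝟙 F) g) (by ext c a; rfl)
  have h : (Th F θ G').app c (Sum.inr (g.app c x))
      = Sum.map id (g.app c) ((Th F θ G).app c (Sum.inr x)) :=
    types_congr_hom (NatTrans.congr_app (θ.hom.naturality m) c) (Sum.inr x)
  rw [e_spec, e_spec] at h
  simpa using h.symm

lemma e_symm_e (θ : Aut (Under.forget F)) (G : Cᵒᵖ ⥤ Type u) (c : Cᵒᵖ) (x : G.obj c) :
    e F θ.symm G c (e F θ G c x) = x := by
  apply Sum.inr_injective (α := F.obj c)
  rw [← e_spec F θ.symm, ← e_spec F θ]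
  have h : (Th F θ G) ≫ (Th F θ.symm G) = 𝟙 _ := by
    show θ.hom.app _ ≫ θ.inv.app _ = _
    rw [← NatTrans.comp_app, θ.hom_inv_id]; rfl
  have := types_congr_hom (NatTrans.congr_app h c) (Sum.inr x)
  simpa using this

/-- The candidate central automorphism component. -/
def uC (θ : Aut (Under.forget F)) (a : C) : a ⟶ a :=
  e F θ (yoneda.obj a) (op a) (𝟙 a)

lemma uC_nat (θ : Aut (Under.forget F)) {a b : C} (f : a ⟶ b) :
    uC F θ a ≫ f = f ≫ uC F θ b := by
  have h1 := e_nat_G F θ (yoneda.map f) (op a) (𝟙 a)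
  have h2 := e_nat_c F θ (yoneda.obj b) (f.op : op b ⟶ op a) (𝟙 b)
  simp only [yoneda_map_app, TypeCat.ofHom_apply, Category.id_comp] at h1
  simp only [yoneda_obj_map, TypeCat.ofHom_apply, Quiver.Hom.unop_op, Category.comp_id] at h2
  exact h1.trans h2

lemma uC_comp_symm (θ : Aut (Under.forget F)) (a : C) :
    uC F θ a ≫ uC F θ.symm a = 𝟙 a := by
  have h := e_nat_c F θ.symm (yoneda.obj a) ((uC F θ a).op : op a ⟶ op a) (𝟙 a)
  simp only [yoneda_obj_map, TypeCat.ofHom_apply, Quiver.Hom.unop_op, Category.comp_id] at h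
  have h' : e F θ.symm (yoneda.obj a) (op a) (uC F θ a) = 𝟙 a := e_symm_e F θ _ _ _
  rw [h'] at h
  exact h.symm

/-- The map from isotropy to `Aut (𝟭 C)`. -/
def Psi (θ : Aut (Under.forget F)) : Aut (𝟭 C) where
  hom := { app := fun a => uC F θ a,
           naturality := fun a b f => by simpa using (uC_nat F θ f).symm }
  inv := { app := fun a => uC F θ.symm a,
           naturality := fun a b f => by simpa using (uC_nat F θ.symm f).symm }
  hom_inv_id := by ext a; simpa using uC_comp_symm F θ a
  inv_hom_id := by
    ext a
    have := uC_comp_symm F θ.symm a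
    rw [Iso.symm_symm_eq θ] at this
    simpa using this

/-- The endomorphism of a presheaf induced by a central element. -/
@[simps] def nu (w : 𝟭 C ⟶ 𝟭 C) (G : Cᵒᵖ ⥤ Type u) : G ⟶ G where
  app c := G.map ((w.app c.unop).op)
  naturality c c' f := by
    simp only [← Functor.map_comp]
    congr 1
    have := w.naturality f.unop
    simp only [Functor.id_obj, Functor.id_map] at this
    rw [← Quiver.Hom.op_unop f, ← op_comp, ← op_comp, this]

/-- The map from `Aut (𝟭 C)` to isotropy. -/
def Phi (w : Aut (𝟭 C)) : Aut (Under.forget F) where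
  hom := { app := fun X => nu w.hom X.right,
           naturality := fun X Y f => by
             ext c x
             exact (NatTrans.naturality_apply f.right _ x).symm }
  inv := { app := fun X => nu w.inv X.right,
           naturality := fun X Y f => by
             ext c x
             exact (NatTrans.naturality_apply f.right _ x).symm }
  hom_inv_id := by
    ext X c x
    change X.right.obj c at x
    show X.right.map (w.inv.app c.unop).op (X.right.map (w.hom.app c.unop).op x) = x
    simp only [TypeCat.Fun.toFun_apply, NatTrans.comp_app, ConcreteCategory.comp_apply, nu_app,
      ← Functor.map_comp_apply]
    rw [← op_comp]
    have : w.inv.app c.unop ≫ w.hom.app c.unop = 𝟙 c.unop := by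
      rw [← NatTrans.comp_app, w.inv_hom_id]; rfl
    rw [this]
    simp
  inv_hom_id := by
    ext X c x
    change X.right.obj c at x
    show X.right.map (w.hom.app c.unop).op (X.right.map (w.inv.app c.unop).op x) = x
    simp only [TypeCat.Fun.toFun_apply, NatTrans.comp_app, ConcreteCategory.comp_apply, nu_app,
      ← Functor.map_comp_apply]
    rw [← op_comp]
    have : w.hom.app c.unop ≫ w.inv.app c.unop = 𝟙 c.unop := by
      rw [← NatTrans.comp_app, w.hom_inv_id]; rfl
    rw [this]
    simp

lemma e_Phi (w : Aut (𝟭 C)) (G : Cᵒᵖ ⥤ Type u) (c : Cᵒᵖ) (x : G.obj c) :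
    e F (Phi F w) G c x = G.map ((w.hom.app c.unop).op) x := by
  simp [e, Th, Phi]

lemma Psi_Phi (w : Aut (𝟭 C)) : Psi F (Phi F w) = w := by
  apply Iso.ext
  ext a
  show uC F (Phi F w) a = w.hom.app a
  rw [uC, e_Phi]
  simp

lemma theta_eq_e (θ : Aut (Under.forget F)) (X : Under F) (c : Cᵒᵖ) (x : X.right.obj c) :
    (θ.hom.app X).app c x = e F θ X.right c x := by
  let m : Under.mk (sInl F X.right) ⟶ X :=
    Under.homMk (sDesc X.hom (𝟙 X.right)) (by ext c a; rfl)
  have h : (θ.hom.app X).app c x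
      = Sum.elim (X.hom.app c) id ((Th F θ X.right).app c (Sum.inr x)) :=
    types_congr_hom (NatTrans.congr_app (θ.hom.naturality m) c) (Sum.inr x)
  rw [e_spec] at h
  simpa using h

lemma e_eq_rep (θ : Aut (Under.forget F)) (G : Cᵒᵖ ⥤ Type u) (c : Cᵒᵖ) (x : G.obj c) :
    e F θ G c x = G.map ((uC F θ c.unop).op) x := by
  have h := e_nat_G F θ (yonedaEquiv.symm x : yoneda.obj c.unop ⟶ G) (op c.unop) (𝟙 c.unop)
  simp only [Opposite.op_unop] at h
  have hx : (yonedaEquiv.symm x).app c (𝟙 c.unop) = x := by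
    show G.map (𝟙 c.unop).op x = x
    simp
  have hux : (yonedaEquiv.symm x).app c (uC F θ c.unop) = G.map ((uC F θ c.unop).op) x := rfl
  rw [hx] at h
  rw [show e F θ (yoneda.obj c.unop) c (𝟙 c.unop) = uC F θ c.unop from rfl, hux] at h
  exact h.symm

lemma Phi_Psi (θ : Aut (Under.forget F)) : Phi F (Psi F θ) = θ := by
  apply Iso.ext
  ext X c x
  show X.right.map ((uC F θ c.unop).op) x = (θ.hom.app X).app c x
  exact ((theta_eq_e F θ X c x).trans (e_eq_rep F θ X.right c x)).symm

noncomputable def mainEquiv : Aut (Under.forget F) ≃* Aut (𝟭 C) :=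
  MulEquiv.symm
    { toFun := Phi F
      invFun := Psi F
      left_inv := Psi_Phi F
      right_inv := Phi_Psi F
      map_mul' := fun w v => by
        apply Iso.ext
        ext X c x
        have hcomm : v.hom.app c.unop ≫ w.hom.app c.unop
            = w.hom.app c.unop ≫ v.hom.app c.unop := by
          simpa using w.hom.naturality (v.hom.app c.unop)
        show X.right.map (((w * v).hom).app c.unop).op x
            = X.right.map ((w.hom.app c.unop).op) (X.right.map ((v.hom.app c.unop).op) x)
        rw [show (w * v).hom = v.hom ≫ w.hom from rfl]
        simp only [NatTrans.comp_app]
        rw [hcomm, op_comp]; exact X.right.map_comp_apply _ _ x }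

end Iso11

/-- For a small category `C` and any presheaf `F : Cᵒᵖ ⥤ Type`, the
covariant isotropy group of `F` in the presheaf category, i.e. the group of natural
automorphisms of the projection functor `F/(Cᵒᵖ ⥤ Type) ⥤ (Cᵒᵖ ⥤ Type)`, is
isomorphic to `Aut (𝟭 C)`. -/
theorem isotropy_of_presheaf_iso_aut_id {C : Type u} [SmallCategory C]
    (F : Cᵒᵖ ⥤ Type u) :
    Nonempty (Aut (Under.forget F) ≃* Aut (𝟭 C)) := by
  exact ⟨Iso11.mainEquiv F⟩
end

section
/- Let (𝒞, J) be an arbitrary small site and let F be a J-sheaf of sets. For every ψ ∈ Aut(𝟭_𝒞), the family assigning to each sheaf morphism γ : F ⟶ G the endomorphism of G with component at each object C of 𝒞 given by G(ψ_C) : G(C) → G(C) is a well-defined natural automorphism of the projection functor from the under category F/Sh(𝒞, J) to Sh(𝒞, J); moreover, the resulting assignment Aut(𝟭_𝒞) → Aut(Under.forget F) is a group homomorphism. -/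
open CategoryTheory Limits Opposite

universe u

namespace Aux12

variable {C : Type u} [SmallCategory C]

/-- The presheaf endomorphism induced by `ψ`. -/
def τ (ψ : Aut (𝟭 C)) (P : Cᵒᵖ ⥤ Type u) : P ⟶ P where
  app X := P.map (ψ.hom.app X.unop).op
  naturality X Y f := by
    dsimp
    rw [← P.map_comp, ← P.map_comp]
    apply congrArg P.map
    apply Quiver.Hom.unop_inj
    simpa using (ψ.hom.naturality f.unop).symm

@[simp] lemma τ_app (ψ : Aut (𝟭 C)) (P : Cᵒᵖ ⥤ Type u) (X : Cᵒᵖ) :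
    (τ ψ P).app X = P.map (ψ.hom.app X.unop).op := rfl

lemma τ_mul (ψ φ : Aut (𝟭 C)) (P : Cᵒᵖ ⥤ Type u) :
    τ (ψ * φ) P = τ φ P ≫ τ ψ P := by
  apply NatTrans.ext
  funext X
  show P.map ((ψ * φ).hom.app X.unop).op
      = P.map (φ.hom.app X.unop).op ≫ P.map (ψ.hom.app X.unop).op
  rw [← P.map_comp]
  apply congrArg P.map
  apply Quiver.Hom.unop_inj
  show (ψ * φ).hom.app X.unop = ψ.hom.app X.unop ≫ φ.hom.app X.unop
  have h : (ψ * φ).hom.app X.unop = φ.hom.app X.unop ≫ ψ.hom.app X.unop := rfl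
  rw [h]
  simpa using ψ.hom.naturality (φ.hom.app X.unop)

lemma τ_one (P : Cᵒᵖ ⥤ Type u) : τ (1 : Aut (𝟭 C)) P = 𝟙 P := by
  apply NatTrans.ext
  funext X
  show P.map ((1 : Aut (𝟭 C)).hom.app X.unop).op = 𝟙 (P.obj X)
  have : ((1 : Aut (𝟭 C)).hom.app X.unop) = 𝟙 X.unop := rfl
  rw [this]
  simp

variable (J : GrothendieckTopology C) (F : Sheaf J (Type u))

/-- The component at `g` of the induced automorphism. -/
def σ (ψ : Aut (𝟭 C)) (g : Under F) : g.right ≅ g.right where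
  hom := ⟨τ ψ g.right.val⟩
  inv := ⟨τ ψ⁻¹ g.right.val⟩
  hom_inv_id := by
    apply ObjectProperty.hom_ext
    show τ ψ g.right.val ≫ τ ψ⁻¹ g.right.val = 𝟙 g.right.val
    rw [← τ_mul, inv_mul_cancel, τ_one]
  inv_hom_id := by
    apply ObjectProperty.hom_ext
    show τ ψ⁻¹ g.right.val ≫ τ ψ g.right.val = 𝟙 g.right.val
    rw [← τ_mul, mul_inv_cancel, τ_one]

/-- The induced automorphism of the projection functor. -/
def Φ (ψ : Aut (𝟭 C)) : Aut (Under.forget F) :=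
  NatIso.ofComponents (fun g => σ J F ψ g) (by
    intro g g' k
    apply ObjectProperty.hom_ext
    apply NatTrans.ext
    funext X
    show k.right.hom.app X ≫ g'.right.val.map (ψ.hom.app X.unop).op
        = g.right.val.map (ψ.hom.app X.unop).op ≫ k.right.hom.app X
    exact (k.right.hom.naturality _).symm)

end Aux12

/-- For an arbitrary small site `(C, J)` and a sheaf `F`, each
`ψ ∈ Aut (𝟭 C)` gives rise to a natural automorphism of the projection functor
`F/Sh(C,J) ⥤ Sh(C,J)` whose component at a sheaf morphism `γ : F ⟶ G` has
component `G(ψ_C)` at each object `C`, and the resulting assignment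
`Aut (𝟭 C) → Aut (Under.forget F)` is a group homomorphism. -/
theorem aut_id_to_isotropy_hom {C : Type u} [SmallCategory C]
    (J : GrothendieckTopology C) (F : Sheaf J (Type u)) :
    ∃ h : Aut (𝟭 C) →* Aut (Under.forget F),
      ∀ (ψ : Aut (𝟭 C)) (g : Under F) (C₀ : C),
        ((h ψ).hom.app g).hom.app (op C₀) = g.right.obj.map (ψ.hom.app C₀).op := by
  refine ⟨MonoidHom.mk' (Aux12.Φ J F) ?_, ?_⟩
  · intro ψ φ
    apply Iso.ext
    apply NatTrans.ext
    funext g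
    apply ObjectProperty.hom_ext
    show Aux12.τ (ψ * φ) g.right.val = Aux12.τ φ g.right.val ≫ Aux12.τ ψ g.right.val
    exact Aux12.τ_mul ψ φ g.right.val
  · intro ψ g C₀
    rfl
end

section
/- Let (𝒞, J) be a small site in which no object is covered by the empty sieve, let F be a J-sheaf of sets, let f : D → C be a morphism of 𝒞, and let a ∈ F(D). Then there exist a J-sheaf G, a sheaf morphism η : F ⟶ G, and an element y ∈ G(C) such that G(f)(y) ≠ η_D(a); that is, the restriction map G(f) : G(C) → G(D) is not constantly equal to η_D(a). -/
open CategoryTheory Limits Opposite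

universe u

/-- Let `(C, J)` be a small site in which no object is covered by the
empty sieve, `F` a sheaf, `f : D ⟶ C₀` a morphism of `C` and `a ∈ F(D)`. Then there
are a sheaf `G`, a sheaf morphism `η : F ⟶ G` and `y ∈ G(C₀)` with
`G(f)(y) ≠ η_D(a)`; i.e. `G(f)` is not constantly `η_D(a)`. -/
theorem restriction_not_constant {C : Type u} [SmallCategory C]
    (J : GrothendieckTopology C)
    (hJ : ∀ X : C, (⊥ : Sieve X) ∉ J X)
    (F : Sheaf J (Type u)) {D C₀ : C} (f : D ⟶ C₀) (a : F.val.obj (op D)) :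
    ∃ (G : Sheaf J (Type u)) (η : F ⟶ G) (y : G.val.obj (op C₀)),
      G.val.map f.op y ≠ η.hom.app (op D) a := by
  -- The sheaf of `J`-closed sieves.
  refine ⟨⟨(Functor.closedSieves J).toFunctor,
      (isSheaf_iff_isSheaf_of_type J _).mpr (classifier_isSheaf J)⟩,
    -- the constant morphism at the top sieve
    ⟨{ app := fun X => ↾fun _ => ⟨(⊤ : Sieve X.unop), fun Y g _ => trivial⟩
       naturality := fun X Y g => by
         ext x
         apply Subtype.ext
         simp [Functor.closedSieves, Subfunctor.toFunctor]
         exact Sieve.pullback_top.symm }⟩,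
    -- y is the closure of the bottom sieve
    ⟨J.close ⊥, J.close_isClosed ⊥⟩, ?_⟩
  intro h
  apply hJ D
  have := congrArg (fun s => s.1.arrows (𝟙 D)) h
  simp only [Functor.closedSieves] at this
  change (J.close ⊥).pullback f (𝟙 D) = (⊤ : Sieve D) (𝟙 D) at this
  have hmem : (J.close (⊥ : Sieve C₀)).pullback f (𝟙 D) := by
    rw [this]; trivial
  have : J.Covers (⊥ : Sieve C₀) (𝟙 D ≫ f) := hmem
  rw [J.covers_iff] at this
  simpa using this
end

section
/- Let (𝒞, J) be a small subcanonical site in which no object is covered by the empty sieve, let F be a J-sheaf of sets, and let f, g : D → C be parallel morphisms of 𝒞 with f ≠ g. Then there exist a J-sheaf G, a sheaf morphism η : F ⟶ G, and an element x ∈ G(C) such that G(f)(x) ≠ G(g)(x). -/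
open CategoryTheory Limits Opposite

universe u

/-- Let `(C, J)` be a small subcanonical site in which no object is
covered by the empty sieve, `F` a sheaf, and `f, g : D ⟶ C₀` parallel morphisms of
`C` with `f ≠ g`. Then there are a sheaf `G`, a sheaf morphism `η : F ⟶ G` and
`x ∈ G(C₀)` with `G(f)(x) ≠ G(g)(x)`. -/
theorem separates_parallel_morphisms {C : Type u} [SmallCategory C]
    (J : GrothendieckTopology C)
    (hsub : ∀ X : C, Presieve.IsSheaf J (yoneda.obj X))
    (hJ : ∀ X : C, (⊥ : Sieve X) ∉ J X)
    (F : Sheaf J (Type u)) {D C₀ : C} (f g : D ⟶ C₀) (hfg : f ≠ g) :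
    ∃ (G : Sheaf J (Type u)) (η : F ⟶ G) (x : G.val.obj (op C₀)),
      G.val.map f.op x ≠ G.val.map g.op x := by
  classical
  -- The presheaf `P = F.val ⊕ yoneda C₀` (pointwise disjoint union).
  set Y : Cᵒᵖ ⥤ Type u := yoneda.obj C₀ with hY
  let P : Cᵒᵖ ⥤ Type u :=
    { obj := fun X => F.val.obj X ⊕ Y.obj X
      map := fun h => TypeCat.ofHom (Sum.map (F.val.map h) (Y.map h))
      map_id := by
        intro X
        ext a
        cases a <;> simp
      map_comp := by
        intro X X' X'' h h'
        ext a
        cases a <;> simp }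
  -- the two inclusions
  let κ : F.val ⟶ P :=
    { app := fun X => TypeCat.ofHom Sum.inl
      naturality := fun _ _ _ => rfl }
  let ι : Y ⟶ P :=
    { app := fun X => TypeCat.ofHom Sum.inr
      naturality := fun _ _ _ => rfl }
  have hιapp : ∀ X : Cᵒᵖ, Mono (ι.app X) := by
    intro X
    rw [CategoryTheory.mono_iff_injective]
    exact fun a b h => Sum.inr.inj h
  have hιmono : Mono ι := NatTrans.mono_of_mono_app ι
  -- `G` is the sheafification of `P`.
  refine ⟨(presheafToSheaf J (Type u)).obj P, ⟨κ ≫ toSheafify J P⟩,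
    (toSheafify J P).app (op C₀) (Sum.inr (𝟙 C₀)), ?_⟩
  -- the sheafified inclusion is mono (sheafification is left exact)
  have h1 : Mono ((presheafToSheaf J (Type u)).map ι) := inferInstance
  have h2 : Mono (sheafifyMap J ι) :=
    (sheafToPresheaf J (Type u)).map_mono ((presheafToSheaf J (Type u)).map ι)
  have h3 : Mono ((sheafifyMap J ι).app (op D)) :=
    inferInstanceAs (Mono (((evaluation Cᵒᵖ (Type u)).obj (op D)).map (sheafifyMap J ι)))
  have hinj : Function.Injective ((sheafifyMap J ι).app (op D)) :=
    (CategoryTheory.mono_iff_injective _).mp h3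
  -- `toSheafify` on the representable `Y` is an iso, hence injective on sections
  have hYsheaf : Presheaf.IsSheaf J Y := by
    rw [isSheaf_iff_isSheaf_of_type]
    exact hsub C₀
  have hiso : IsIso (toSheafify J Y) := isIso_toSheafify J hYsheaf
  have hYinj : Function.Injective ((toSheafify J Y).app (op D)) := by
    have : IsIso ((toSheafify J Y).app (op D)) := inferInstance
    exact (CategoryTheory.mono_iff_injective _).mp inferInstance
  -- compute the two sides
  have key : ∀ h : D ⟶ C₀,
      (sheafify J P).map h.op ((toSheafify J P).app (op C₀) (Sum.inr (𝟙 C₀)))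
        = (sheafifyMap J ι).app (op D) ((toSheafify J Y).app (op D) h) := by
    intro h
    have hnat := types_congr_hom ((toSheafify J P).naturality h.op) (Sum.inr (𝟙 C₀))
    have hnat2 := types_congr_hom (congrFun (congrArg NatTrans.app (toSheafify_naturality J ι)) (op D)) h
    simp only [types_comp_apply, NatTrans.comp_app] at hnat hnat2
    rw [← hnat]
    show (toSheafify J P).app (op D) (Sum.inr (Y.map h.op (𝟙 C₀))) = _
    rw [show Y.map h.op (𝟙 C₀) = h from Category.comp_id h]
    exact hnat2
  intro hcontra
  apply hfg
  have := key f
  rw [hcontra, key g] at this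
  exact hYinj (hinj this.symm)
end
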